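/- arXiv:1609.01144 — 14 statements merged into one kernel-verified Lean document; each statement's English description precedes it below -/
import Mathlib

section
/- Assume Σ has at least 3 elements. A function f : Σ* → Σ* preserves all restricted congruences (is RCP) if and only if there exist n ∈ ℕ and words w₀, …, wₙ ∈ Σ* such that f(x) = w₀ x w₁ x ⋯ w_{n-1} x wₙ for all x ∈ Σ*. -/
namespace RCPAux

open Classical in
noncomputable def sub {S : Type*} (s : S) (z : List S) : S → List S :=
  fun t => if t = s then z else [t]

open Classical in
noncomputable def ren {S : Type*} (s t : S) : S → S :=
  fun x => if x = s then t else x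

def P {S : Type*} : List (List S) → List S → List S
  | [], _ => []
  | h :: t, x => h ++ (t.map fun w => x ++ w).flatten

variable {S : Type*}

theorem sub_fix {s : S} {z : List S} {y : List S} (h : ∀ t ∈ y, t ≠ s) :
    y.flatMap (sub s z) = y := by
  induction y with
  | nil => rfl
  | cons t y ih =>
      rw [List.flatMap_cons, sub, if_neg (h t List.mem_cons_self), ih (fun u hu => h u (List.mem_cons_of_mem _ hu))]
      rfl

theorem mem_erase_ne {s : S} {x : List S} : ∀ t ∈ x.flatMap (sub s []), t ≠ s := by
  intro t ht
  rw [List.mem_flatMap] at ht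
  obtain ⟨u, _, htu⟩ := ht
  unfold sub at htu
  split at htu
  · simp at htu
  · rw [List.mem_singleton] at htu
    subst htu; assumption

theorem length_erase_le {s : S} (x : List S) :
    (x.flatMap (sub s [])).length ≤ x.length := by
  induction x with
  | nil => simp
  | cons t x ih =>
      rw [List.flatMap_cons, List.length_append, List.length_cons]
      have : (sub s [] t).length ≤ 1 := by unfold sub; split <;> simp
      omega

theorem length_erase_lt {s : S} {x : List S} (h : s ∈ x) :
    (x.flatMap (sub s [])).length < x.length := by
  induction x with
  | nil => simp at h
  | cons t x ih =>
      rw [List.flatMap_cons, List.length_append, List.length_cons]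
      rcases List.mem_cons.mp h with h | h
      · have ht : (sub s [] t).length = 0 := by unfold sub; rw [if_pos h.symm]; rfl
        have := length_erase_le (s := s) x
        omega
      · have h1 : (sub s [] t).length ≤ 1 := by unfold sub; split <;> simp
        have := ih h
        omega

theorem flatMap_sub_single_map (s t : S) (x : List S) :
    x.flatMap (sub s [t]) = x.map (ren s t) := by
  induction x with
  | nil => rfl
  | cons p x ih =>
      rw [List.flatMap_cons, List.map_cons, ih]
      have : sub s [t] p = [ren s t p] := by unfold sub ren; split <;> rfl
      rw [this]; rfl

theorem flatMap_flatten (h : S → List S) (l : List (List S)) :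
    l.flatten.flatMap h = (l.map fun y => y.flatMap h).flatten := by
  induction l with
  | nil => rfl
  | cons y l ih => simp [List.flatMap_append, ih]

theorem P_flatMap (h : S → List S) (L : List (List S)) (x : List S) :
    (P L x).flatMap h = P (L.map fun w => w.flatMap h) (x.flatMap h) := by
  cases L with
  | nil => rfl
  | cons h0 t =>
      show (h0 ++ _).flatMap h = _
      rw [List.flatMap_append, flatMap_flatten, List.map_map]
      show _ = (fun w => w.flatMap h) h0 ++
        (((t.map fun w => w.flatMap h)).map fun w => x.flatMap h ++ w).flatten
      rw [List.map_map]
      congr 1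
      congr 1
      apply List.map_congr_left
      intro w _
      simp [List.flatMap_append]

inductive Matching (a b c : S) : List S → List S → List S → Prop
  | nil : Matching a b c [] [] []
  | cons (p q r : S) {u v w : List S}
      (h : (q = p ∧ r = p) ∨ (p = a ∧ q = b ∧ r = c))
      (hm : Matching a b c u v w) : Matching a b c (p :: u) (q :: v) (r :: w)

theorem build (a b c : S) {u v w : List S} (hm : Matching a b c u v w) :
    ∃ (h : List S) (t : List (List S)),
      u = P (h :: t) [a] ∧ v = P (h :: t) [b] ∧ w = P (h :: t) [c] := by
  induction hm with
  | nil => exact ⟨[], [], by simp [P], by simp [P], by simp [P]⟩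
  | cons p q r hcond hm ih =>
      obtain ⟨h, t, hu, hv, hw⟩ := ih
      rcases hcond with ⟨hq, hr⟩ | ⟨hp, hq, hr⟩
      · exact ⟨p :: h, t, by rw [hu]; rfl, by rw [hq, hv]; rfl, by rw [hr, hw]; rfl⟩
      · exact ⟨[], h :: t, by rw [hp, hu]; rfl, by rw [hq, hv]; rfl, by rw [hr, hw]; rfl⟩

set_option maxRecDepth 8000 in
theorem heads (a b c p q r : S) (hab : a ≠ b) (hac : a ≠ c) (hbc : b ≠ c)
    (e1 : ren a b p = ren a b q) (e2 : ren b a p = ren b a q)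
    (e3 : ren a c p = ren a c r) (e4 : ren c a p = ren c a r)
    (e5 : ren b c q = ren b c r) (e6 : ren c b q = ren c b r) :
    (q = p ∧ r = p) ∨ (p = a ∧ q = b ∧ r = c) := by
  unfold ren at e1 e2 e3 e4 e5 e6
  split_ifs at e1 e2 e3 e4 e5 e6 <;> subst_vars <;> simp_all

theorem matching_of (a b c : S) (hab : a ≠ b) (hac : a ≠ c) (hbc : b ≠ c) :
    ∀ u v w : List S,
      u.map (ren a b) = v.map (ren a b) → u.map (ren b a) = v.map (ren b a) →
      u.map (ren a c) = w.map (ren a c) → u.map (ren c a) = w.map (ren c a) →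
      v.map (ren b c) = w.map (ren b c) → v.map (ren c b) = w.map (ren c b) →
      Matching a b c u v w := by
  intro u
  induction u with
  | nil =>
      intro v w e1 _ e3 _ _ _
      have hv : v = [] := List.map_eq_nil_iff.mp e1.symm
      have hw : w = [] := List.map_eq_nil_iff.mp e3.symm
      subst hv; subst hw; exact Matching.nil
  | cons p u' ih =>
      intro v w e1 e2 e3 e4 e5 e6
      cases v with
      | nil => simp at e1
      | cons q v' =>
          cases w with
          | nil => simp at e3
          | cons r w' =>
              simp only [List.map_cons, List.cons.injEq] at e1 e2 e3 e4 e5 e6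
              exact Matching.cons p q r
                (heads a b c p q r hab hac hbc e1.1 e2.1 e3.1 e4.1 e5.1 e6.1)
                (ih v' w' e1.2 e2.2 e3.2 e4.2 e5.2 e6.2)

theorem inj3 (a b c : S) (hab : a ≠ b) (hac : a ≠ c) (hbc : b ≠ c)
    (h1 h2 h3 : S → List S)
    (H1 : ∀ t, t ≠ a → h1 t = [t]) (H2 : ∀ t, t ≠ b → h2 t = [t])
    (H3 : ∀ t, t ≠ c → h3 t = [t]) :
    ∀ u v : List S, u.flatMap h1 = v.flatMap h1 → u.flatMap h2 = v.flatMap h2 →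
      u.flatMap h3 = v.flatMap h3 → u = v := by
  intro u
  induction u with
  | nil =>
      intro v e1 e2 e3
      cases v with
      | nil => rfl
      | cons q v' =>
          exfalso
          by_cases hq : q = a
          · rw [List.flatMap_cons, H2 q (by rw [hq]; exact hab)] at e2
            simp at e2
          · rw [List.flatMap_cons, H1 q hq] at e1
            simp at e1
  | cons p u' ih =>
      intro v e1 e2 e3
      cases v with
      | nil =>
          exfalso
          by_cases hp : p = a
          · rw [List.flatMap_cons, H2 p (by rw [hp]; exact hab)] at e2
            simp at e2
          · rw [List.flatMap_cons, H1 p hp] at e1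
            simp at e1
      | cons q v' =>
          by_cases hpq : p = q
          · subst hpq
            rw [List.flatMap_cons, List.flatMap_cons] at e1 e2 e3
            have t1 := List.append_cancel_left e1
            have t2 := List.append_cancel_left e2
            have t3 := List.append_cancel_left e3
            rw [ih v' t1 t2 t3]
          · exfalso
            have key : ∀ (h : S → List S) (e : S), (∀ t, t ≠ e → h t = [t]) →
                p ≠ e → q ≠ e → (p :: u').flatMap h = (q :: v').flatMap h → False := by
              intro h e He hp hq E
              rw [List.flatMap_cons, List.flatMap_cons, He p hp, He q hq] at E
              simp only [List.singleton_append] at E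
              exact hpq (List.cons.injEq .. ▸ E).1
            by_cases hpa : p = a
            · have hqa : q ≠ a := fun h => hpq (hpa.trans h.symm)
              by_cases hqb : q = b
              · exact key h3 c H3 (hpa ▸ hac) (hqb ▸ hbc) e3
              · exact key h2 b H2 (hpa ▸ hab) hqb e2
            · by_cases hqa : q = a
              · by_cases hpb : p = b
                · exact key h3 c H3 (hpb ▸ hbc) (hqa ▸ hac) e3
                · exact key h2 b H2 hpb (hqa ▸ hab) e2
              · exact key h1 a H1 hpa hqa e1

theorem range_getD (x : List S) (t : List (List S)) :
    (List.range t.length).map (fun i => x ++ t.getD i []) = t.map fun w => x ++ w := by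
  induction t with
  | nil => simp
  | cons h0 t ih =>
      rw [List.length_cons, List.range_succ_eq_map, List.map_cons, List.map_map]
      simp only [Function.comp_def, List.getD_cons_zero, List.getD_cons_succ]
      rw [List.map_cons, ih]

end RCPAux

/-- A congruence on the free monoid `List S`: an equivalence relation compatible
with concatenation. -/
def IsCong {S : Type*} (r : List S → List S → Prop) : Prop :=
  Equivalence r ∧ ∀ x y u v : List S, r x y → r u v → r (x ++ u) (y ++ v)

/-- A monoid homomorphism from the free monoid `List S` to itself. -/
def IsHom {S : Type*} (φ : List S → List S) : Prop :=
  φ [] = [] ∧ ∀ x y : List S, φ (x ++ y) = φ x ++ φ y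

/-- `f` is congruence preserving. -/
def IsCP {S : Type*} (f : List S → List S) : Prop :=
  ∀ r : List S → List S → Prop, IsCong r → ∀ x y : List S, r x y → r (f x) (f y)

/-- `f` preserves all restricted congruences (kernels of endomorphisms of the free monoid). -/
def IsRCP {S : Type*} (f : List S → List S) : Prop :=
  ∀ φ : List S → List S, IsHom φ → ∀ x y : List S, φ x = φ y → φ (f x) = φ (f y)

/-- `f x = w₀ x w₁ x ⋯ x wₙ` for fixed words `w₀, …, wₙ`. -/
def PolyForm {S : Type*} (f : List S → List S) : Prop :=
  ∃ (n : ℕ) (w : ℕ → List S), ∀ x : List S,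
    f x = w 0 ++ List.flatten ((List.range n).map fun i => x ++ w (i + 1))

theorem poly_isRCP {S : Type*} {f : List S → List S} (h : PolyForm f) : IsRCP f := by
  obtain ⟨n, w, hf⟩ := h
  intro φ hφ x y hxy
  obtain ⟨hφ0, hφ2⟩ := hφ
  have flat : ∀ l : List (List S), φ l.flatten = (l.map φ).flatten := by
    intro l
    induction l with
    | nil => exact hφ0
    | cons z l ih => rw [List.flatten_cons, hφ2, ih, List.map_cons, List.flatten_cons]
  have key : ∀ z : List S,
      φ (w 0 ++ ((List.range n).map fun i => z ++ w (i + 1)).flatten)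
        = φ (w 0) ++ ((List.range n).map fun i => φ z ++ φ (w (i + 1))).flatten := by
    intro z
    rw [hφ2, flat, List.map_map]
    congr 2
    apply List.map_congr_left
    intro i _
    exact hφ2 z (w (i + 1))
  rw [hf x, hf y, key x, key y, hxy]

/-- If `S` has at least 3 elements, `f : S* → S*` preserves all restricted congruences iff
it is of the form `x ↦ w₀ x w₁ x ⋯ x wₙ`. -/
theorem stmt_2 {S : Type*} (a b c : S) (hab : a ≠ b) (hac : a ≠ c) (hbc : b ≠ c)
    (f : List S → List S) : IsRCP f ↔ PolyForm f := by
  constructor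
  · intro hR
    have R : ∀ (h : S → List S) (x y : List S), x.flatMap h = y.flatMap h →
        (f x).flatMap h = (f y).flatMap h := by
      intro h x y hxy
      exact hR (fun l => l.flatMap h) ⟨rfl, fun u v => List.flatMap_append⟩ x y hxy
    have ren_rel : ∀ s t : S, s ≠ t →
        (f [s]).map (RCPAux.ren s t) = (f [t]).map (RCPAux.ren s t) := by
      intro s t hst
      have h1 : ([s] : List S).flatMap (RCPAux.sub s [t])
          = ([t] : List S).flatMap (RCPAux.sub s [t]) := by
        show RCPAux.sub s [t] s ++ [] = RCPAux.sub s [t] t ++ []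
        unfold RCPAux.sub
        rw [if_pos rfl]
        split <;> rfl
      have h2 := R (RCPAux.sub s [t]) [s] [t] h1
      rwa [RCPAux.flatMap_sub_single_map, RCPAux.flatMap_sub_single_map] at h2
    have M := RCPAux.matching_of a b c hab hac hbc (f [a]) (f [b]) (f [c])
      (ren_rel a b hab) ((ren_rel b a hab.symm).symm)
      (ren_rel a c hac) ((ren_rel c a hac.symm).symm)
      (ren_rel b c hbc) ((ren_rel c b hbc.symm).symm)
    obtain ⟨h0, t0, hua, hub, huc⟩ := RCPAux.build a b c M
    have main : ∀ n (x : List S), x.length = n → f x = RCPAux.P (h0 :: t0) x := by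
      intro n
      induction n using Nat.strong_induction_on with
      | _ n ih =>
        intro x hxn
        have branch : ∀ s : S, f [s] = RCPAux.P (h0 :: t0) [s] →
            ∃ h : S → List S, (∀ t, t ≠ s → h t = [t]) ∧
              (f x).flatMap h = (RCPAux.P (h0 :: t0) x).flatMap h := by
          intro s hbase
          by_cases hsx : s ∈ x
          · refine ⟨RCPAux.sub s [], fun t ht => if_neg ht, ?_⟩
            have hav := RCPAux.mem_erase_ne (s := s) (x := x)
            have h2 := R (RCPAux.sub s []) x (x.flatMap (RCPAux.sub s []))
              (RCPAux.sub_fix hav).symm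
            have hlt : (x.flatMap (RCPAux.sub s [])).length < n := by
              rw [← hxn]; exact RCPAux.length_erase_lt hsx
            have h3 := ih _ hlt (x.flatMap (RCPAux.sub s [])) rfl
            rw [h2, h3, RCPAux.P_flatMap, RCPAux.P_flatMap, RCPAux.sub_fix hav]
          · refine ⟨RCPAux.sub s x, fun t ht => if_neg ht, ?_⟩
            have hxfix : x.flatMap (RCPAux.sub s x) = x :=
              RCPAux.sub_fix (fun t ht hts => hsx (hts ▸ ht))
            have h1 : ([s] : List S).flatMap (RCPAux.sub s x)
                = x.flatMap (RCPAux.sub s x) := by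
              rw [hxfix]
              show RCPAux.sub s x s ++ [] = x
              unfold RCPAux.sub
              rw [if_pos rfl, List.append_nil]
            have h2 := R (RCPAux.sub s x) [s] x h1
            rw [← h2, hbase, RCPAux.P_flatMap, RCPAux.P_flatMap, hxfix,
              show ([s] : List S).flatMap (RCPAux.sub s x) = x from h1.trans hxfix]
        obtain ⟨Fa, Ha, Ea⟩ := branch a hua
        obtain ⟨Fb, Hb, Eb⟩ := branch b hub
        obtain ⟨Fc, Hc, Ec⟩ := branch c huc
        exact RCPAux.inj3 a b c hab hac hbc Fa Fb Fc Ha Hb Hc _ _ Ea Eb Ec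
    refine ⟨t0.length, fun i => (h0 :: t0).getD i [], fun x => ?_⟩
    rw [main x.length x rfl]
    show h0 ++ (t0.map fun w => x ++ w).flatten =
      (h0 :: t0).getD 0 [] ++
        ((List.range t0.length).map fun i => x ++ (h0 :: t0).getD (i + 1) []).flatten
    simp only [List.getD_cons_zero, List.getD_cons_succ, RCPAux.range_getD]
  · exact poly_isRCP
end

section
/- Assume Σ has at least 3 elements. A function f : Σ* → Σ* is congruence preserving if and only if it preserves all restricted congruences (i.e., f is CP if and only if f is RCP). -/
namespace CPAux

variable {S : Type*}

/-! ### The endomorphism induced by a letter assignment -/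

/-- The monoid endomorphism of `List S` induced by a letter-assignment `g`. -/
def bar (g : S → List S) (x : List S) : List S := (x.map g).flatten

theorem bar_nil (g : S → List S) : bar g [] = [] := rfl

theorem bar_cons (g : S → List S) (s : S) (x : List S) :
    bar g (s :: x) = g s ++ bar g x := by simp [bar]

theorem bar_append (g : S → List S) (x y : List S) :
    bar g (x ++ y) = bar g x ++ bar g y := by simp [bar]

theorem bar_single (g : S → List S) (s : S) : bar g [s] = g s := by simp [bar]

theorem bar_hom (g : S → List S) : IsHom (bar g) := ⟨rfl, bar_append g⟩

theorem bar_fix (g : S → List S) (y : List S) (h : ∀ r ∈ y, g r = [r]) :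
    bar g y = y := by
  induction y with
  | nil => rfl
  | cons s t ih =>
    rw [bar_cons, h s (by simp), ih (fun r hr => h r (by simp [hr]))]
    rfl

theorem bar_all_single (g : S → List S) (y : List S) (t : S)
    (h : ∀ r ∈ y, g r = [t]) : bar g y = List.replicate y.length t := by
  induction y with
  | nil => rfl
  | cons s u ih =>
    rw [bar_cons, h s (by simp), ih (fun r hr => h r (by simp [hr]))]
    simp [List.replicate_succ]

theorem bar_map_singleton (σ : S → S) (x : List S) :
    bar (fun r => [σ r]) x = x.map σ := by
  induction x with
  | nil => rfl
  | cons s u ih => rw [bar_cons, ih]; rfl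

theorem mem_bar (g : S → List S) (u v : S) (h : ∀ r, g r = [u] ∨ g r = [v])
    (x : List S) : ∀ r ∈ bar g x, r = u ∨ r = v := by
  induction x with
  | nil => simp [bar_nil]
  | cons s t ih =>
    intro r hr
    rw [bar_cons, List.mem_append] at hr
    rcases hr with hr | hr
    · rcases h s with hs | hs <;> rw [hs] at hr <;> simp at hr <;> simp [hr]
    · exact ih r hr

theorem head?_replicate (m : ℕ) (hm : m ≠ 0) (u : S) :
    (List.replicate m u).head? = some u := by
  cases m with
  | zero => exact absurd rfl hm
  | succ k => simp [List.replicate_succ]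

/-! ### Reconstruction from a list of blocks -/

/-- `recon [w₀, w₁, …, wₙ] x = w₀ ++ x ++ w₁ ++ ⋯ ++ x ++ wₙ`. -/
def recon : List (List S) → List S → List S
  | [], _ => []
  | h :: t, x => h ++ (t.map fun w => x ++ w).flatten

theorem recon_cons (h : List S) (t : List (List S)) (x : List S) :
    recon (h :: t) x = h ++ (t.map fun w => x ++ w).flatten := rfl

theorem bar_flatten (g : S → List S) (l : List (List S)) :
    bar g l.flatten = (l.map (bar g)).flatten := by
  induction l with
  | nil => rfl
  | cons m t ih => simp [bar_append, ih]

theorem bar_recon (g : S → List S) (L : List (List S)) (x : List S) :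
    bar g (recon L x) = recon (L.map (bar g)) (bar g x) := by
  cases L with
  | nil => rfl
  | cons h t =>
    rw [recon_cons, bar_append, bar_flatten, List.map_cons, recon_cons]
    congr 1
    rw [List.map_map, List.map_map]
    exact congrArg List.flatten (List.map_congr_left (fun w _ => by
      simp only [Function.comp_apply]
      exact bar_append g x w))

theorem recon_head_cons (M : List (List S)) (hM : M ≠ []) (x : S) (u : List S) :
    recon ((x :: M.headD []) :: M.tail) u = x :: recon M u := by
  obtain ⟨m, t, rfl⟩ := List.exists_cons_of_ne_nil hM
  simp [recon_cons]

theorem recon_nil_cons (M : List (List S)) (hM : M ≠ []) (u : List S) :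
    recon ([] :: M) u = u ++ recon M u := by
  obtain ⟨m, t, rfl⟩ := List.exists_cons_of_ne_nil hM
  simp [recon_cons]

open Classical in
/-- Splits `A` into the blocks between the positions where `A` and `B` differ. -/
noncomputable def blocks : List S → List S → List (List S)
  | x :: xs, y :: ys =>
      if x = y then (x :: (blocks xs ys).headD []) :: (blocks xs ys).tail
      else [] :: blocks xs ys
  | _, _ => [[]]

theorem blocks_ne_nil (A B : List S) : blocks A B ≠ [] := by
  cases A with
  | nil => simp [blocks]
  | cons x xs =>
    cases B with
    | nil => simp [blocks]
    | cons y ys =>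
      rw [blocks]
      split <;> simp

theorem recon_cong {r : List S → List S → Prop} (hre : Equivalence r)
    (hrc : ∀ x y u v : List S, r x y → r u v → r (x ++ u) (y ++ v))
    (L : List (List S)) {x y : List S} (hxy : r x y) :
    r (recon L x) (recon L y) := by
  cases L with
  | nil => exact hre.refl []
  | cons h t =>
    rw [recon_cons, recon_cons]
    refine hrc h h _ _ (hre.refl h) ?_
    induction t with
    | nil => exact hre.refl []
    | cons m t' ih =>
      simp only [List.map_cons, List.flatten_cons]
      exact hrc _ _ _ _ (hrc x y m m hxy (hre.refl m)) ih

/-- Reconstruction: if `A`, `B`, `C` have a common skeleton with letters `a`, `b`, `c`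
at the difference positions, they are all obtained from `blocks A B`. -/
theorem recon_blocks (a b c : S) (hab : a ≠ b) :
    ∀ A B C : List S,
      (∀ i : ℕ, (B[i]? = A[i]? ∧ C[i]? = A[i]?) ∨
        (A[i]? = some a ∧ B[i]? = some b ∧ C[i]? = some c)) →
      A = recon (blocks A B) [a] ∧ B = recon (blocks A B) [b] ∧
        C = recon (blocks A B) [c] := by
  intro A
  induction A with
  | nil =>
    intro B C H
    have hB : B = [] := by
      cases B with
      | nil => rfl
      | cons y ys =>
        exfalso
        rcases H 0 with ⟨h1, _⟩ | ⟨h1, _⟩ <;> simp at h1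
    have hC : C = [] := by
      cases C with
      | nil => rfl
      | cons z zs =>
        exfalso
        rcases H 0 with ⟨_, h1⟩ | ⟨h1, _⟩ <;> simp at h1
    subst hB; subst hC
    refine ⟨?_, ?_, ?_⟩ <;> simp [blocks, recon_cons]
  | cons x xs IH =>
    intro B C H
    obtain ⟨y, ys, rfl⟩ : ∃ y ys, B = y :: ys := by
      cases B with
      | nil =>
        exfalso
        rcases H 0 with ⟨h1, _⟩ | ⟨_, h1, _⟩ <;> simp at h1
      | cons y ys => exact ⟨y, ys, rfl⟩
    obtain ⟨z, zs, rfl⟩ : ∃ z zs, C = z :: zs := by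
      cases C with
      | nil =>
        exfalso
        rcases H 0 with ⟨_, h1⟩ | ⟨_, _, h1⟩ <;> simp at h1
      | cons z zs => exact ⟨z, zs, rfl⟩
    have H0 := H 0
    simp only [List.getElem?_cons_zero, Option.some.injEq] at H0
    have H' : ∀ i : ℕ, (ys[i]? = xs[i]? ∧ zs[i]? = xs[i]?) ∨
        (xs[i]? = some a ∧ ys[i]? = some b ∧ zs[i]? = some c) := by
      intro i
      have := H (i + 1)
      simpa using this
    obtain ⟨hA', hB', hC'⟩ := IH ys zs H'
    classical
    by_cases hxy : x = y
    · have hz : z = x := by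
        rcases H0 with ⟨_, h2⟩ | ⟨h1, h2, _⟩
        · exact h2
        · exfalso; rw [h1, h2] at hxy; exact hab hxy
      have hbl : blocks (x :: xs) (y :: ys) =
          (x :: (blocks xs ys).headD []) :: (blocks xs ys).tail := by
        rw [blocks, if_pos hxy]
      rw [hbl]
      rw [recon_head_cons _ (blocks_ne_nil xs ys), recon_head_cons _ (blocks_ne_nil xs ys),
        recon_head_cons _ (blocks_ne_nil xs ys)]
      exact ⟨by rw [← hA'], by rw [← hB', hxy], by rw [← hC', hz]⟩
    · obtain ⟨h1, h2, h3⟩ : x = a ∧ y = b ∧ z = c := by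
        rcases H0 with ⟨h2, _⟩ | h
        · exact absurd h2.symm hxy
        · exact h
      have hbl : blocks (x :: xs) (y :: ys) = [] :: blocks xs ys := by
        rw [blocks, if_neg hxy]
      rw [hbl]
      rw [recon_nil_cons _ (blocks_ne_nil xs ys), recon_nil_cons _ (blocks_ne_nil xs ys),
        recon_nil_cons _ (blocks_ne_nil xs ys)]
      exact ⟨by rw [← hA', h1]; rfl, by rw [← hB', h2]; rfl, by rw [← hC', h3]; rfl⟩

/-! ### The master separation lemma -/

/-- Master separation lemma: if every pair of distinct letters admits an endomorphism
equalizing `F` and `Q` while separating the heads of the two letters' images,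
then `F = Q`. -/
theorem ML (a b : S) (hab : a ≠ b) :
    ∀ F Q : List S,
      (∀ s t : S, s ≠ t → ∃ g : S → List S, bar g F = bar g Q ∧
        ∃ p q : S, (g s).head? = some p ∧ (g t).head? = some q ∧ p ≠ q) →
      F = Q := by
  intro F
  induction F with
  | nil =>
    intro Q h
    cases Q with
    | nil => rfl
    | cons t v =>
      exfalso
      classical
      have hst : (if t = a then b else a) ≠ t := by
        split
        · rename_i h'; rw [h']; exact hab.symm
        · rename_i h'; exact fun hc => h' hc.symm
      obtain ⟨g, hFQ, p, q, hp, hq, hpq⟩ := h _ t hst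
      rw [bar_cons] at hFQ
      cases hgt : g t with
      | nil => rw [hgt] at hq; simp at hq
      | cons q' l => rw [hgt] at hFQ; simp [bar] at hFQ
  | cons s u IH =>
    intro Q h
    cases Q with
    | nil =>
      exfalso
      classical
      have hst : s ≠ (if s = a then b else a) := by
        split
        · rename_i h'; rw [h']; exact hab
        · rename_i h'; exact h'
      obtain ⟨g, hFQ, p, q, hp, hq, hpq⟩ := h s _ hst
      rw [bar_cons] at hFQ
      cases hgs : g s with
      | nil => rw [hgs] at hp; simp at hp
      | cons p' l => rw [hgs] at hFQ; simp [bar] at hFQ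
    | cons t v =>
      classical
      by_cases hst : s = t
      · subst hst
        have hu : u = v := by
          apply IH
          intro s' t' hst'
          obtain ⟨g, hFQ, p, q, hp, hq, hpq⟩ := h s' t' hst'
          rw [bar_cons, bar_cons] at hFQ
          exact ⟨g, List.append_cancel_left hFQ, p, q, hp, hq, hpq⟩
        rw [hu]
      · exfalso
        obtain ⟨g, hFQ, p, q, hp, hq, hpq⟩ := h s t hst
        rw [bar_cons, bar_cons] at hFQ
        cases hgs : g s with
        | nil => rw [hgs] at hp; simp at hp
        | cons p' ls =>
          cases hgt : g t with
          | nil => rw [hgt] at hq; simp at hq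
          | cons q' lt =>
            rw [hgs] at hp hFQ
            rw [hgt] at hq hFQ
            simp only [List.head?_cons, Option.some.injEq] at hp hq
            simp only [List.cons_append, List.cons.injEq] at hFQ
            exact hpq (hp ▸ hq ▸ hFQ.1)

/-! ### Transfer along RCP -/

theorem transfer {f : List S → List S} (hf : IsRCP f) (L : List (List S))
    (x yA : List S) (anchor : f yA = recon L yA) (g : S → List S)
    (hpair : bar g x = bar g yA) : bar g (f x) = bar g (recon L x) := by
  have h1 := hf (bar g) (bar_hom g) x yA hpair
  rw [h1, anchor, bar_recon, bar_recon, hpair]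

/-! ### Letter-level case analysis for the base skeleton -/

open Classical in
/-- The merge map sending `p` to `q` and fixing all other letters. -/
noncomputable def mrg (p q : S) : S → S := fun r => if r = p then q else r

open Classical in
theorem merge_eq {u v p q : S} (h : mrg p q u = mrg p q v) :
    u = v ∨ (u = q ∧ v = p) ∨ (u = p ∧ v = q) := by
  unfold mrg at h
  by_cases h1 : u = p <;> by_cases h2 : v = p <;> simp [h1, h2] at h <;> simp_all

theorem letter_cases (a b c : S) (hab : a ≠ b) (hac : a ≠ c) (hbc : b ≠ c)
    (x y z : S)
    (e1 : mrg b a x = mrg b a y) (e3 : mrg c a x = mrg c a z)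
    (e5 : mrg c b y = mrg c b z) :
    (y = x ∧ z = x) ∨ (x = a ∧ y = b ∧ z = c) := by
  rcases merge_eq e1 with h1 | ⟨h1a, h1b⟩ | ⟨h1a, h1b⟩ <;>
    rcases merge_eq e3 with h2 | ⟨h2a, h2b⟩ | ⟨h2a, h2b⟩ <;>
      rcases merge_eq e5 with h3 | ⟨h3a, h3b⟩ | ⟨h3a, h3b⟩ <;>
        simp_all

theorem rcp_merge {f : List S → List S} (hf : IsRCP f) (σ : S → S)
    (x y : List S) (hxy : x.map σ = y.map σ) :
    (f x).map σ = (f y).map σ := by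
  have h := hf (bar (fun r => [σ r])) (bar_hom _) x y
    (by rw [bar_map_singleton, bar_map_singleton, hxy])
  rwa [bar_map_singleton, bar_map_singleton] at h

theorem map_getElem? {A B : List S} (σ : S → S) (e : A.map σ = B.map σ) (i : ℕ) :
    A[i]?.map σ = B[i]?.map σ := by
  rw [← List.getElem?_map, ← List.getElem?_map, e]

end CPAux

namespace CPAux

variable {S : Type*}

/-- Level ε : the value at the empty word. -/
theorem level_eps (a b c : S) (hab : a ≠ b) (hac : a ≠ c) (hbc : b ≠ c)
    {f : List S → List S} (hf : IsRCP f) (L : List (List S))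
    (anc_a : f [a] = recon L [a]) (anc_b : f [b] = recon L [b])
    (anc_c : f [c] = recon L [c]) : f [] = recon L [] := by
  classical
  apply ML a b hab
  intro s t hst
  obtain ⟨r, hrs, hrt, hanc⟩ : ∃ r, r ≠ s ∧ r ≠ t ∧ f [r] = recon L [r] := by
    by_cases hsa : s = a
    · by_cases htb : t = b
      · exact ⟨c, by rw [hsa]; exact hac.symm, by rw [htb]; exact hbc.symm, anc_c⟩
      · exact ⟨b, by rw [hsa]; exact hab.symm, fun h => htb h.symm, anc_b⟩
    · by_cases hta : t = a
      · by_cases hsb : s = b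
        · exact ⟨c, by rw [hsb]; exact hbc.symm, by rw [hta]; exact hac.symm, anc_c⟩
        · exact ⟨b, fun h => hsb h.symm, by rw [hta]; exact hab.symm, anc_b⟩
      · exact ⟨a, fun h => hsa h.symm, fun h => hta h.symm, anc_a⟩
  refine ⟨fun u => if u = r then [] else [u], ?_, s, t, ?_, ?_, hst⟩
  · refine transfer hf L [] [r] hanc _ ?_
    rw [bar_nil, bar_single, if_pos rfl]
  · simp only [if_neg hrs.symm]; rfl
  · simp only [if_neg hrt.symm]; rfl

/-- Level 1 : powers of a single letter. -/
theorem level_pow (s1 s2 s3 : S) (h12 : s1 ≠ s2) (h13 : s1 ≠ s3) (h23 : s2 ≠ s3)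
    {f : List S → List S} (hf : IsRCP f) (L : List (List S))
    (anc2 : f [s2] = recon L [s2]) (anc3 : f [s3] = recon L [s3])
    (m : ℕ) (hm : m ≠ 0) :
    f (List.replicate m s1) = recon L (List.replicate m s1) := by
  classical
  apply ML s1 s2 h12
  intro s t hst
  by_cases hp : (s = s1 ∧ t = s3) ∨ (s = s3 ∧ t = s1)
  · refine ⟨fun r => if r = s2 then List.replicate m s1 else [r], ?_, s, t, ?_, ?_, hst⟩
    · refine transfer hf L _ [s2] anc2 _ ?_
      rw [bar_single, if_pos rfl]
      exact bar_fix _ _ (fun r hr => by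
        rw [List.eq_of_mem_replicate hr, if_neg h12])
    · have hs2 : s ≠ s2 := by
        rcases hp with ⟨h, _⟩ | ⟨h, _⟩
        · rw [h]; exact h12
        · rw [h]; exact h23.symm
      simp only [if_neg hs2]; rfl
    · have ht2 : t ≠ s2 := by
        rcases hp with ⟨_, h⟩ | ⟨_, h⟩
        · rw [h]; exact h23.symm
        · rw [h]; exact h12
      simp only [if_neg ht2]; rfl
  · refine ⟨fun r => if r = s3 then List.replicate m s1 else [r], ?_, ?_⟩
    · refine transfer hf L _ [s3] anc3 _ ?_
      rw [bar_single, if_pos rfl]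
      exact bar_fix _ _ (fun r hr => by
        rw [List.eq_of_mem_replicate hr, if_neg h13])
    · by_cases hs3 : s = s3 <;> by_cases ht3 : t = s3
      · exact absurd (hs3.trans ht3.symm) hst
      · refine ⟨s1, t, ?_, ?_, ?_⟩
        · simp only [if_pos hs3]; exact head?_replicate m hm s1
        · simp only [if_neg ht3]; rfl
        · intro hc; exact hp (Or.inr ⟨hs3, hc.symm⟩)
      · refine ⟨s, s1, ?_, ?_, ?_⟩
        · simp only [if_neg hs3]; rfl
        · simp only [if_pos ht3]; exact head?_replicate m hm s1
        · intro hc; exact hp (Or.inl ⟨hc, ht3⟩)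
      · refine ⟨s, t, ?_, ?_, hst⟩
        · simp only [if_neg hs3]; rfl
        · simp only [if_neg ht3]; rfl

/-- Level 2 : words over the two letters `a`, `b`. -/
theorem level_two (a b c : S) (hab : a ≠ b) (hac : a ≠ c) (hbc : b ≠ c)
    {f : List S → List S} (hf : IsRCP f) (L : List (List S))
    (anc_eps : f [] = recon L []) (anc_c : f [c] = recon L [c])
    (anc_pow : ∀ m : ℕ, m ≠ 0 →
      f (List.replicate m a) = recon L (List.replicate m a))
    (y : List S) (hy : ∀ r ∈ y, r = a ∨ r = b) : f y = recon L y := by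
  classical
  rcases eq_or_ne y [] with rfl | hne
  · exact anc_eps
  have hylen : y.length ≠ 0 := fun h => hne (List.length_eq_zero_iff.mp h)
  apply ML a b hab
  intro s t hst
  by_cases hp : (s = a ∧ t = b) ∨ (s = b ∧ t = a)
  · refine ⟨fun r => if r = c then y else [r], ?_, s, t, ?_, ?_, hst⟩
    · refine transfer hf L _ [c] anc_c _ ?_
      rw [bar_single, if_pos rfl]
      refine bar_fix _ _ (fun r hr => ?_)
      rcases hy r hr with h | h <;> rw [h]
      · rw [if_neg hac]
      · rw [if_neg hbc]
    · have hsc : s ≠ c := by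
        rcases hp with ⟨h, _⟩ | ⟨h, _⟩
        · rw [h]; exact hac
        · rw [h]; exact hbc
      simp only [if_neg hsc]; rfl
    · have htc : t ≠ c := by
        rcases hp with ⟨_, h⟩ | ⟨_, h⟩
        · rw [h]; exact hbc
        · rw [h]; exact hac
      simp only [if_neg htc]; rfl
  · -- one of s, t is outside {a, b}
    obtain ⟨u, hu, hua, hub⟩ :
        ∃ u, (u = s ∨ u = t) ∧ u ≠ a ∧ u ≠ b := by
      by_cases hsab : s = a ∨ s = b
      · refine ⟨t, Or.inr rfl, ?_, ?_⟩
        · intro hta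
          rcases hsab with h | h
          · exact hst (by rw [h, hta])
          · exact hp (Or.inr ⟨h, hta⟩)
        · intro htb
          rcases hsab with h | h
          · exact hp (Or.inl ⟨h, htb⟩)
          · exact hst (by rw [h, htb])
      · push_neg at hsab
        exact ⟨s, Or.inl rfl, hsab.1, hsab.2⟩
    refine ⟨fun r => if r = u then [b] else [a], ?_, ?_⟩
    · refine transfer hf L _ (List.replicate y.length a)
        (anc_pow y.length hylen) _ ?_
      have e1 : bar (fun r => if r = u then [b] else [a]) y
          = List.replicate y.length a := by
        refine bar_all_single _ _ _ (fun r hr => ?_)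
        rcases hy r hr with h | h <;> rw [h]
        · rw [if_neg (Ne.symm hua)]
        · rw [if_neg (Ne.symm hub)]
      have e2 : bar (fun r => if r = u then [b] else [a]) (List.replicate y.length a)
          = List.replicate (List.replicate y.length a).length a := by
        refine bar_all_single _ _ _ (fun r hr => ?_)
        rw [List.eq_of_mem_replicate hr, if_neg (Ne.symm hua)]
      rw [e1, e2, List.length_replicate]
    · rcases hu with rfl | rfl
      · refine ⟨b, a, ?_, ?_, hab.symm⟩
        · simp only [if_pos rfl]; rfl
        · simp only [if_neg hst.symm]; rfl
      · refine ⟨a, b, ?_, ?_, hab⟩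
        · simp only [if_neg hst]; rfl
        · simp only [if_pos rfl]; rfl

end CPAux

namespace CPAux

variable {S : Type*}

theorem choose_g (a b : S) (hab : a ≠ b) (s t : S) (hst : s ≠ t) :
    ∃ g : S → List S, g a = [a] ∧ g b = [b] ∧ (∀ r, g r = [a] ∨ g r = [b]) ∧
      g s ≠ g t := by
  classical
  have hne : ([a] : List S) ≠ [b] := by simp [hab]
  by_cases hsa : s = a
  · subst hsa
    refine ⟨fun r => if r = s then [s] else [b], by simp, ?_, ?_, ?_⟩
    · simp only [if_neg (Ne.symm hab)]
    · intro r; by_cases h : r = s <;> simp [h]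
    · simp only [if_pos rfl, if_neg (Ne.symm hst)]; exact hne
  · by_cases hsb : s = b
    · subst hsb
      refine ⟨fun r => if r = s then [s] else [a], ?_, by simp, ?_, ?_⟩
      · simp only [if_neg hab]
      · intro r; by_cases h : r = s <;> simp [h]
      · simp only [if_pos rfl, if_neg (Ne.symm hst)]; exact hne.symm
    · by_cases hta : t = a
      · subst hta
        refine ⟨fun r => if r = t then [t] else [b], by simp, ?_, ?_, ?_⟩
        · simp only [if_neg (Ne.symm hab)]
        · intro r; by_cases h : r = t <;> simp [h]
        · simp only [if_pos rfl, if_neg hst]; exact hne.symm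
      · by_cases htb : t = b
        · subst htb
          refine ⟨fun r => if r = t then [t] else [a], ?_, by simp, ?_, ?_⟩
          · simp only [if_neg hab]
          · intro r; by_cases h : r = t <;> simp [h]
          · simp only [if_pos rfl, if_neg hst]; exact hne
        · refine ⟨fun r => if r = b ∨ r = s then [b] else [a],
            by simp [hab, Ne.symm hsa], by simp,
            fun r => by by_cases h : r = b ∨ r = s <;> simp [h], ?_⟩
          simp [hsb, htb, Ne.symm hst, Ne.symm hab]

theorem rcp_recon (a b c : S) (hab : a ≠ b) (hac : a ≠ c) (hbc : b ≠ c)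
    {f : List S → List S} (hf : IsRCP f) :
    ∀ x : List S, f x = recon (blocks (f [a]) (f [b])) x := by
  classical
  have e1 : (f [a]).map (mrg b a) = (f [b]).map (mrg b a) :=
    rcp_merge hf (mrg b a) [a] [b] (by simp [mrg, hab])
  have e3 : (f [a]).map (mrg c a) = (f [c]).map (mrg c a) :=
    rcp_merge hf (mrg c a) [a] [c] (by simp [mrg, hac])
  have e5 : (f [b]).map (mrg c b) = (f [c]).map (mrg c b) :=
    rcp_merge hf (mrg c b) [b] [c] (by simp [mrg, hbc])
  have Hpt : ∀ i : ℕ, ((f [b])[i]? = (f [a])[i]? ∧ (f [c])[i]? = (f [a])[i]?) ∨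
      ((f [a])[i]? = some a ∧ (f [b])[i]? = some b ∧ (f [c])[i]? = some c) := by
    intro i
    have p1 := map_getElem? (mrg b a) e1 i
    have p3 := map_getElem? (mrg c a) e3 i
    have p5 := map_getElem? (mrg c b) e5 i
    cases hA : (f [a])[i]? with
    | none =>
      rw [hA] at p1 p3
      simp only [Option.map_none] at p1 p3
      left
      exact ⟨Option.map_eq_none_iff.mp p1.symm, Option.map_eq_none_iff.mp p3.symm⟩
    | some x =>
      cases hB : (f [b])[i]? with
      | none => rw [hA, hB] at p1; simp at p1
      | some y =>
        cases hC : (f [c])[i]? with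
        | none => rw [hA, hC] at p3; simp at p3
        | some z =>
          rw [hA, hB] at p1
          rw [hA, hC] at p3
          rw [hB, hC] at p5
          simp only [Option.map_some, Option.some.injEq] at p1 p3 p5
          rcases letter_cases a b c hab hac hbc x y z p1 p3 p5 with
            ⟨h1, h2⟩ | ⟨h1, h2, h3⟩
          · left; exact ⟨by rw [h1], by rw [h2]⟩
          · right; exact ⟨by rw [h1], by rw [h2], by rw [h3]⟩
  obtain ⟨anc_a, anc_b, anc_c⟩ :=
    recon_blocks a b c hab (f [a]) (f [b]) (f [c]) Hpt
  have anc_eps := level_eps a b c hab hac hbc hf _ anc_a anc_b anc_c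
  have anc_pow_a : ∀ m : ℕ, m ≠ 0 → f (List.replicate m a) =
      recon (blocks (f [a]) (f [b])) (List.replicate m a) :=
    fun m hm => level_pow a b c hab hac hbc hf _ anc_b anc_c m hm
  have anc_two := level_two a b c hab hac hbc hf _ anc_eps anc_c anc_pow_a
  intro x
  apply ML a b hab
  intro s t hst
  obtain ⟨g, hga, hgb, hval, hgst⟩ := choose_g a b hab s t hst
  have hfixy : bar g (bar g x) = bar g x := by
    refine bar_fix _ _ (fun r hr => ?_)
    rcases mem_bar g a b hval x r hr with h | h <;> rw [h]
    · exact hga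
    · exact hgb
  refine ⟨g, ?_, ?_⟩
  · exact transfer hf _ x (bar g x)
      (anc_two (bar g x) (mem_bar g a b hval x)) g hfixy.symm
  · rcases hval s with hs | hs <;> rcases hval t with ht | ht
    · exact absurd (hs.trans ht.symm) hgst
    · exact ⟨a, b, by rw [hs]; rfl, by rw [ht]; rfl, hab⟩
    · exact ⟨b, a, by rw [hs]; rfl, by rw [ht]; rfl, hab.symm⟩
    · exact absurd (hs.trans ht.symm) hgst

end CPAux

/-- If `S` has at least 3 elements, `f : S* → S*` is congruence preserving iff it preserves
all restricted congruences. -/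
theorem stmt_3 {S : Type*} (a b c : S) (hab : a ≠ b) (hac : a ≠ c) (hbc : b ≠ c)
    (f : List S → List S) : IsCP f ↔ IsRCP f := by
  constructor
  · intro hcp φ hφ x y hxy
    exact hcp (fun u v => φ u = φ v)
      ⟨⟨fun _ => rfl, fun h => h.symm, fun h1 h2 => h1.trans h2⟩,
       fun x y u v h1 h2 => by
        have h1' : φ x = φ y := h1
        have h2' : φ u = φ v := h2
        show φ (x ++ u) = φ (y ++ v)
        rw [hφ.2, hφ.2, h1', h2']⟩ x y hxy
  · intro hf r hr x y hxy
    have main := CPAux.rcp_recon a b c hab hac hbc hf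
    rw [main x, main y]
    exact CPAux.recon_cong hr.1 hr.2 _ hxy
end

section
/- If f : Σ* → Σ* is RCP and u, v ∈ Σ* satisfy |u| = |v|, then |f(u)| = |f(v)|. -/
/-- If `f` is RCP and `|u| = |v|` then `|f u| = |f v|`. -/
theorem stmt_4 {S : Type*} [Nonempty S] (f : List S → List S) (hf : IsRCP f)
    (u v : List S) (h : u.length = v.length) : (f u).length = (f v).length := by
  obtain ⟨a⟩ := ‹Nonempty S›
  have key := hf (fun x => List.replicate x.length a)
    ⟨rfl, fun x y => by simp only []; rw [List.length_append, List.replicate_add]⟩ u v (by show List.replicate u.length a = List.replicate v.length a; rw [h])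
  simpa using congrArg List.length key
end

section
/- If f : Σ* → Σ* is RCP and a, b ∈ Σ with b ≠ a, then for all n ∈ ℕ, |f(aⁿ)|_b = |f(ε)|_b, where aⁿ is the word consisting of n copies of a and ε is the empty word. -/
/-- If `f` is RCP and `b ≠ a` then `|f (aⁿ)|_b = |f ε|_b` for all `n`. -/
theorem stmt_6 {S : Type*} [DecidableEq S] (f : List S → List S) (hf : IsRCP f)
    (a b : S) (hba : b ≠ a) (n : ℕ) :
    (f (List.replicate n a)).count b = (f []).count b := by
  set φ : List S → List S := fun x => x.filter (fun c => decide (c ≠ a)) with hφ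
  have hhom : IsHom φ := by
    constructor
    · rfl
    · intro x y; simp [hφ, List.filter_append]
  have hx : φ (List.replicate n a) = φ [] := by
    simp [hφ, List.filter_replicate]
  have key := hf φ hhom _ _ hx
  have hcount : ∀ u : List S, (φ u).count b = u.count b := by
    intro u
    simp [hφ]
    rw [List.count_filter]
    simp [hba]
  calc (f (List.replicate n a)).count b = (φ (f (List.replicate n a))).count b := (hcount _).symm
    _ = (φ (f [])).count b := by rw [key]
    _ = (f []).count b := hcount _
end

section
/- Assume Σ contains at least two letters and f : Σ* → Σ* is RCP. Fix a ∈ Σ and let p_f = |f(a)| − |f(ε)| (which is independent of the choice of a ∈ Σ). Then for every word x ∈ Σ* and every letter c ∈ Σ: |f(x)| = p_f·|x| + |f(ε)| and |f(x)|_c = p_f·|x|_c + |f(ε)|_c. -/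
section Aux
variable {S : Type*} [DecidableEq S]

lemma master (f : List S → List S)
    (hf : ∀ φ : List S → List S, IsHom φ → ∀ x y : List S, φ x = φ y → φ (f x) = φ (f y))
    (k : S → ℕ) (t : S) (x y : List S)
    (h : (x.map k).sum = (y.map k).sum) :
    ((f x).map k).sum = ((f y).map k).sum := by
  have hhom : IsHom (fun z : List S => List.replicate ((z.map k).sum) t) := by
    refine ⟨?_, fun u v => ?_⟩
    · show List.replicate (([] : List S).map k).sum t = []
      rw [List.map_nil, List.sum_nil, List.replicate_zero]
    · show List.replicate ((u ++ v).map k).sum t = _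
      rw [List.map_append, List.sum_append, List.replicate_add]
  have h2 := hf _ hhom x y (by show List.replicate _ t = List.replicate _ t; rw [h])
  have h3 := congrArg List.length h2
  simpa only [List.length_replicate] using h3

lemma sum_one (x : List S) : (x.map (fun _ => (1:ℕ))).sum = x.length := by
  induction x with
  | nil => simp
  | cons a l ih => simp only [List.map_cons, List.sum_cons, ih, List.length_cons]; omega

lemma sum_ind (c : S) (x : List S) :
    (x.map (fun s => if s = c then (1:ℕ) else 0)).sum = x.count c := by
  induction x with
  | nil => simp
  | cons a l ih =>
    simp only [List.map_cons, List.sum_cons, ih, List.count_cons, beq_iff_eq]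
    by_cases h : a = c <;> simp [h] <;> omega

lemma sum_pair (c b : S) (x : List S) :
    (x.map (fun s => (if s = c then (1:ℕ) else 0) + (if s = b then 1 else 0))).sum
      = x.count c + x.count b := by
  induction x with
  | nil => simp
  | cons a l ih =>
    simp only [List.map_cons, List.sum_cons, ih, List.count_cons, beq_iff_eq]
    by_cases h1 : a = c <;> by_cases h2 : a = b <;> simp [h1, h2] <;> omega

lemma sum_co (b : S) (x : List S) :
    (x.map (fun s => if s = b then (0:ℕ) else 1)).sum + x.count b = x.length := by
  induction x with
  | nil => simp
  | cons a l ih =>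
    simp only [List.map_cons, List.sum_cons, List.count_cons, List.length_cons, beq_iff_eq]
    by_cases h : a = b <;> simp [h] <;> omega

end Aux

/-- If `S` has at least two letters and `f` is RCP, then with `p_f = |f a| - |f ε|`
(independent of the letter `a`), one has `|f x| = p_f·|x| + |f ε|` and
`|f x|_c = p_f·|x|_c + |f ε|_c` for every word `x` and letter `c`. -/
theorem stmt_7 {S : Type*} [DecidableEq S] (hS : ∃ a b : S, a ≠ b)
    (f : List S → List S) (hf : IsRCP f) (a : S) (x : List S) (c : S) :
    ((f x).length : ℤ) =
      (((f [a]).length : ℤ) - ((f []).length : ℤ)) * (x.length : ℤ) + ((f []).length : ℤ) ∧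
    ((f x).count c : ℤ) =
      (((f [a]).length : ℤ) - ((f []).length : ℤ)) * (x.count c : ℤ) + ((f []).count c : ℤ) := by
  obtain ⟨a0, b0, hab⟩ := hS
  have lenEq : ∀ u v : List S, u.length = v.length → (f u).length = (f v).length := by
    intro u v h
    have := master f hf (fun _ => 1) a0 u v (by rw [sum_one, sum_one, h])
    rwa [sum_one, sum_one] at this
  have cntEq : ∀ (d : S) (u v : List S), u.count d = v.count d →
      (f u).count d = (f v).count d := by
    intro d u v h
    have := master f hf (fun s => if s = d then 1 else 0) a0 u v
      (by rw [sum_ind, sum_ind, h])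
    rwa [sum_ind, sum_ind] at this
  have recB : ∀ (d b : S), d ≠ b → ∀ m : ℕ,
      (f (List.replicate (m+1) d)).count d + (f []).count b
        = (f (List.replicate m d)).count d + (f [b]).count b := by
    intro d b hdb m
    have hmain := master f hf (fun s => (if s = d then 1 else 0) + (if s = b then 1 else 0)) a0
      (List.replicate (m+1) d) (List.replicate m d ++ [b]) ?_
    · rw [sum_pair, sum_pair] at hmain
      have e1 : (f (List.replicate (m+1) d)).count b = (f []).count b := by
        apply cntEq
        simp [List.count_replicate, hdb, Ne.symm hdb]
      have e2 : (f (List.replicate m d ++ [b])).count b = (f [b]).count b := by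
        apply cntEq
        simp [List.count_replicate, hdb, Ne.symm hdb]
      have e3 : (f (List.replicate m d ++ [b])).count d = (f (List.replicate m d)).count d := by
        apply cntEq
        simp [List.count_replicate, hdb, Ne.symm hdb]
      omega
    · rw [sum_pair, sum_pair]
      simp [List.count_replicate, List.count_append, hdb, Ne.symm hdb]
  have iterB : ∀ (d b : S), d ≠ b → ∀ m : ℕ,
      (f (List.replicate m d)).count d + m * (f []).count b
        = (f []).count d + m * (f [b]).count b := by
    intro d b hdb m
    induction m with
    | zero => simp
    | succ n ih =>
      have hr := recB d b hdb n
      have h1 : (n+1) * (f []).count b = n * (f []).count b + (f []).count b := by ring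
      have h2 : (n+1) * (f [b]).count b = n * (f [b]).count b + (f [b]).count b := by ring
      omega
  have recL : ∀ n : ℕ,
      (f (List.replicate (n+1) a0)).length + (f []).count b0
        = (f (List.replicate n a0)).length + (f [b0]).count b0 := by
    intro n
    have hmain := master f hf (fun s => if s = b0 then 0 else 1) a0
      (List.replicate n a0 ++ [b0]) (List.replicate n a0) ?_
    · have c1 := sum_co b0 (f (List.replicate n a0 ++ [b0]))
      have c2 := sum_co b0 (f (List.replicate n a0))
      have e1 : (f (List.replicate n a0 ++ [b0])).count b0 = (f [b0]).count b0 := by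
        apply cntEq
        simp [List.count_replicate, hab, Ne.symm hab]
      have e2 : (f (List.replicate n a0)).count b0 = (f []).count b0 := by
        apply cntEq
        simp [List.count_replicate, hab, Ne.symm hab]
      have e3 : (f (List.replicate n a0 ++ [b0])).length
          = (f (List.replicate (n+1) a0)).length := by
        apply lenEq; simp
      omega
    · simp [List.map_append, List.sum_append, List.map_replicate, List.sum_replicate, hab]
  have iterL : ∀ n : ℕ,
      (f (List.replicate n a0)).length + n * (f []).count b0
        = (f []).length + n * (f [b0]).count b0 := by
    intro n
    induction n with
    | zero => simp
    | succ m ih =>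
      have hr := recL m
      have h1 : (m+1) * (f []).count b0 = m * (f []).count b0 + (f []).count b0 := by ring
      have h2 : (m+1) * (f [b0]).count b0 = m * (f [b0]).count b0 + (f [b0]).count b0 := by ring
      omega
  have hL1 : (f [a]).length = (f (List.replicate 1 a0)).length := by
    apply lenEq; simp
  have hit1 := iterL 1
  have hd : ((f [a]).length : ℤ) - ((f []).length : ℤ)
      = ((f [b0]).count b0 : ℤ) - ((f []).count b0 : ℤ) := by
    rw [hL1]; omega
  constructor
  · have hx : (f x).length = (f (List.replicate x.length a0)).length := by
      apply lenEq; simp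
    have hit := iterL x.length
    rw [hx, hd]
    have hit' : ((f (List.replicate x.length a0)).length : ℤ)
          + (x.length : ℤ) * ((f []).count b0 : ℤ)
        = ((f []).length : ℤ) + (x.length : ℤ) * ((f [b0]).count b0 : ℤ) := by
      exact_mod_cast hit
    linear_combination hit'
  · have hx : (f x).count c = (f (List.replicate (x.count c) c)).count c := by
      apply cntEq; simp
    rw [hx, hd]
    by_cases hc : c = b0
    · subst hc
      -- now b0 is replaced by c everywhere; hab : a0 ≠ c
      have hit := iterB c a0 (Ne.symm hab) (x.count c)
      have hd2 : ((f [a0]).count a0 : ℤ) - ((f []).count a0 : ℤ)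
          = ((f [c]).count c : ℤ) - ((f []).count c : ℤ) := by
        have hr := recB a0 c hab 0
        simp only [zero_add, List.replicate_one, List.replicate_zero] at hr
        omega
      rw [← hd2]
      have hit' : ((f (List.replicate (x.count c) c)).count c : ℤ)
            + (x.count c : ℤ) * ((f []).count a0 : ℤ)
          = ((f []).count c : ℤ) + (x.count c : ℤ) * ((f [a0]).count a0 : ℤ) := by
        exact_mod_cast hit
      linear_combination hit'
    · have hit := iterB c b0 hc (x.count c)
      have hit' : ((f (List.replicate (x.count c) c)).count c : ℤ)
            + (x.count c : ℤ) * ((f []).count b0 : ℤ)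
          = ((f []).count c : ℤ) + (x.count c : ℤ) * ((f [b0]).count b0 : ℤ) := by
        exact_mod_cast hit
      linear_combination hit'
end

section
/- Assume Σ contains at least two letters and f : Σ* → Σ* is RCP. If there exists a word u ≠ ε such that f(u) = ε, then f is constant on Σ* with value ε. -/
section Aux
variable {S : Type*}

def subst (g : S → List S) (w : List S) : List S := (w.map g).flatten

lemma subst_hom (g : S → List S) : IsHom (subst g) := by
  constructor
  · rfl
  · intro x y; simp [subst]

lemma subst_nil (g : S → List S) (hg : ∀ c, g c ≠ []) {w : List S}
    (h : subst g w = []) : w = [] := by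
  cases w with
  | nil => rfl
  | cons c t => simp [subst] at h; exact absurd h.1 (hg c)

lemma subst_replicate (g : S → List S) (c : S) (m : ℕ) :
    subst g (List.replicate m c) = (List.replicate m (g c)).flatten := by
  simp [subst]

lemma flatten_replicate_single (c : S) (m : ℕ) :
    (List.replicate m [c]).flatten = List.replicate m c := by
  induction m with
  | zero => rfl
  | succ k ih => simp [List.replicate_succ, ih]

lemma flatten_replicate_nil (m : ℕ) :
    (List.replicate m ([] : List S)).flatten = [] := by
  induction m with
  | zero => rfl
  | succ k ih => simp [List.replicate_succ, ih]

lemma subst_len (a : S) (w : List S) :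
    subst (fun _ => [a]) w = List.replicate w.length a := by
  induction w with
  | nil => rfl
  | cons c t ih =>
    simp only [subst, List.map_cons, List.flatten_cons, List.length_cons, List.replicate_succ]
    simp [subst] at ih; simp [ih]

end Aux

/-- If `S` has at least two letters, `f` is RCP, and `f u = ε` for some `u ≠ ε`,
then `f` is constantly `ε`. -/
theorem stmt_8 {S : Type*} (hS : ∃ a b : S, a ≠ b) (f : List S → List S) (hf : IsRCP f)
    (u : List S) (hu : u ≠ []) (hfu : f u = []) : ∀ x : List S, f x = [] := by
  classical
  obtain ⟨a, b, hab⟩ := hS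
  set n := u.length with hn
  have hn1 : 1 ≤ n := by
    rcases u with _ | ⟨c, t⟩
    · exact absurd rfl hu
    · simp [hn]
  -- length invariance
  have key1 : ∀ x y : List S, x.length = y.length → (f x).length = (f y).length := by
    intro x y hxy
    have := hf (subst (fun _ => [a])) (subst_hom _) x y (by rw [subst_len, subst_len, hxy])
    rw [subst_len, subst_len] at this
    have := congrArg List.length this
    simpa using this
  -- length-n words
  have key2 : ∀ w : List S, w.length = n → f w = [] := by
    intro w hw
    have := key1 w u (by rw [hw])
    rw [hfu] at this
    exact List.eq_nil_of_length_eq_zero (by simpa using this)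
  -- case m ≥ n
  have key3 : ∀ m : ℕ, n ≤ m → f (List.replicate m a) = [] := by
    intro m hm
    set g : S → List S := fun c => if c = a then [a] else List.replicate (m - n + 1) a with hg
    have hga : g a = [a] := by simp [hg]
    have hgb : g b = List.replicate (m - n + 1) a := by simp [hg, hab.symm]
    have hgne : ∀ c, g c ≠ [] := by
      intro c
      by_cases h : c = a
      · simp [hg, h]
      · simp [hg, h]
    set x : List S := List.replicate (n - 1) a ++ [b] with hx
    have hxlen : x.length = n := by simp [hx]; omega
    have hsx : subst g x = List.replicate m a := by
      have h1 : subst g (List.replicate (n-1) a) = List.replicate (n-1) a := by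
        rw [subst_replicate, hga, flatten_replicate_single]
      have : subst g x = subst g (List.replicate (n-1) a) ++ subst g [b] :=
        (subst_hom g).2 _ _
      rw [this, h1]
      have : subst g [b] = List.replicate (m - n + 1) a := by simp [subst, hgb]
      rw [this, ← List.replicate_add]
      congr 1
      omega
    have hsm : subst g (List.replicate m a) = List.replicate m a := by
      rw [subst_replicate, hga, flatten_replicate_single]
    have := hf (subst g) (subst_hom g) (List.replicate m a) x (by rw [hsx, hsm])
    rw [key2 x hxlen] at this
    simp only [subst] at this
    exact subst_nil g hgne (by simpa [subst] using this)
  -- case m ≤ n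
  have key4 : ∀ m : ℕ, m ≤ n → f (List.replicate m a) = [] := by
    intro m hm
    -- (A) all letters of f(a^m) equal a, via erasing a
    set g1 : S → List S := fun c => if c = a then [] else [c] with hg1
    have hA : ∀ c ∈ f (List.replicate m a), c = a := by
      have e1 : subst g1 (List.replicate m a) = [] := by
        rw [subst_replicate]; simp [hg1, flatten_replicate_nil]
      have e2 : subst g1 (List.replicate n a) = [] := by
        rw [subst_replicate]; simp [hg1, flatten_replicate_nil]
      have := hf (subst g1) (subst_hom g1) (List.replicate m a) (List.replicate n a)
        (by rw [e1, e2])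
      rw [key2 (List.replicate n a) (by simp)] at this
      simp only [subst] at this
      -- this : (List.map g1 (f (List.replicate m a))).flatten = (List.map g1 []).flatten
      intro c hc
      by_contra hca
      have hmem : [c] ∈ (f (List.replicate m a)).map g1 := by
        refine List.mem_map.2 ⟨c, hc, ?_⟩
        simp [hg1, hca]
      have : c ∈ ((f (List.replicate m a)).map g1).flatten :=
        List.mem_flatten.2 ⟨[c], hmem, by simp⟩
      rw [show ((f (List.replicate m a)).map g1).flatten = [] by simpa [subst] using ‹(List.map g1 (f (List.replicate m a))).flatten = (List.map g1 ([]:List S)).flatten›] at this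
      simp at this
    -- (B) no letter of f(a^m) equals a, via erasing non-a
    set g2 : S → List S := fun c => if c = a then [a] else [] with hg2
    have hB : a ∉ f (List.replicate m a) := by
      set y : List S := List.replicate m a ++ List.replicate (n - m) b with hy
      have hylen : y.length = n := by simp [hy]; omega
      have e1 : subst g2 (List.replicate m a) = List.replicate m a := by
        rw [subst_replicate]; simp [hg2, flatten_replicate_single]
      have e2 : subst g2 y = List.replicate m a := by
        have : subst g2 y = subst g2 (List.replicate m a) ++ subst g2 (List.replicate (n-m) b) :=
          (subst_hom g2).2 _ _
        rw [this, e1, subst_replicate]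
        simp [hg2, hab.symm, flatten_replicate_nil]
      have := hf (subst g2) (subst_hom g2) (List.replicate m a) y (by rw [e1, e2])
      rw [key2 y hylen] at this
      intro hmem
      have h1 : [a] ∈ (f (List.replicate m a)).map g2 :=
        List.mem_map.2 ⟨a, hmem, by simp [hg2]⟩
      have h2 : a ∈ subst g2 (f (List.replicate m a)) :=
        List.mem_flatten.2 ⟨[a], h1, by simp⟩
      rw [this] at h2
      simp [subst] at h2
    cases h : f (List.replicate m a) with
    | nil => rfl
    | cons c t =>
      exfalso
      have hca : c = a := hA c (by rw [h]; exact List.mem_cons_self)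
      exact hB (by rw [h, hca]; exact List.mem_cons_self)
  intro x
  have hx : (f x).length = (f (List.replicate x.length a)).length :=
    key1 x _ (by simp)
  have hrep : f (List.replicate x.length a) = [] := by
    rcases le_or_gt n x.length with h | h
    · exact key3 _ h
    · exact key4 _ h.le
  rw [hrep] at hx
  exact List.eq_nil_of_length_eq_zero (by simpa using hx)
end

section
/- Assume Σ has at least 3 elements and f : Σ* → Σ* is RCP. If there exist letters a, b ∈ Σ with a ≠ b such that f(a) ∈ bΣ* (i.e., the word f(a) starts with the letter b), then f(x) ∈ bΣ* for every word x ∈ Σ*. -/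
/-- Substitution homomorphism: replace the letter `e` by the word `v`, keep other letters. -/
def LSub {S : Type*} [DecidableEq S] (e : S) (v : List S) : List S → List S :=
  fun l => l.flatMap (fun t => if t = e then v else [t])

theorem lsub_hom {S : Type*} [DecidableEq S] (e : S) (v : List S) : IsHom (LSub e v) :=
  ⟨by simp [LSub], fun x y => by simp [LSub]⟩

theorem lsub_cons {S : Type*} [DecidableEq S] (e : S) (v : List S) (t : S) (l : List S) :
    LSub e v (t :: l) = (if t = e then v else [t]) ++ LSub e v l := by simp [LSub]

theorem lsub_nil {S : Type*} [DecidableEq S] (e : S) (v : List S) : LSub e v [] = [] := rfl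

theorem lsub_single {S : Type*} [DecidableEq S] (e : S) (v : List S) : LSub e v [e] = v := by
  simp [LSub]

theorem lsub_avoid {S : Type*} [DecidableEq S] {e : S} (v : List S) {l : List S} (h : e ∉ l) :
    LSub e v l = l := by
  induction l with
  | nil => rfl
  | cons t l ih =>
    rw [lsub_cons, if_neg (by rintro rfl; exact h (List.mem_cons_self : t ∈ t :: l)),
      ih (fun hl => h (List.mem_cons_of_mem t hl))]
    rfl

theorem lmem_del {S : Type*} [DecidableEq S] {e t : S} {l : List S}
    (h : t ∈ LSub e [] l) : t ∈ l := by
  induction l with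
  | nil => exact absurd h (by simp [LSub])
  | cons s l ih =>
    rw [lsub_cons] at h
    rcases List.mem_append.1 h with h | h
    · by_cases hs : s = e
      · simp [hs] at h
      · rw [if_neg hs, List.mem_singleton] at h
        exact h ▸ (List.mem_cons_self : s ∈ s :: l)
    · exact List.mem_cons_of_mem s (ih h)

theorem lnot_mem_del {S : Type*} [DecidableEq S] (e : S) (l : List S) : e ∉ LSub e [] l := by
  induction l with
  | nil => simp [LSub]
  | cons s l ih =>
    rw [lsub_cons]
    intro h
    rcases List.mem_append.1 h with h | h
    · by_cases hs : s = e
      · simp [hs] at h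
      · rw [if_neg hs, List.mem_singleton] at h
        exact hs h.symm
    · exact ih h

/-- Anchor lemma: if `f [e] = b :: w` with `e ≠ b` and `e` does not occur in `x`,
then `f x` is nonempty and starts with `b` or `e`. -/
theorem anchor {S : Type*} [DecidableEq S] {f : List S → List S} (hf : IsRCP f)
    {e b : S} (heb : e ≠ b) {w : List S} (he : f [e] = b :: w)
    {x : List S} (hx : e ∉ x) :
    ∃ t u, f x = t :: u ∧ (t = b ∨ t = e) := by
  have h := hf (LSub e x) (lsub_hom e x) x [e] (by rw [lsub_avoid x hx, lsub_single])
  rw [he, lsub_cons, if_neg (fun hb => heb hb.symm)] at h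
  cases hfx : f x with
  | nil => rw [hfx, lsub_nil] at h; exact absurd h (by simp)
  | cons t u =>
    rw [hfx, lsub_cons] at h
    by_cases ht : t = e
    · exact ⟨t, u, rfl, Or.inr ht⟩
    · rw [if_neg ht] at h
      exact ⟨t, u, rfl, Or.inl (List.cons_eq_cons.1 h).1⟩

/-- Lifting lemma: if `f` of (`x` with `e` deleted) starts with `b ≠ e`,
then `f x` is nonempty and starts with `b` or `e`. -/
theorem lift {S : Type*} [DecidableEq S] {f : List S → List S} (hf : IsRCP f)
    {e b : S} (hbe : b ≠ e) {x u : List S} (hgood : f (LSub e [] x) = b :: u) :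
    ∃ t v, f x = t :: v ∧ (t = b ∨ t = e) := by
  have h := hf (LSub e ([] : List S)) (lsub_hom e []) x (LSub e [] x)
    (lsub_avoid [] (lnot_mem_del e x)).symm
  rw [hgood, lsub_cons, if_neg hbe] at h
  cases hfx : f x with
  | nil => rw [hfx, lsub_nil] at h; exact absurd h (by simp)
  | cons t v =>
    rw [hfx, lsub_cons] at h
    by_cases ht : t = e
    · exact ⟨t, v, rfl, Or.inr ht⟩
    · rw [if_neg ht] at h
      exact ⟨t, v, rfl, Or.inl (List.cons_eq_cons.1 h).1⟩

/-- Combining two head-dichotomies for the same word. -/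
theorem combine {S : Type*} {f : List S → List S} {z : List S} {b e₁ e₂ : S}
    (h1 : ∃ t u, f z = t :: u ∧ (t = b ∨ t = e₁))
    (h2 : ∃ t u, f z = t :: u ∧ (t = b ∨ t = e₂))
    (hb : e₁ ≠ b) (he : e₁ ≠ e₂) : ∃ u, f z = b :: u := by
  obtain ⟨t, u, htu, ht⟩ := h1
  obtain ⟨t', u', htu', ht'⟩ := h2
  rcases ht with rfl | rfl
  · exact ⟨u, htu⟩
  · have hteq : t' = t := by
      rw [htu] at htu'; exact (List.cons_eq_cons.1 htu').1.symm
    rcases ht' with h | h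
    · exact absurd (hteq ▸ h) hb
    · exact absurd (hteq ▸ h) he

/-- If `S` has at least 3 elements, `f` is RCP, and `f a` starts with the letter `b ≠ a`
for some letter `a`, then `f x` starts with `b` for every word `x`. -/
theorem stmt_9 {S : Type*} (c₁ c₂ c₃ : S) (h12 : c₁ ≠ c₂) (h13 : c₁ ≠ c₃) (h23 : c₂ ≠ c₃)
    (f : List S → List S) (hf : IsRCP f) (a b : S) (hab : a ≠ b)
    (h : ∃ w : List S, f [a] = b :: w) :
    ∀ x : List S, ∃ w : List S, f x = b :: w := by
  classical
  obtain ⟨w, hw⟩ := h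
  -- find a third letter c distinct from a and b
  obtain ⟨c, hca, hcb⟩ : ∃ c : S, c ≠ a ∧ c ≠ b := by
    by_cases hc1 : c₁ ≠ a ∧ c₁ ≠ b
    · exact ⟨c₁, hc1⟩
    by_cases hc2 : c₂ ≠ a ∧ c₂ ≠ b
    · exact ⟨c₂, hc2⟩
    by_cases hc3 : c₃ ≠ a ∧ c₃ ≠ b
    · exact ⟨c₃, hc3⟩
    exfalso
    have e1 : c₁ = a ∨ c₁ = b := by tauto
    have e2 : c₂ = a ∨ c₂ = b := by tauto
    have e3 : c₃ = a ∨ c₃ = b := by tauto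
    rcases e1 with rfl | rfl <;> rcases e2 with h2 | h2 <;> rcases e3 with h3 | h3 <;>
      simp_all
  -- show f [c] starts with b
  have hc : ∃ u, f [c] = b :: u := by
    obtain ⟨t, u, htu, ht⟩ := anchor hf hab hw
      (show a ∉ [c] by simp only [List.mem_singleton]; exact fun h => hca h.symm)
    have hkey := hf (LSub c [a]) (lsub_hom c [a]) [c] [a]
      (by rw [lsub_single, lsub_avoid [a] (by simp [hca])])
    rw [htu, hw, lsub_cons, lsub_cons, if_neg (fun h : b = c => hcb h.symm)] at hkey
    have htc : t ≠ c := by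
      rcases ht with rfl | rfl
      · exact fun h => hcb h.symm
      · exact fun h => hca h.symm
    rw [if_neg htc] at hkey
    exact ⟨u, htu.trans (by rw [(List.cons_eq_cons.1 hkey).1])⟩
  obtain ⟨wc, hwc⟩ := hc
  intro x
  -- z₁ : x with c then a deleted; avoids both a and c
  set z₁ := LSub a [] (LSub c [] x) with hz₁def
  have hz₁ : ∃ u, f z₁ = b :: u :=
    combine (anchor hf hab hw (lnot_mem_del a _))
      (anchor hf hcb hwc (fun hm => lnot_mem_del c x (lmem_del hm)))
      hab (fun h => hca h.symm)
  -- y := x with c deleted, avoids c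
  set y := LSub c [] x with hydef
  have hy : ∃ u, f y = b :: u := by
    obtain ⟨u, hu⟩ := hz₁
    exact combine (lift hf (fun h => hab h.symm) hu)
      (anchor hf hcb hwc (lnot_mem_del c x)) hab (fun h => hca h.symm)
  -- z₂ : x with a then c deleted; avoids both
  set z₂ := LSub c [] (LSub a [] x) with hz₂def
  have hz₂ : ∃ u, f z₂ = b :: u :=
    combine (anchor hf hab hw (fun hm => lnot_mem_del a x (lmem_del hm)))
      (anchor hf hcb hwc (lnot_mem_del c _))
      hab (fun h => hca h.symm)
  -- y₂ := x with a deleted, avoids a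
  set y₂ := LSub a [] x with hy₂def
  have hy₂ : ∃ u, f y₂ = b :: u := by
    obtain ⟨u, hu⟩ := hz₂
    exact combine (anchor hf hab hw (lnot_mem_del a x))
      (lift hf (fun h => hcb h.symm) hu) hab (fun h => hca h.symm)
  -- finally x
  obtain ⟨u1, hu1⟩ := hy₂
  obtain ⟨u2, hu2⟩ := hy
  exact combine (lift hf (fun h => hab h.symm) hu1)
    (lift hf (fun h => hcb h.symm) hu2) hab (fun h => hca h.symm)
end

section
/- Assume Σ has at least 3 elements and f : Σ* → Σ* is RCP. If f(a) ∈ aΣ* for every letter a ∈ Σ (i.e., a is a prefix of f(a)), then f(x) ∈ xΣ* for every word x ∈ Σ* (i.e., x is a prefix of f(x)). -/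
private lemma isHom_map' {S : Type*} (g : S → S) : IsHom (fun l : List S => l.map g) :=
  ⟨rfl, fun x y => by simp⟩

private lemma isHom_flatMap' {S : Type*} (g : S → List S) :
    IsHom (fun l : List S => l.flatMap g) :=
  ⟨rfl, fun x y => by simp⟩

private lemma flatMap_eq_self {S : Type*} (g : S → List S) (l : List S)
    (h : ∀ s ∈ l, g s = [s]) : l.flatMap g = l := by
  induction l with
  | nil => rfl
  | cons a t ih =>
    rw [List.flatMap_cons, h a (by simp), ih (fun s hs => h s (by simp [hs]))]
    rfl

private lemma getElem_of_append_eq {S : Type*} {l m r : List S} (h : l = m ++ r) (k : ℕ)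
    (hk : k < m.length) : ∃ h' : k < l.length, l[k] = m[k] := by
  subst h
  exact ⟨by rw [List.length_append]; omega, List.getElem_append_left hk⟩

private lemma getElem_congr_list' {S : Type*} {l l' : List S} (h : l = l') {k : ℕ}
    (hk : k < l.length) : ∃ h' : k < l'.length, l'[k] = l[k] := by
  subst h; exact ⟨hk, rfl⟩

private lemma getElem_append_cons {S : Type*} (l : List S) (x : S) (r : List S) (k : ℕ)
    (hk : l.length = k) : ∃ h : k < (l ++ x :: r).length, (l ++ x :: r)[k] = x := by
  subst hk
  refine ⟨by simp, ?_⟩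
  rw [List.getElem_append_right (le_refl _)]
  simp

/-- Constant words: `b^n` is a prefix of `f (b^n)`, given two spare letters `a, c`. -/
private lemma const_case {S : Type*} [DecidableEq S] (a b c : S)
    (hab : a ≠ b) (hcb : c ≠ b) (hac : a ≠ c)
    (f : List S → List S) (hf : IsRCP f)
    (ha : ∃ w, f [a] = a :: w) (hc : ∃ w, f [c] = c :: w) (n : ℕ) :
    ∃ t, f (List.replicate n b) = List.replicate n b ++ t := by
  obtain ⟨wa, hwa⟩ := ha
  obtain ⟨wc, hwc⟩ := hc
  set ga : S → List S := fun s => if s = a then List.replicate n b else [s] with hga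
  set gc : S → List S := fun s => if s = c then List.replicate n b else [s] with hgc
  have hgab : ga b = [b] := by simp [hga, Ne.symm hab]
  have hgcb : gc b = [b] := by simp [hgc, Ne.symm hcb]
  have hrep : ∀ (g : S → List S), g b = [b] → ∀ j,
      (List.replicate j b).flatMap g = List.replicate j b := by
    intro g hg j
    apply flatMap_eq_self
    intro s hs
    rw [List.eq_of_mem_replicate hs, hg]
  have Ea : List.replicate n b ++ wa.flatMap ga = (f (List.replicate n b)).flatMap ga := by
    have e0 : (f [a]).flatMap ga = (f (List.replicate n b)).flatMap ga := by
      refine hf _ (isHom_flatMap' ga) [a] _ ?_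
      show [a].flatMap ga = (List.replicate n b).flatMap ga
      rw [hrep ga hgab n, List.flatMap_cons, List.flatMap_nil, List.append_nil]
      simp [hga]
    rw [hwa, List.flatMap_cons] at e0
    rw [← e0]
    congr 1
    simp [hga]
  have Ec : List.replicate n b ++ wc.flatMap gc = (f (List.replicate n b)).flatMap gc := by
    have e0 : (f [c]).flatMap gc = (f (List.replicate n b)).flatMap gc := by
      refine hf _ (isHom_flatMap' gc) [c] _ ?_
      show [c].flatMap gc = (List.replicate n b).flatMap gc
      rw [hrep gc hgcb n, List.flatMap_cons, List.flatMap_nil, List.append_nil]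
      simp [hgc]
    rw [hwc, List.flatMap_cons] at e0
    rw [← e0]
    congr 1
    simp [hgc]
  have key : ∀ k, k ≤ n → ∃ r, List.replicate k b ++ r = f (List.replicate n b) := by
    intro k hk
    induction k with
    | zero => exact ⟨_, rfl⟩
    | succ k ih =>
      obtain ⟨r, hr⟩ := ih (by omega)
      have hEa : List.replicate (n - k - 1 + 1) b ++ wa.flatMap ga = r.flatMap ga := by
        apply List.append_cancel_left (as := List.replicate k b)
        rw [← List.append_assoc, ← List.replicate_add]
        have hnk : k + (n - k - 1 + 1) = n := by omega
        rw [hnk, Ea, ← hr, List.flatMap_append, hrep ga hgab k]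
      have hEc : List.replicate (n - k - 1 + 1) b ++ wc.flatMap gc = r.flatMap gc := by
        apply List.append_cancel_left (as := List.replicate k b)
        rw [← List.append_assoc, ← List.replicate_add]
        have hnk : k + (n - k - 1 + 1) = n := by omega
        rw [hnk, Ec, ← hr, List.flatMap_append, hrep gc hgcb k]
      rw [List.replicate_succ, List.cons_append] at hEa hEc
      rcases r with _ | ⟨hh, r'⟩
      · simp at hEa
      · by_cases e : hh = a
        · subst e
          rw [List.flatMap_cons] at hEc
          have hgce : gc hh = [hh] := by simp [hgc, hac]
          rw [hgce, List.singleton_append] at hEc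
          injection hEc with i1 _
          exact absurd i1.symm hab
        · rw [List.flatMap_cons] at hEa
          have hgae : ga hh = [hh] := by simp [hga, e]
          rw [hgae, List.singleton_append] at hEa
          injection hEa with i1 _
          refine ⟨r', ?_⟩
          rw [List.replicate_succ', List.append_assoc, List.singleton_append]
          rw [← i1] at hr
          exact hr
  obtain ⟨t, ht⟩ := key n (le_refl n)
  exact ⟨t, ht.symm⟩

/-- Two-letter words: `y ∈ {a,b}*` is a prefix of `f y`, given a third letter `c`. -/
private lemma two_letter {S : Type*} [DecidableEq S] (a b c : S)
    (hab : a ≠ b) (hac : a ≠ c) (hbc : b ≠ c)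
    (f : List S → List S) (hf : IsRCP f)
    (h : ∀ s : S, ∃ w, f [s] = s :: w)
    (y : List S) (hy : ∀ s ∈ y, s = a ∨ s = b) :
    ∃ w, f y = y ++ w := by
  obtain ⟨t, ht⟩ := const_case a b c hab (Ne.symm hbc) hac f hf (h a) (h c) y.length
  set n := y.length with hn
  -- merging homomorphism g1 : everything in y goes to b
  set g1 : S → S := fun s => if s = a then b else s with hg1
  have hg1b : g1 b = b := by simp [hg1]
  have hmy : y.map g1 = List.replicate n b := by
    apply List.eq_replicate_iff.mpr
    refine ⟨by simp [hn], ?_⟩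
    intro s hs
    obtain ⟨u, hu, rfl⟩ := List.mem_map.mp hs
    rcases hy u hu with rfl | rfl
    · simp [hg1]
    · simp [hg1, Ne.symm hab]
  have hmrep : (List.replicate n b).map g1 = List.replicate n b := by
    rw [List.map_replicate, hg1b]
  have G : (f y).map g1 = List.replicate n b ++ t.map g1 := by
    have G0 : (f y).map g1 = (f (List.replicate n b)).map g1 := by
      refine hf _ (isHom_map' g1) y _ ?_
      show y.map g1 = (List.replicate n b).map g1
      rw [hmy, hmrep]
    rw [G0, ht, List.map_append, hmrep]
  have hnotc : ∀ k, k < n → ∀ hk2 : k < (f y).length, (f y)[k] ≠ c := by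
    intro k hk hk2 hkc
    obtain ⟨h', he⟩ := getElem_of_append_eq G k (by simpa using hk)
    rw [List.getElem_map, List.getElem_replicate, hkc] at he
    have : g1 c = c := by simp [hg1, Ne.symm hac]
    rw [this] at he
    exact hbc he.symm
  -- carrier homomorphism g2 : c ↦ y
  obtain ⟨wc, hwc⟩ := h c
  set g2 : S → List S := fun s => if s = c then y else [s] with hg2
  have hg2c : g2 c = y := by simp [hg2]
  have hg2y : ∀ l : List S, (∀ s ∈ l, s ≠ c) → l.flatMap g2 = l := by
    intro l hl
    apply flatMap_eq_self
    intro s hs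
    simp [hg2, hl s hs]
  have hynoc : ∀ s ∈ y, s ≠ c := by
    intro s hs
    rcases hy s hs with rfl | rfl
    exacts [hac, hbc]
  have D : y ++ wc.flatMap g2 = (f y).flatMap g2 := by
    have e2 : (f [c]).flatMap g2 = (f y).flatMap g2 := by
      refine hf _ (isHom_flatMap' g2) [c] _ ?_
      show [c].flatMap g2 = y.flatMap g2
      rw [hg2y y hynoc, List.flatMap_cons, List.flatMap_nil, List.append_nil, hg2c]
    rw [hwc, List.flatMap_cons, hg2c] at e2
    exact e2
  have key : ∀ k, k ≤ n → ∃ r, y.take k ++ r = f y := by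
    intro k hk
    induction k with
    | zero => exact ⟨_, rfl⟩
    | succ k ih =>
      obtain ⟨r, hr⟩ := ih (by omega)
      have hkn : k < n := by omega
      have hky : k < y.length := by rw [← hn]; exact hkn
      have htk : (y.take k).flatMap g2 = y.take k :=
        hg2y _ (fun s hs => hynoc s (List.mem_of_mem_take hs))
      have e5 : r.flatMap g2 = y.drop k ++ wc.flatMap g2 := by
        apply List.append_cancel_left (as := y.take k)
        rw [← List.append_assoc, List.take_append_drop, D, ← hr, List.flatMap_append, htk]
      have e6 : y.drop k = y[k] :: y.drop (k + 1) := List.drop_eq_getElem_cons hky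
      rcases r with _ | ⟨hh, r'⟩
      · rw [List.flatMap_nil, e6, List.cons_append] at e5
        exact absurd e5.symm (List.cons_ne_nil _ _)
      · obtain ⟨hp, hpe⟩ := getElem_append_cons (y.take k) hh r' k
          (List.length_take.trans (Nat.min_eq_left hky.le))
        obtain ⟨hp2, hpe2⟩ := getElem_congr_list' hr hp
        have hhc : hh ≠ c := by
          have hne := hnotc k hkn hp2
          rw [hpe2, hpe] at hne
          exact hne
        have hg2h : g2 hh = [hh] := by simp [hg2, hhc]
        rw [List.flatMap_cons, hg2h, List.singleton_append, e6, List.cons_append] at e5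
        injection e5 with i1 _
        refine ⟨r', ?_⟩
        rw [← List.take_concat_get hky, List.concat_eq_append, List.append_assoc,
          List.singleton_append, ← i1]
        exact hr
  obtain ⟨w, hw⟩ := key n (le_refl n)
  have : y.take n = y := by rw [hn, List.take_length]
  rw [this] at hw
  exact ⟨w, hw.symm⟩

/-- If `S` has at least 3 elements, `f` is RCP, and `a` is a prefix of `f a` for every
letter `a`, then `x` is a prefix of `f x` for every word `x`. -/
theorem stmt_10 {S : Type*} (c₁ c₂ c₃ : S) (h12 : c₁ ≠ c₂) (h13 : c₁ ≠ c₃) (h23 : c₂ ≠ c₃)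
    (f : List S → List S) (hf : IsRCP f)
    (h : ∀ a : S, ∃ w : List S, f [a] = a :: w) :
    ∀ x : List S, ∃ w : List S, f x = x ++ w := by
  classical
  have pick : ∀ a : S, ∃ b c : S, a ≠ b ∧ a ≠ c ∧ b ≠ c := by
    intro a
    by_cases e1 : a = c₁
    · exact ⟨c₂, c₃, e1 ▸ h12, e1 ▸ h13, h23⟩
    by_cases e2 : a = c₂
    · exact ⟨c₁, c₃, e1, e2 ▸ h23, h13⟩
    · exact ⟨c₁, c₂, e1, e2, h12⟩
  intro x
  have key : ∀ k, ∀ hk : k < x.length, ∃ hp : k < (f x).length, (f x)[k] = x[k] := by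
    intro k hk
    obtain ⟨b, c, hab, hac, hbc⟩ := pick (x[k]'hk)
    set g : S → S := fun s => if s = x[k]'hk then x[k]'hk else b with hg
    have hgg : g ∘ g = g := by
      funext s
      by_cases e : s = x[k]'hk
      · simp [hg, e]
      · simp [hg, e, Ne.symm hab]
    have hyy : (x.map g).map g = x.map g := by rw [List.map_map, hgg]
    have hy : ∀ s ∈ x.map g, s = x[k]'hk ∨ s = b := by
      intro s hs
      obtain ⟨u, hu, rfl⟩ := List.mem_map.mp hs
      by_cases e : u = x[k]'hk
      · left; simp [hg, e]
      · right; simp [hg, e]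
    obtain ⟨w, hw⟩ := two_letter (x[k]'hk) b c hab hac hbc f hf h (x.map g) hy
    have E : (f x).map g = x.map g ++ w.map g := by
      have E0 : (f x).map g = (f (x.map g)).map g := by
        refine hf _ (isHom_map' g) x _ ?_
        show x.map g = (x.map g).map g
        rw [hyy]
      rw [E0, hw, List.map_append, hyy]
    obtain ⟨hp0, hpe0⟩ := getElem_of_append_eq E k (by simpa using hk)
    have hp : k < (f x).length := by simpa using hp0
    rw [List.getElem_map, List.getElem_map] at hpe0
    have hgx : g (x[k]'hk) = x[k]'hk := by simp [hg]
    rw [hgx] at hpe0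
    refine ⟨hp, ?_⟩
    by_contra ne
    have : g ((f x)[k]'hp) = b := by simp [hg, ne]
    rw [this] at hpe0
    exact hab hpe0.symm
  have hlen : x.length ≤ (f x).length := by
    rcases Nat.eq_zero_or_pos x.length with h0 | hpos
    · omega
    · obtain ⟨hfi, -⟩ := key (x.length - 1) (by omega)
      omega
  have htake : (f x).take x.length = x := by
    apply List.ext_getElem
    · rw [List.length_take]
      exact Nat.min_eq_left hlen
    · intro k h1 h2
      rw [List.getElem_take]
      obtain ⟨hp', he⟩ := key k h2
      exact he
  have := List.take_append_drop x.length (f x)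
  rw [htake] at this
  exact ⟨_, this.symm⟩
end

section
/- Assume Σ has at least 3 elements and f : Σ* → Σ* is RCP. Then exactly one of the following three conditions holds: (C₁) there exists a letter b ∈ Σ such that f(x) ∈ bΣ* for all x ∈ Σ*; (C₂) f(x) ∈ xΣ* for all x ∈ Σ*; (C₃) f is constant on Σ* with value ε. -/
set_option linter.unusedSectionVars false
set_option linter.unusedVariables false
set_option maxHeartbeats 1000000

namespace RCPAux

variable {S : Type*} [DecidableEq S]

def mhom (g : S → List S) (x : List S) : List S := (x.map g).flatten
theorem mhom_nil (g : S → List S) : mhom g [] = [] := rfl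
theorem mhom_cons (g : S → List S) (a : S) (x : List S) :
    mhom g (a :: x) = g a ++ mhom g x := by simp [mhom]
theorem mhom_append (g : S → List S) (x y : List S) :
    mhom g (x ++ y) = mhom g x ++ mhom g y := by simp [mhom]
theorem mhom_isHom (g : S → List S) : IsHom (mhom g) := ⟨rfl, fun x y => mhom_append g x y⟩
theorem mhom_map (m : S → S) (x : List S) : mhom (fun a => [m a]) x = x.map m := by
  induction x with
  | nil => rfl
  | cons a x ih => simp [mhom_cons, ih]

variable {f : List S → List S}

theorem ker (hf : IsRCP f) (g : S → List S) {x y : List S} (h : mhom g x = mhom g y) :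
    mhom g (f x) = mhom g (f y) := hf _ (mhom_isHom g) x y h

theorem kmap (hf : IsRCP f) (m : S → S) {x y : List S} (h : x.map m = y.map m) :
    (f x).map m = (f y).map m := by
  have := ker hf (fun a => [m a]) (x := x) (y := y) (by rw [mhom_map, mhom_map, h])
  rwa [mhom_map, mhom_map] at this

def subF (t : S) (u : List S) : S → List S := fun a => if a = t then u else [a]

theorem mhom_subF_self {t : S} {u : List S} {x : List S} (h : ∀ a ∈ x, a ≠ t) :
    mhom (subF t u) x = x := by
  induction x with
  | nil => rfl
  | cons a x ih =>
    rw [mhom_cons]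
    have ha : a ≠ t := h a (by simp)
    simp only [subF, if_neg ha]
    rw [ih fun a ha' => h a (by simp [ha'])]
    rfl

theorem mhom_subF_ne_nil {t : S} {u : List S} (hu : u ≠ []) {x : List S} (hx : x ≠ []) :
    mhom (subF t u) x ≠ [] := by
  cases x with
  | nil => exact absurd rfl hx
  | cons a x =>
    rw [mhom_cons]
    simp only [ne_eq, List.append_eq_nil_iff]
    intro ⟨h1, h2⟩
    unfold subF at h1
    split at h1
    · exact hu h1
    · simp at h1

theorem mhom_subF_singleton (t : S) (u : List S) : mhom (subF t u) [t] = u := by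
  simp [mhom, subF]

theorem map_const_eq (x : List S) (b : S) : x.map (fun _ => b) = List.replicate x.length b := by
  induction x with
  | nil => rfl
  | cons a x ih => simp [ih, List.replicate_succ]

theorem map_eq_replicate_of {m : S → S} {y : List S} {t : S} (h : ∀ a ∈ y, m a = t) :
    y.map m = List.replicate y.length t := by
  induction y with
  | nil => rfl
  | cons a y ih =>
    simp only [List.map_cons, List.length_cons, List.replicate_succ]
    rw [h a (by simp), ih fun a ha => h a (by simp [ha])]

theorem len_dep (hf : IsRCP f) (c : S) {x y : List S} (h : x.length = y.length) :
    (f x).length = (f y).length := by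
  have := kmap hf (fun _ => c) (x := x) (y := y)
    (by rw [map_const_eq, map_const_eq, h])
  calc (f x).length = ((f x).map (fun _ => c)).length := (List.length_map _).symm
    _ = ((f y).map (fun _ => c)).length := by rw [this]
    _ = (f y).length := List.length_map _

theorem pick_two (c₁ c₂ c₃ : S) (h12 : c₁ ≠ c₂) (h13 : c₁ ≠ c₃) (h23 : c₂ ≠ c₃)
    (t : S) : ∃ s c', s ≠ c' ∧ s ≠ t ∧ c' ≠ t := by
  by_cases h1 : c₁ = t
  · refine ⟨c₂, c₃, h23, ?_, ?_⟩
    · intro h; exact h12 (h1.trans h.symm)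
    · intro h; exact h13 (h1.trans h.symm)
  · by_cases h2 : c₂ = t
    · refine ⟨c₁, c₃, h13, h1, ?_⟩
      intro h; exact h23 (h2.trans h.symm)
    · exact ⟨c₁, c₂, h12, h1, h2⟩

section Branch2

variable (c₁ c₂ c₃ : S) (h12 : c₁ ≠ c₂) (h13 : c₁ ≠ c₃) (h23 : c₂ ≠ c₃)
  (hf : IsRCP f) (hb2 : ∀ r : S, ∃ w, f [r] = r :: w)

include h12 h13 h23 hf hb2

/-- all nonempty words have nonempty image -/
theorem len1 : ∀ x : List S, x ≠ [] → f x ≠ [] := by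
  intro x hx
  obtain ⟨n, hn⟩ : ∃ n, x.length = n + 1 :=
    ⟨x.length - 1, (Nat.succ_pred_eq_of_pos (List.length_pos_iff.mpr hx)).symm⟩
  have hufree : ∀ a ∈ List.replicate (n+1) c₁, a ≠ c₃ :=
    fun a ha => (List.eq_of_mem_replicate ha) ▸ h13
  obtain ⟨w3, hw3⟩ := hb2 c₃
  have e1 := ker hf (subF c₃ (List.replicate (n+1) c₁)) (x := [c₃]) (y := List.replicate (n+1) c₁)
    (by rw [mhom_subF_singleton, mhom_subF_self hufree])
  rw [hw3, mhom_cons, show subF c₃ (List.replicate (n+1) c₁) c₃ = List.replicate (n+1) c₁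
    from if_pos rfl] at e1
  have hfu : f (List.replicate (n+1) c₁) ≠ [] := by
    intro h
    rw [h, mhom_nil] at e1
    have := (List.append_eq_nil_iff.mp e1).1
    simp at this
  have hlen := len_dep hf c₁ (x := x) (y := List.replicate (n+1) c₁)
    (by rw [hn, List.length_replicate])
  intro h
  rw [h] at hlen
  exact hfu (List.length_eq_zero_iff.mp hlen.symm)

/-- head preservation for words avoiding a letter -/
theorem headLem : ∀ (e : S) (a : S) (u' : List S), (∀ g ∈ a :: u', g ≠ e) →
    ∃ w, f (a :: u') = a :: w := by
  intro e a u' hufree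
  have hune : (a :: u') ≠ [] := by simp
  obtain ⟨we, hwe⟩ := hb2 e
  have e2 := ker hf (subF e (a :: u')) (x := [e]) (y := a :: u')
    (by rw [mhom_subF_singleton, mhom_subF_self hufree])
  rw [hwe, mhom_cons, show subF e (a :: u') e = a :: u' from if_pos rfl] at e2
  cases hv : f (a :: u') with
  | nil => exact absurd hv (len1 c₁ c₂ c₃ h12 h13 h23 hf hb2 _ hune)
  | cons a₀ v =>
    rw [hv, mhom_cons] at e2
    by_cases ha₀ : a₀ = e
    · -- kill the leak
      exfalso
      obtain ⟨d, r', hdr, hde, hre⟩ := pick_two c₁ c₂ c₃ h12 h13 h23 e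
      have hu₀free_e : ∀ g ∈ List.replicate (u'.length + 1) r', g ≠ e :=
        fun g hg => (List.eq_of_mem_replicate hg) ▸ hre
      have hu₀free_d : ∀ g ∈ List.replicate (u'.length + 1) r', g ≠ d :=
        fun g hg => (List.eq_of_mem_replicate hg) ▸ (fun h => hdr h.symm)
      have hpat : (a :: u').map (fun g => if g = e then e else d)
          = (List.replicate (u'.length + 1) r').map (fun g => if g = e then e else d) := by
        rw [map_eq_replicate_of (t := d) (fun g hg => if_neg (hufree g hg)),
          map_eq_replicate_of (t := d) (fun g hg => if_neg (hu₀free_e g hg)),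
          List.length_replicate]
        rfl
      have e3 := kmap hf _ hpat
      rw [hv, ha₀] at e3
      cases hv₁ : f (List.replicate (u'.length + 1) r') with
      | nil =>
        exact (len1 c₁ c₂ c₃ h12 h13 h23 hf hb2 _ (by simp)) hv₁
      | cons a₁ v₁ =>
        rw [hv₁] at e3
        rw [List.map_cons, List.map_cons, List.cons.injEq] at e3
        have ha₁ : a₁ = e := by
          by_cases h : a₁ = e
          · exact h
          · exfalso
            have h' := e3.1
            rw [if_pos rfl, if_neg h] at h'
            exact hde h'.symm
        -- substitution d ↦ u₀ forces head r'
        obtain ⟨wd, hwd⟩ := hb2 d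
        have e4 := ker hf (subF d (List.replicate (u'.length + 1) r')) (x := [d])
          (y := List.replicate (u'.length + 1) r')
          (by rw [mhom_subF_singleton, mhom_subF_self hu₀free_d])
        rw [hwd, mhom_cons, show subF d (List.replicate (u'.length + 1) r') d
          = List.replicate (u'.length + 1) r' from if_pos rfl] at e4
        rw [hv₁, mhom_cons, ha₁, show subF d (List.replicate (u'.length + 1) r') e = [e]
          from if_neg (fun h => hde h.symm)] at e4
        rw [List.replicate_succ] at e4
        simp only [List.cons_append, List.singleton_append, List.cons.injEq] at e4
        exact hre e4.1
    · rw [show subF e (a :: u') a₀ = [a₀] from if_neg ha₀] at e2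
      simp only [List.cons_append, List.singleton_append, List.cons.injEq] at e2
      exact ⟨v, by rw [e2.1]⟩

/-- prefix property for words avoiding a letter -/
theorem Qlem : ∀ (c' : S) (u : List S), u ≠ [] → (∀ g ∈ u, g ≠ c') →
    ∃ w, f u = u ++ w := by
  intro c' u hune hufree
  obtain ⟨w', hw'⟩ := hb2 c'
  have hne : u.length ≠ 0 := fun h => hune (List.length_eq_zero_iff.mp h)
  have eq1 : mhom (subF c' u) (f u) = u ++ mhom (subF c' u) w' := by
    have := ker hf (subF c' u) (x := [c']) (y := u)
      (by rw [mhom_subF_singleton, mhom_subF_self hufree])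
    rw [hw', mhom_cons, show subF c' u c' = u from if_pos rfl] at this
    exact this.symm
  -- Step A : no c' among the first |u₁| letters of f u₁, for any c'-free u₁
  have stepA : ∀ j, ∀ u₁ : List S, u₁ ≠ [] → (∀ g ∈ u₁, g ≠ c') → j < u₁.length →
      ∀ (hj : j < (f u₁).length), (f u₁)[j] ≠ c' := by
    intro j
    induction j using Nat.strong_induction_on with
    | _ j IH =>
      intro u₁ hu₁ne hu₁free hjn hj hcontra
      rcases Nat.eq_zero_or_pos j with rfl | hjpos
      · -- head case
        cases u₁ with
        | nil => exact hu₁ne rfl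
        | cons a u₁' =>
          obtain ⟨w, hw⟩ := headLem c₁ c₂ c₃ h12 h13 h23 hf hb2 c' a u₁' hu₁free
          rw [List.getElem_of_eq hw hj, List.getElem_cons_zero] at hcontra
          exact (hu₁free a (by simp)) hcontra
      · -- 1 ≤ j < |u₁|
        obtain ⟨p, q, hpq, hpc, hqc⟩ := pick_two c₁ c₂ c₃ h12 h13 h23 c'
        obtain ⟨j', rfl⟩ : ∃ j', j = j' + 1 := ⟨j - 1, by omega⟩
        -- test word u₂ = p q^(n₁-1), n₁ = |u₁|
        have hu₂len : (p :: List.replicate (u₁.length - 1) q).length = u₁.length := by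
          simp only [List.length_cons, List.length_replicate]
          omega
        have hu₂free : ∀ g ∈ p :: List.replicate (u₁.length - 1) q, g ≠ c' := by
          intro g hg
          rcases List.mem_cons.mp hg with rfl | hg'
          · exact hpc
          · exact (List.eq_of_mem_replicate hg') ▸ hqc
        have hpat : u₁.map (fun g => if g = c' then c' else p)
            = (p :: List.replicate (u₁.length - 1) q).map (fun g => if g = c' then c' else p) := by
          rw [map_eq_replicate_of (t := p) (fun g hg => if_neg (hu₁free g hg)),
            map_eq_replicate_of (t := p) (fun g hg => if_neg (hu₂free g hg)), hu₂len]
        have e3 := kmap hf _ hpat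
        have hlen12 : (f u₁).length = (f (p :: List.replicate (u₁.length - 1) q)).length := by
          have := congrArg List.length e3
          simpa using this
        have hj2 : (j' + 1) < (f (p :: List.replicate (u₁.length - 1) q)).length := hlen12 ▸ hj
        have htrans : (f (p :: List.replicate (u₁.length - 1) q))[(j' + 1)]'hj2 = c' := by
          have h1 := List.getElem_of_eq e3 (i := (j' + 1)) (by simpa using hj)
          rw [List.getElem_map, List.getElem_map, hcontra, if_pos rfl] at h1
          by_contra hne'
          rw [if_neg hne'] at h1
          exact hpc h1.symm
        have hprev : ∀ i (hi : i < (j' + 1)),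
            (f (p :: List.replicate (u₁.length - 1) q))[i]'(by omega) ≠ c' :=
          fun i hi => IH i hi _ (by simp) hu₂free (by omega) (by omega)
        have eq1' : mhom (subF c' (p :: List.replicate (u₁.length - 1) q))
              (f (p :: List.replicate (u₁.length - 1) q))
            = (p :: List.replicate (u₁.length - 1) q)
              ++ mhom (subF c' (p :: List.replicate (u₁.length - 1) q)) w' := by
          have := ker hf (subF c' (p :: List.replicate (u₁.length - 1) q)) (x := [c'])
            (y := p :: List.replicate (u₁.length - 1) q)
            (by rw [mhom_subF_singleton, mhom_subF_self hu₂free])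
          rw [hw', mhom_cons, show subF c' (p :: List.replicate (u₁.length - 1) q) c'
            = p :: List.replicate (u₁.length - 1) q from if_pos rfl] at this
          exact this.symm
        have hdecomp : f (p :: List.replicate (u₁.length - 1) q)
            = (f (p :: List.replicate (u₁.length - 1) q)).take (j' + 1)
              ++ c' :: (f (p :: List.replicate (u₁.length - 1) q)).drop ((j' + 1)+1) := by
          rw [← htrans, ← List.drop_eq_getElem_cons hj2, List.take_append_drop]
        have hTfree : ∀ g ∈ (f (p :: List.replicate (u₁.length - 1) q)).take (j' + 1), g ≠ c' := by
          intro g hg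
          obtain ⟨i, hi, hgi⟩ := List.mem_iff_getElem.mp hg
          have hij : i < (j' + 1) := by
            rw [List.length_take] at hi; omega
          rw [List.getElem_take] at hgi
          exact hgi ▸ hprev i hij
        have hTlen : ((f (p :: List.replicate (u₁.length - 1) q)).take (j' + 1)).length = (j' + 1) := by
          rw [List.length_take]; omega
        have expand : mhom (subF c' (p :: List.replicate (u₁.length - 1) q))
              (f (p :: List.replicate (u₁.length - 1) q))
            = (f (p :: List.replicate (u₁.length - 1) q)).take (j' + 1)
              ++ ((p :: List.replicate (u₁.length - 1) q)
              ++ mhom (subF c' (p :: List.replicate (u₁.length - 1) q))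
                ((f (p :: List.replicate (u₁.length - 1) q)).drop ((j' + 1)+1))) := by
          conv_lhs => rw [hdecomp]
          rw [mhom_append, mhom_subF_self hTfree, mhom_cons, show subF c'
            (p :: List.replicate (u₁.length - 1) q) c' = p :: List.replicate (u₁.length - 1) q
            from if_pos rfl]
        have key : (p :: List.replicate (u₁.length - 1) q)
              ++ mhom (subF c' (p :: List.replicate (u₁.length - 1) q)) w'
            = (f (p :: List.replicate (u₁.length - 1) q)).take (j' + 1)
              ++ ((p :: List.replicate (u₁.length - 1) q)
              ++ mhom (subF c' (p :: List.replicate (u₁.length - 1) q))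
                ((f (p :: List.replicate (u₁.length - 1) q)).drop ((j' + 1)+1))) := by
          rw [← expand, eq1']
        -- drop (j' + 1) of both sides and compare heads
        have hjle : (j' + 1) ≤ (p :: List.replicate (u₁.length - 1) q).length := by
          rw [hu₂len]; omega
        have keyd := congrArg (List.drop (j' + 1)) key
        rw [List.drop_append_of_le_length hjle, List.drop_left' hTlen] at keyd
        -- LHS head is q, RHS head is p
        obtain ⟨k, hk⟩ : ∃ k, u₁.length - 1 - j' = k + 1 := ⟨u₁.length - 2 - j', by omega⟩
        have hdropu₂ : (p :: List.replicate (u₁.length - 1) q).drop (j' + 1)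
            = q :: List.replicate k q := by
          rw [List.drop_succ_cons, List.drop_replicate, hk, List.replicate_succ]
        rw [hdropu₂] at keyd
        simp only [List.cons_append, List.cons.injEq] at keyd
        exact hpq keyd.1.symm
  -- Step B : length ≥ n
  have hlenge : u.length ≤ (f u).length := by
    by_contra hlt
    push_neg at hlt
    have hfree : ∀ g ∈ f u, g ≠ c' := by
      intro g hg
      obtain ⟨i, hi, hgi⟩ := List.mem_iff_getElem.mp hg
      exact hgi ▸ stepA i u hune hufree (by omega) hi
    have := eq1
    rw [mhom_subF_self hfree] at this
    have hlen := congrArg List.length this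
    rw [List.length_append] at hlen
    omega
  have hTfree : ∀ g ∈ (f u).take u.length, g ≠ c' := by
    intro g hg
    obtain ⟨i, hi, hgi⟩ := List.mem_iff_getElem.mp hg
    have hin : i < u.length := by
      rw [List.length_take] at hi; omega
    rw [List.getElem_take] at hgi
    exact hgi ▸ stepA i u hune hufree hin (by omega)
  have hdecomp : f u = (f u).take u.length ++ (f u).drop u.length :=
    (List.take_append_drop u.length (f u)).symm
  have expand : mhom (subF c' u) (f u)
      = (f u).take u.length ++ mhom (subF c' u) ((f u).drop u.length) := by
    conv_lhs => rw [hdecomp]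
    rw [mhom_append, mhom_subF_self hTfree]
  rw [expand] at eq1
  have hTlen : ((f u).take u.length).length = u.length := by
    rw [List.length_take]; omega
  obtain ⟨hTeq, -⟩ := List.append_inj eq1 hTlen
  exact ⟨(f u).drop u.length, by conv_lhs => rw [hdecomp, hTeq]⟩

/-- branch 2 conclusion -/
theorem branch2 : ∀ x : List S, ∃ w, f x = x ++ w := by
  intro x
  cases hx : x with
  | nil => exact ⟨f [], (List.nil_append _).symm⟩
  | cons a x' =>
    have hnpos : 0 < (a :: x').length := by simp
    obtain ⟨w₁, hw₁⟩ := Qlem c₁ c₂ c₃ h12 h13 h23 hf hb2 c₃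
      (List.replicate (a :: x').length c₁)
      (by intro h; have := congrArg List.length h; simp at this)
      (fun g hg => (List.eq_of_mem_replicate hg) ▸ h13)
    have hlen1 : (f (a :: x')).length = (f (List.replicate (a :: x').length c₁)).length :=
      len_dep hf c₁ (by simp)
    have hnle : (a :: x').length ≤ (f (a :: x')).length := by
      rw [hlen1, hw₁, List.length_append, List.length_replicate]
      omega
    have htake : (f (a :: x')).take (a :: x').length = a :: x' := by
      apply List.ext_getElem
      · rw [List.length_take]; omega
      · intro i h₁ h₂
        have hin : i < (a :: x').length := h₂
        rw [List.getElem_take]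
        obtain ⟨s, c'', hsc, hst, hct⟩ := pick_two c₁ c₂ c₃ h12 h13 h23 ((a :: x')[i]'h₂)
        have hulen : ((a :: x').map (fun g => if g = (a :: x')[i]'h₂ then (a :: x')[i]'h₂ else s)).length
            = (a :: x').length := List.length_map _
        have hune : (a :: x').map (fun g => if g = (a :: x')[i]'h₂ then (a :: x')[i]'h₂ else s) ≠ [] := by
          simp
        have hufree : ∀ g ∈ (a :: x').map (fun g => if g = (a :: x')[i]'h₂ then (a :: x')[i]'h₂ else s),
            g ≠ c'' := by
          intro g hg
          obtain ⟨g', _, rfl⟩ := List.mem_map.mp hg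
          by_cases h : g' = (a :: x')[i]'h₂
          · rw [if_pos h]
            exact fun hh => hct hh.symm
          · rw [if_neg h]
            exact hsc
        have hidem : (a :: x').map (fun g => if g = (a :: x')[i]'h₂ then (a :: x')[i]'h₂ else s)
            = ((a :: x').map (fun g => if g = (a :: x')[i]'h₂ then (a :: x')[i]'h₂ else s)).map
              (fun g => if g = (a :: x')[i]'h₂ then (a :: x')[i]'h₂ else s) := by
          rw [List.map_map]
          apply List.map_congr_left
          intro g _
          simp only [Function.comp_apply]
          by_cases h : g = (a :: x')[i]'h₂
          · simp [if_pos h]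
          · rw [if_neg h, if_neg hst]
        have e := kmap hf _ hidem
        obtain ⟨w, hw⟩ := Qlem c₁ c₂ c₃ h12 h13 h23 hf hb2 c'' _ hune hufree
        have hui : ((a :: x').map (fun g => if g = (a :: x')[i]'h₂ then (a :: x')[i]'h₂ else s))[i]'(by
            rw [hulen]; exact hin) = (a :: x')[i]'h₂ := by
          rw [List.getElem_map, if_pos rfl]
        have hilt : i < (f ((a :: x').map (fun g => if g = (a :: x')[i]'h₂ then (a :: x')[i]'h₂ else s))).length := by
          rw [hw, List.length_append, hulen]
          omega
        have hfui : (f ((a :: x').map (fun g => if g = (a :: x')[i]'h₂ then (a :: x')[i]'h₂ else s)))[i]'hilt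
            = (a :: x')[i]'h₂ := by
          rw [List.getElem_of_eq hw hilt, List.getElem_append_left (by rw [hulen]; exact hin), hui]
        have hmapi := List.getElem_of_eq e (i := i) (by simp; omega)
        rw [List.getElem_map, List.getElem_map, hfui, if_pos rfl] at hmapi
        by_contra hne'
        rw [if_neg hne'] at hmapi
        exact hst hmapi
    exact ⟨(f (a :: x')).drop (a :: x').length, by
      conv_lhs => rw [← List.take_append_drop (a :: x').length (f (a :: x')), htake]⟩

end Branch2

/-- In case some value is nonempty, all singleton values are nonempty. -/
theorem sing_ne (c₁ c₂ c₃ : S) (h12 : c₁ ≠ c₂) (h13 : c₁ ≠ c₃) (h23 : c₂ ≠ c₃)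
    (hf : IsRCP f) (hne : ∃ x, f x ≠ []) : ∀ r : S, f [r] ≠ [] := by
  intro r hr
  obtain ⟨x₀, hx₀⟩ := hne
  apply hx₀
  -- all singletons are empty
  have hsing : ∀ r' : S, f [r'] = [] := by
    intro r'
    have h := kmap hf (fun _ => r) (x := [r']) (y := [r]) (by simp)
    rw [hr] at h
    simpa using h
  -- f [] = []
  have hnil : f [] = [] := by
    have h1 := ker hf (subF c₁ []) (x := [c₁]) (y := [])
      (by rw [mhom_subF_singleton, mhom_nil])
    have h2 := ker hf (subF c₂ []) (x := [c₂]) (y := [])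
      (by rw [mhom_subF_singleton, mhom_nil])
    rw [hsing c₁, mhom_nil] at h1
    rw [hsing c₂, mhom_nil] at h2
    cases hv : f [] with
    | nil => rfl
    | cons a v =>
      exfalso
      rw [hv, mhom_cons] at h1 h2
      have ha1 : a = c₁ := by
        by_contra hne'
        rw [show subF c₁ [] a = [a] from if_neg hne'] at h1
        simp at h1
      have ha2 : a = c₂ := by
        by_contra hne'
        rw [show subF c₂ [] a = [a] from if_neg hne'] at h2
        simp at h2
      exact h12 (ha1 ▸ ha2 ▸ rfl)
  -- f (replicate (n+1) c₁) = []
  have hrep : ∀ n : ℕ, f (List.replicate (n+1) c₁) = [] := by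
    intro n
    have hfree : ∀ a ∈ List.replicate (n+1) c₁, a ≠ c₃ := by
      intro a ha
      rw [List.eq_of_mem_replicate ha]
      exact h13
    have h := ker hf (subF c₃ (List.replicate (n+1) c₁)) (x := [c₃])
      (y := List.replicate (n+1) c₁)
      (by rw [mhom_subF_singleton, mhom_subF_self hfree])
    rw [hsing c₃, mhom_nil] at h
    by_contra hne'
    exact mhom_subF_ne_nil (by simp) hne' h.symm
  -- conclude
  cases hx : x₀ with
  | nil => exact hnil
  | cons a x' =>
    have hlen := len_dep hf c₁ (x := a :: x') (y := List.replicate (x'.length + 1) c₁)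
      (by simp)
    rw [hrep x'.length] at hlen
    exact List.length_eq_zero_iff.mp hlen

theorem pick_third (c₁ c₂ c₃ : S) (h12 : c₁ ≠ c₂) (h13 : c₁ ≠ c₃) (h23 : c₂ ≠ c₃)
    (t s : S) : ∃ r', r' ≠ t ∧ r' ≠ s := by
  by_cases hc1 : c₁ = t ∨ c₁ = s
  · by_cases hc2 : c₂ = t ∨ c₂ = s
    · refine ⟨c₃, ?_, ?_⟩
      · rintro rfl
        rcases hc1 with h | h
        · exact h13 h
        · rcases hc2 with h' | h'
          · exact h23 h'
          · exact h12 (h.trans h'.symm)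
      · rintro rfl
        rcases hc1 with h | h
        · rcases hc2 with h' | h'
          · exact h12 (h.trans h'.symm)
          · exact h23 h'
        · exact h13 h
    · push_neg at hc2
      exact ⟨c₂, hc2.1, hc2.2⟩
  · push_neg at hc1
    exact ⟨c₁, hc1.1, hc1.2⟩

theorem dich (c₁ c₂ c₃ : S) (h12 : c₁ ≠ c₂) (h13 : c₁ ≠ c₃) (h23 : c₂ ≠ c₃)
    (hf : IsRCP f) (hne1 : ∀ r : S, f [r] ≠ []) :
    (∀ r : S, ∃ w, f [r] = r :: w) ∨ ∃ b : S, ∀ r : S, ∃ w, f [r] = b :: w := by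
  set h : S → S := fun r => (f [r]).head (hne1 r) with hh
  have hcons : ∀ r : S, f [r] = h r :: (f [r]).tail :=
    fun r => (List.cons_head_tail (hne1 r)).symm
  have tri : ∀ t s : S, t ≠ s →
      h t = h s ∨ (h t = t ∧ h s = s) ∨ (h t = s ∧ h s = t) := by
    intro t s hts
    have hk := kmap hf (fun a => if a = t then s else a) (x := [t]) (y := [s])
      (by simp [Ne.symm hts])
    rw [hcons t, hcons s] at hk
    simp only [List.map_cons, List.cons.injEq] at hk
    have heq : (if h t = t then s else h t) = (if h s = t then s else h s) := hk.1
    by_cases h1 : h t = t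
    · by_cases h2 : h s = t
      · left; rw [h1, h2]
      · rw [if_pos h1, if_neg h2] at heq
        right; left; exact ⟨h1, heq.symm⟩
    · by_cases h2 : h s = t
      · rw [if_neg h1, if_pos h2] at heq
        right; right; exact ⟨heq, h2⟩
      · rw [if_neg h1, if_neg h2] at heq
        left; exact heq
  by_cases hA : ∀ r : S, h r = r
  · left; intro r; exact ⟨(f [r]).tail, by conv_lhs => rw [hcons r]; rw [hA r]⟩
  · right
    push_neg at hA
    obtain ⟨t₀, ht₀⟩ := hA
    refine ⟨h t₀, fun r => ?_⟩
    suffices hr : h r = h t₀ by exact ⟨(f [r]).tail, by conv_lhs => rw [hcons r]; rw [hr]⟩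
    by_cases hrt : r = t₀
    · rw [hrt]
    · rcases tri t₀ r (fun e => hrt e.symm) with heq | ⟨h1, _⟩ | ⟨h1, h2⟩
      · exact heq.symm
      · exact absurd h1 ht₀
      · -- cross case: h t₀ = r, h r = t₀ ; eliminate with third letter
        exfalso
        obtain ⟨r', hr1, hr2⟩ := pick_third c₁ c₂ c₃ h12 h13 h23 t₀ r
        have hrr' : h r' = r := by
          rcases tri t₀ r' (Ne.symm hr1) with heq | ⟨h1', _⟩ | ⟨h1', _⟩
          · rw [← heq, h1]
          · exact absurd h1' ht₀
          · exact (hr2 (h1.symm.trans h1').symm).elim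
        rcases tri r r' (Ne.symm hr2) with heq | ⟨h1', _⟩ | ⟨h1', _⟩
        · exact hrt (h2.symm.trans (heq.trans hrr')).symm
        · exact hrt (h1'.symm.trans h2)
        · exact hr1 (h1'.symm.trans h2)

theorem erase_replicate (t : S) (n : ℕ) :
    mhom (subF t []) (List.replicate n t) = [] := by
  induction n with
  | zero => rfl
  | succ n ih => rw [List.replicate_succ, mhom_cons, ih]; simp [subF]

theorem cons_of_erase {r b : S} (hbr : b ≠ r) {v X : List S}
    (h : mhom (subF r []) v = b :: X) : ∃ a w, v = a :: w ∧ (a = r ∨ a = b) := by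
  cases v with
  | nil => exact absurd h.symm (by simp [mhom_nil])
  | cons a w =>
    refine ⟨a, w, rfl, ?_⟩
    by_cases har : a = r
    · exact Or.inl har
    · right
      rw [mhom_cons] at h
      rw [show subF r [] a = [a] from if_neg har] at h
      exact (List.cons.injEq _ _ _ _ ▸ h).1.symm ▸ rfl

theorem branch1 (t c' b : S) (htc : t ≠ c') (hbt : b ≠ t) (hbc : b ≠ c')
    (hf : IsRCP f) (hb : ∀ r : S, ∃ w, f [r] = b :: w) :
    ∀ x : List S, ∃ w, f x = b :: w := by
  obtain ⟨wt, hwt⟩ := hb t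
  obtain ⟨wc, hwc⟩ := hb c'
  -- B1 : f [] starts with b
  have B1 : ∃ w, f [] = b :: w := by
    have e1 := ker hf (subF t []) (x := [t]) (y := [])
      (by rw [mhom_subF_singleton, mhom_nil])
    have e2 := ker hf (subF c' []) (x := [c']) (y := [])
      (by rw [mhom_subF_singleton, mhom_nil])
    rw [hwt, mhom_cons, show subF t [] b = [b] from if_neg hbt] at e1
    rw [hwc, mhom_cons, show subF c' [] b = [b] from if_neg hbc] at e2
    obtain ⟨a, w, hv, ha⟩ := cons_of_erase hbt e1.symm
    rcases ha with rfl | rfl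
    · -- a = t ; use e2
      obtain ⟨a', w', hv', ha'⟩ := cons_of_erase hbc e2.symm
      rw [hv] at hv'
      have : a = a' := (List.cons.injEq _ _ _ _ ▸ hv').1
      rcases ha' with rfl | rfl
      · exact absurd this htc
      · exact ⟨w, hv.trans (by rw [this])⟩
    · exact ⟨w, hv⟩
  obtain ⟨w0, hw0⟩ := B1
  -- B2(i) : f (t^(n+1)) starts with b
  have B2i : ∀ n : ℕ, ∃ w, f (List.replicate (n+1) t) = b :: w := by
    intro n
    set u := List.replicate (n+1) t with hu
    have hufree : ∀ a ∈ u, a ≠ c' := fun a ha => (List.eq_of_mem_replicate ha) ▸ htc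
    have e1 := ker hf (subF t []) (x := u) (y := [])
      (by rw [mhom_nil, hu, erase_replicate])
    rw [hw0, mhom_cons, show subF t [] b = [b] from if_neg hbt] at e1
    obtain ⟨a, v, hv, ha⟩ := cons_of_erase hbt e1
    rcases ha with rfl | rfl
    · -- head is t : contradict via substitution c' ↦ u
      exfalso
      have e2 := ker hf (subF c' u) (x := [c']) (y := u)
        (by rw [mhom_subF_singleton, mhom_subF_self hufree])
      rw [hwc, mhom_cons, show subF c' u b = [b] from if_neg hbc] at e2
      rw [hv, mhom_cons, show subF c' u a = [a] from if_neg (fun h => htc h)] at e2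
      exact hbt (List.cons.injEq _ _ _ _ ▸ e2).1
    · exact ⟨v, hv⟩
  -- B2(ii) : f y starts with b for nonempty y over {b, t}
  have B2ii : ∀ y : List S, y ≠ [] → (∀ a ∈ y, a = b ∨ a = t) → ∃ w, f y = b :: w := by
    intro y hyne hyab
    have hyfree : ∀ a ∈ y, a ≠ c' := by
      intro a ha
      rcases hyab a ha with rfl | rfl
      · exact hbc
      · exact htc
    obtain ⟨n, hn⟩ : ∃ n, y.length = n + 1 :=
      ⟨y.length - 1, (Nat.succ_pred_eq_of_pos (List.length_pos_iff.mpr hyne)).symm⟩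
    set m : S → S := fun a => if a = c' then c' else t with hm
    have hpat : y.map m = (List.replicate (n+1) t).map m := by
      rw [map_eq_replicate_of (t := t) (fun a ha => if_neg (hyfree a ha)), hn,
        map_eq_replicate_of (t := t) (fun a ha =>
          if_neg ((List.eq_of_mem_replicate ha) ▸ htc)), List.length_replicate]
    have e1 := kmap hf m hpat
    obtain ⟨z, hz⟩ := B2i n
    rw [hz] at e1
    -- f y is nonempty and its head is not c'
    cases hv : f y with
    | nil => rw [hv] at e1; simp at e1
    | cons a v =>
      rw [hv] at e1
      simp only [List.map_cons, List.cons.injEq] at e1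
      have hac : a ≠ c' := by
        intro h
        rw [hm] at e1
        simp only [if_pos h, if_neg hbc] at e1
        exact htc (e1.1.symm)
      -- substitution c' ↦ y
      have e2 := ker hf (subF c' y) (x := [c']) (y := y)
        (by rw [mhom_subF_singleton, mhom_subF_self hyfree])
      rw [hwc, mhom_cons, show subF c' y b = [b] from if_neg hbc] at e2
      rw [hv, mhom_cons, show subF c' y a = [a] from if_neg hac] at e2
      simp only [List.singleton_append, List.cons.injEq] at e2
      exact ⟨v, by rw [e2.1]⟩
  -- B3 : general x
  intro x
  set m₀ : S → S := fun a => if a = b then b else t with hm₀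
  set y := x.map m₀ with hy
  have hidem : ∀ a, m₀ (m₀ a) = m₀ a := by
    intro a
    by_cases h : a = b
    · simp [hm₀, h]
    · simp only [hm₀, if_neg h]
      rw [if_neg hbt.symm]
  have hkxy : x.map m₀ = y.map m₀ := by
    rw [hy, List.map_map]
    exact (List.map_congr_left fun a _ => (hidem a)).symm
  have e1 := kmap hf m₀ hkxy
  cases hyc : y with
  | nil =>
    have : x = [] := by
      rw [hy] at hyc; exact List.map_eq_nil_iff.mp hyc
    exact ⟨w0, by rw [this, hw0]⟩
  | cons a0 y0 =>
    have hyne : y ≠ [] := by rw [hyc]; simp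
    have hyab : ∀ a ∈ y, a = b ∨ a = t := by
      intro a ha
      rw [hy] at ha
      obtain ⟨a', _, rfl⟩ := List.mem_map.mp ha
      by_cases h : a' = b
      · left; simp [hm₀, h]
      · right; simp [hm₀, if_neg h]
    obtain ⟨z, hz⟩ := B2ii y hyne hyab
    rw [hz] at e1
    cases hv : f x with
    | nil => rw [hv] at e1; simp at e1
    | cons a v =>
      rw [hv] at e1
      simp only [List.map_cons, List.cons.injEq] at e1
      have : m₀ a = b := by
        rw [e1.1, hm₀]; simp [if_pos rfl]
      have hab : a = b := by
        by_contra h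
        rw [hm₀] at this
        simp only [if_neg h] at this
        exact hbt this.symm
      exact ⟨v, by rw [hab]⟩

end RCPAux

/-- If `S` has at least 3 elements and `f` is RCP, then exactly one of the following holds:
(C₁) there is a letter `b` such that every `f x` starts with `b`;
(C₂) every `x` is a prefix of `f x`;
(C₃) `f` is constantly `ε`. -/
theorem stmt_11 {S : Type*} (c₁ c₂ c₃ : S) (h12 : c₁ ≠ c₂) (h13 : c₁ ≠ c₃) (h23 : c₂ ≠ c₃)
    (f : List S → List S) (hf : IsRCP f) :
    ((∃ b : S, ∀ x : List S, ∃ w : List S, f x = b :: w) ∧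
      ¬ (∀ x : List S, ∃ w : List S, f x = x ++ w) ∧ ¬ (∀ x : List S, f x = [])) ∨
    (¬ (∃ b : S, ∀ x : List S, ∃ w : List S, f x = b :: w) ∧
      (∀ x : List S, ∃ w : List S, f x = x ++ w) ∧ ¬ (∀ x : List S, f x = [])) ∨
    (¬ (∃ b : S, ∀ x : List S, ∃ w : List S, f x = b :: w) ∧
      ¬ (∀ x : List S, ∃ w : List S, f x = x ++ w) ∧ (∀ x : List S, f x = [])) := by
  classical
  by_cases hC3 : ∀ x : List S, f x = []
  · right; right
    refine ⟨?_, ?_, hC3⟩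
    · rintro ⟨b, hb⟩
      obtain ⟨w, hw⟩ := hb []
      rw [hC3 []] at hw
      exact absurd hw (by simp)
    · intro h
      obtain ⟨w, hw⟩ := h [c₁]
      rw [hC3 [c₁]] at hw
      exact absurd hw (by simp)
  · push_neg at hC3
    have hne1 := RCPAux.sing_ne c₁ c₂ c₃ h12 h13 h23 hf hC3
    rcases RCPAux.dich c₁ c₂ c₃ h12 h13 h23 hf hne1 with hb2 | ⟨b, hb⟩
    · -- case C₂
      have hC2 := RCPAux.branch2 c₁ c₂ c₃ h12 h13 h23 hf hb2
      right; left
      refine ⟨?_, hC2, ?_⟩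
      · rintro ⟨b, hb⟩
        obtain ⟨w1, hw1⟩ := hb [c₁]
        obtain ⟨w1', hw1'⟩ := hb2 c₁
        have e1 : b = c₁ := by
          have := hw1.symm.trans hw1'
          exact (List.cons.injEq _ _ _ _ ▸ this).1
        obtain ⟨w2, hw2⟩ := hb [c₂]
        obtain ⟨w2', hw2'⟩ := hb2 c₂
        have e2 : b = c₂ := by
          have := hw2.symm.trans hw2'
          exact (List.cons.injEq _ _ _ _ ▸ this).1
        exact h12 (e1 ▸ e2)
      · intro h
        exact hne1 c₁ (h [c₁])
    · -- case C₁
      obtain ⟨t, c', htc, hbt', hct'⟩ := RCPAux.pick_two c₁ c₂ c₃ h12 h13 h23 b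
      have hC1 := RCPAux.branch1 t c' b htc (Ne.symm hbt') (Ne.symm hct') hf hb
      left
      refine ⟨⟨b, hC1⟩, ?_, ?_⟩
      · intro h
        obtain ⟨w1, hw1⟩ := h [c₁]
        obtain ⟨w1', hw1'⟩ := hC1 [c₁]
        have e1 : c₁ = b := by
          have := hw1.symm.trans hw1'
          rw [List.singleton_append] at this
          exact (List.cons.injEq _ _ _ _ ▸ this).1
        obtain ⟨w2, hw2⟩ := h [c₂]
        obtain ⟨w2', hw2'⟩ := hC1 [c₂]
        have e2 : c₂ = b := by
          have := hw2.symm.trans hw2'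
          rw [List.singleton_append] at this
          exact (List.cons.injEq _ _ _ _ ▸ this).1
        exact h12 (e1.trans e2.symm)
      · intro h
        obtain ⟨w, hw⟩ := hC1 []
        rw [h []] at hw
        exact absurd hw (by simp)
end

section
/- Assume Σ has at least 3 elements, f : Σ* → Σ* is RCP, and g : Σ* → Σ* is a function such that either there is a fixed letter a ∈ Σ with f(x) = a·g(x) for all x ∈ Σ*, or f(x) = x·g(x) for all x ∈ Σ*. Then g is RCP. -/
/-- If `S` has at least 3 elements, `f` is RCP, and either `f x = a · g x` for a fixed
letter `a` and all `x`, or `f x = x · g x` for all `x`, then `g` is RCP. -/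
theorem stmt_12 {S : Type*} (c₁ c₂ c₃ : S) (h12 : c₁ ≠ c₂) (h13 : c₁ ≠ c₃) (h23 : c₂ ≠ c₃)
    (f g : List S → List S) (hf : IsRCP f)
    (h : (∃ a : S, ∀ x : List S, f x = a :: g x) ∨ (∀ x : List S, f x = x ++ g x)) :
    IsRCP g := by
  intro φ hφ x y hxy
  have hfxy := hf φ hφ x y hxy
  rcases h with ⟨a, ha⟩ | hx
  · rw [ha x, ha y] at hfxy
    have h1 : φ ([a] ++ g x) = φ ([a] ++ g y) := by simpa using hfxy
    rw [hφ.2, hφ.2] at h1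
    exact List.append_cancel_left h1
  · rw [hx x, hx y, hφ.2, hφ.2, hxy] at hfxy
    exact List.append_cancel_left hfxy
end

section
/- Assume Σ contains at least two letters and f : (Σ*)ᵏ → Σ* is RCP. Then there exist natural numbers p_{f,1}, …, p_{f,k}, e_f such that for all x₁, …, x_k ∈ Σ*: |f(x₁, …, x_k)| = p_{f,1}|x₁| + ⋯ + p_{f,k}|x_k| + e_f, and for every letter a ∈ Σ: |f(x₁, …, x_k)|_a = p_{f,1}|x₁|_a + ⋯ + p_{f,k}|x_k|_a + |f(ε, …, ε)|_a; moreover e_f = |f(ε, …, ε)| and, for any letter a ∈ Σ, p_{f,i} = |f(ε, …, ε, a, ε, …, ε)| − |f(ε, …, ε)| where a is in the i-th position. -/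
/-- A `k`-ary function is congruence preserving. -/
def IsCPK {S : Type*} (k : ℕ) (f : (Fin k → List S) → List S) : Prop :=
  ∀ r : List S → List S → Prop, IsCong r → ∀ x y : Fin k → List S,
    (∀ i, r (x i) (y i)) → r (f x) (f y)

/-- A `k`-ary function preserves all restricted congruences
(kernels of endomorphisms of the free monoid). -/
def IsRCPK {S : Type*} (k : ℕ) (f : (Fin k → List S) → List S) : Prop :=
  ∀ φ : List S → List S, IsHom φ → ∀ x y : Fin k → List S,
    (∀ i, φ (x i) = φ (y i)) → φ (f x) = φ (f y)

/-- `f (x₁, …, x_k) = w₀ x_{i₁}^{p₁} w₁ x_{i₂}^{p₂} w₂ ⋯ x_{iₙ}^{pₙ} wₙ`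
for fixed words `w₀, …, wₙ`, indices `i₁, …, iₙ` and exponents `p₁, …, pₙ`. -/
def PolyFormK {S : Type*} (k : ℕ) (f : (Fin k → List S) → List S) : Prop :=
  ∃ (n : ℕ) (w : ℕ → List S) (idx : ℕ → Fin k) (p : ℕ → ℕ), ∀ x : Fin k → List S,
    f x = w 0 ++ List.flatten ((List.range n).map fun j =>
      List.flatten (List.replicate (p (j + 1)) (x (idx (j + 1)))) ++ w (j + 1))


set_option linter.unusedSectionVars false
section AuxStmt14

variable {S : Type*} [DecidableEq S]

private def nabCnt (a b : S) (u : List S) : ℕ :=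
  u.countP (fun c => !(c == a || c == b))

private lemma flatMap_len_aux (a : S) (u : List S) :
    u.flatMap (fun _ => [a]) = List.replicate u.length a := by
  induction u with
  | nil => rfl
  | cons c t ih => simp [ih, List.replicate_succ]

private lemma flatMap_cnt_aux (a : S) (u : List S) :
    u.flatMap (fun c => if c = a then [a] else []) = List.replicate (u.count a) a := by
  induction u with
  | nil => rfl
  | cons c t ih =>
    by_cases h : c = a <;>
      simp [h, ih, List.replicate_succ, List.count_cons]

private lemma flatMap_nab_aux (a b : S) (u : List S) :
    u.flatMap (fun c => if c = a ∨ c = b then [] else [a])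
      = List.replicate (nabCnt a b u) a := by
  induction u with
  | nil => rfl
  | cons c t ih =>
    by_cases h1 : c = a
    · simp [h1, ih, nabCnt, List.countP_cons]
    · by_cases h2 : c = b <;>
        simp [h1, h2, ih, nabCnt, List.countP_cons, List.replicate_succ]

private lemma len_decomp_aux {a b : S} (hab : a ≠ b) (u : List S) :
    u.length = u.count a + u.count b + nabCnt a b u := by
  induction u with
  | nil => rfl
  | cons c t ih =>
    have hba : ¬ b = a := fun h => hab h.symm
    by_cases h1 : c = a <;> by_cases h2 : c = b
    · exact absurd (h1.symm.trans h2) hab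
    · subst h1
      simp [List.count_cons, nabCnt, List.countP_cons, hab, hba] at *
      omega
    · subst h2
      simp [List.count_cons, nabCnt, List.countP_cons, hab, hba] at *
      omega
    · simp [List.count_cons, nabCnt, List.countP_cons, h1, h2] at *
      omega

variable {k : ℕ} {f : (Fin k → List S) → List S}

private lemma len_inv_aux (hf : IsRCPK k f) (a : S) {x y : Fin k → List S}
    (h : ∀ i, (x i).length = (y i).length) : (f x).length = (f y).length := by
  have key := hf (fun u => u.flatMap (fun _ => [a]))
    ⟨rfl, fun u v => List.flatMap_append⟩ x y
    (fun i => by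
      show (x i).flatMap (fun _ => [a]) = (y i).flatMap (fun _ => [a])
      rw [flatMap_len_aux, flatMap_len_aux, h i])
  have := congrArg List.length key
  simpa [flatMap_len_aux] using this

private lemma cnt_inv_aux (hf : IsRCPK k f) (a : S) {x y : Fin k → List S}
    (h : ∀ i, (x i).count a = (y i).count a) : (f x).count a = (f y).count a := by
  have key := hf (fun u => u.flatMap (fun c => if c = a then [a] else []))
    ⟨rfl, fun u v => List.flatMap_append⟩ x y
    (fun i => by
      show (x i).flatMap (fun c => if c = a then [a] else []) = (y i).flatMap (fun c => if c = a then [a] else [])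
      rw [flatMap_cnt_aux, flatMap_cnt_aux, h i])
  have := congrArg List.length key
  simpa [flatMap_cnt_aux] using this

private lemma nab_inv_aux (hf : IsRCPK k f) (a b : S) {x y : Fin k → List S}
    (h : ∀ i, nabCnt a b (x i) = nabCnt a b (y i)) :
    nabCnt a b (f x) = nabCnt a b (f y) := by
  have key := hf (fun u => u.flatMap (fun c => if c = a ∨ c = b then [] else [a]))
    ⟨rfl, fun u v => List.flatMap_append⟩ x y
    (fun i => by
      show (x i).flatMap (fun c => if c = a ∨ c = b then [] else [a]) = (y i).flatMap (fun c => if c = a ∨ c = b then [] else [a])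
      rw [flatMap_nab_aux, flatMap_nab_aux, h i])
  have := congrArg List.length key
  simpa [flatMap_nab_aux] using this

private lemma key_aux (hf : IsRCPK k f) {a b : S} (hab : a ≠ b) (n m : Fin k → ℕ) :
    (f fun i => List.replicate (n i) a ++ List.replicate (m i) b).length
      = (f fun i => List.replicate (n i) a).count a
      + (f fun i => List.replicate (m i) b).count b
      + nabCnt a b (f fun _ => []) := by
  have hba : ¬ b = a := fun h => hab h.symm
  have h1 : (f fun i => List.replicate (n i) a ++ List.replicate (m i) b).count a
      = (f fun i => List.replicate (n i) a).count a :=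
    cnt_inv_aux hf a (fun i => by
      simp [List.count_replicate, hba])
  have h2 : (f fun i => List.replicate (n i) a ++ List.replicate (m i) b).count b
      = (f fun i => List.replicate (m i) b).count b :=
    cnt_inv_aux hf b (fun i => by
      simp [List.count_replicate, hab])
  have h3 : nabCnt a b (f fun i => List.replicate (n i) a ++ List.replicate (m i) b)
      = nabCnt a b (f fun _ => []) :=
    nab_inv_aux hf a b (fun i => by
      simp [nabCnt, List.countP_append, List.countP_replicate])
  rw [len_decomp_aux hab (f fun i => List.replicate (n i) a ++ List.replicate (m i) b),
    h1, h2, h3]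

end AuxStmt14

/-- If `S` has at least two letters and `f : (S*)ᵏ → S*` is RCP, then there are naturals
`p₁, …, p_k` (and `e_f = |f(ε,…,ε)|`) such that
`|f x| = ∑ᵢ pᵢ |xᵢ| + e_f`, `|f x|_a = ∑ᵢ pᵢ |xᵢ|_a + |f(ε,…,ε)|_a`, and for every letter `a`,
`pᵢ = |f(ε,…,a,…,ε)| − |f(ε,…,ε)|` (with `a` in the `i`-th position). -/
theorem stmt_14 {S : Type*} [DecidableEq S] (hS : ∃ a b : S, a ≠ b) (k : ℕ)
    (f : (Fin k → List S) → List S) (hf : IsRCPK k f) :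
    ∃ p : Fin k → ℕ,
      (∀ x : Fin k → List S,
        (f x).length = (∑ i, p i * (x i).length) + (f fun _ => []).length) ∧
      (∀ x : Fin k → List S, ∀ a : S,
        (f x).count a = (∑ i, p i * (x i).count a) + (f fun _ => []).count a) ∧
      (∀ a : S, ∀ i : Fin k,
        (f (Function.update (fun _ => ([] : List S)) i [a])).length
          = p i + (f fun _ => []).length) := by
  classical
  obtain ⟨a0, b0, hab0⟩ := hS
  -- the basic length function
  set L : (Fin k → ℕ) → ℕ := fun n => (f fun i => List.replicate (n i) a0).length with hLdef
  have hL0 : L 0 = (f fun _ => []).length := rfl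
  -- the mixing identity, for arbitrary distinct letters
  have mixlen : ∀ (c d : S), c ≠ d → ∀ n m : Fin k → ℕ,
      L (n + m) = (f fun i => List.replicate (n i) c).count c
        + (f fun i => List.replicate (m i) d).count d
        + nabCnt c d (f fun _ => []) := by
    intro c d hcd n m
    rw [← key_aux hf hcd n m]
    exact len_inv_aux hf a0 (fun i => by simp)
  -- additivity of L
  have hadd : ∀ n m : Fin k → ℕ, L (n + m) + L 0 = L n + L m := by
    intro n m
    have e1 := mixlen a0 b0 hab0 n m
    have e2 := mixlen a0 b0 hab0 n 0
    have e3 := mixlen a0 b0 hab0 0 m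
    have e4 := mixlen a0 b0 hab0 0 0
    rw [add_zero] at e2 e4
    rw [zero_add] at e3
    omega
  -- scaled delta functions
  set sc : Fin k → ℕ → (Fin k → ℕ) := fun i t j => if j = i then t else 0 with hscdef
  have hsc : ∀ i s t, sc i (s + t) = sc i s + sc i t := by
    intro i s t; funext j
    by_cases h : j = i <;> simp [hscdef, h]
  have hsc0 : ∀ i, sc i 0 = 0 := by
    intro i; funext j; simp [hscdef]
  have hAstep : ∀ i t, L (sc i (t + 1)) + L 0 = L (sc i t) + L (sc i 1) := by
    intro i t; rw [hsc]; exact hadd _ _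
  have hP : ∀ i, L 0 ≤ L (sc i 1) := by
    intro i
    by_contra hlt
    push_neg at hlt
    have h0 : L (sc i 0) = L 0 := by rw [hsc0]
    have hdec : ∀ t, L (sc i t) + t ≤ L 0 := by
      intro t; induction t with
      | zero => omega
      | succ t ih => have := hAstep i t; omega
    have := hdec (L 0 + 1)
    omega
  set P : Fin k → ℕ := fun i => L (sc i 1) - L 0 with hPdef0
  have hPdef : ∀ i, L (sc i 1) = P i + L 0 := by
    intro i; have := hP i; simp only [hPdef0]; omega
  have hscale : ∀ i t, L (sc i t) = t * P i + L 0 := by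
    intro i t; induction t with
    | zero => rw [hsc0]; simp
    | succ t ih =>
      have e := hAstep i t
      rw [ih, hPdef i] at e
      have : (t + 1) * P i = t * P i + P i := by ring
      omega
  -- decomposition of an arbitrary n as a sum of scaled deltas
  have hdecn : ∀ n : Fin k → ℕ, n = ∑ i, sc i (n i) := by
    intro n; funext j
    rw [Finset.sum_apply]
    simp [hscdef]
  have hsum : ∀ (s : Finset (Fin k)) (g : Fin k → (Fin k → ℕ)),
      L (∑ i ∈ s, g i) + s.card * L 0 = (∑ i ∈ s, L (g i)) + L 0 := by
    intro s
    induction s using Finset.induction with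
    | empty => intro g; simp
    | @insert j s hj ih =>
      intro g
      rw [Finset.sum_insert hj, Finset.sum_insert hj, Finset.card_insert_of_notMem hj]
      have e := hadd (g j) (∑ i ∈ s, g i)
      have e2 := ih g
      have : (s.card + 1) * L 0 = s.card * L 0 + L 0 := by ring
      omega
  have hLn : ∀ n : Fin k → ℕ, L n = (∑ i, P i * n i) + L 0 := by
    intro n
    have h1 := hsum Finset.univ (fun i => sc i (n i))
    rw [← hdecn n] at h1
    have h2 : (∑ i, L (sc i (n i))) = (∑ i, P i * n i) + (Finset.univ : Finset (Fin k)).card * L 0 := by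
      rw [Finset.sum_congr rfl (fun i _ => by rw [hscale i (n i), mul_comm])]
      rw [Finset.sum_add_distrib, Finset.sum_const, smul_eq_mul, mul_comm]
    omega
  refine ⟨P, ?_, ?_, ?_⟩
  · -- length formula
    intro x
    have h1 : (f x).length = L (fun i => (x i).length) :=
      len_inv_aux hf a0 (fun i => by simp)
    rw [h1, hLn, hL0]
  · -- count formula
    intro x c
    set d : S := if c = a0 then b0 else a0 with hd
    have hcd : c ≠ d := by
      by_cases h : c = a0
      · rw [hd, if_pos h]; exact fun he => hab0 (h ▸ he)
      · rw [hd, if_neg h]; exact h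
    set n : Fin k → ℕ := fun i => (x i).count c with hn
    have e1 := mixlen c d hcd n 0
    have e0 := mixlen c d hcd 0 0
    rw [add_zero] at e1 e0
    have hcc : (f x).count c = (f fun i => List.replicate (n i) c).count c :=
      cnt_inv_aux hf c (fun i => by simp [hn, List.count_replicate])
    have hC0 : (f fun i => List.replicate ((0 : Fin k → ℕ) i) c).count c
        = (f fun _ => []).count c := rfl
    have h1 := hLn n
    have h2 : (∑ i, P i * n i) = ∑ i, P i * (x i).count c := rfl
    omega
  · -- the exponents
    intro c i
    have h1 : (f (Function.update (fun _ => ([] : List S)) i [c])).length = L (sc i 1) :=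
      len_inv_aux hf a0 (fun j => by
        by_cases h : j = i <;> simp [Function.update_apply, hscdef, h])
    rw [h1, hPdef i, hL0]
end

section
/- Assume Σ has at least 3 elements and k ≥ 1. A function f : (Σ*)ᵏ → Σ* is congruence preserving if and only if there exist n ∈ ℕ, words w₀, …, wₙ ∈ Σ*, indices i₁, …, iₙ ∈ {1, …, k}, and exponents p₁, …, pₙ ∈ ℕ such that for all x₁, …, x_k ∈ Σ*: f(x₁, …, x_k) = w₀ x_{i₁}^{p₁} w₁ x_{i₂}^{p₂} w₂ ⋯ x_{iₙ}^{pₙ} wₙ. -/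
namespace Stmt16Aux
variable {S : Type*}

/-- Marker word `a^N b a^(i+1) b`. -/
def mark (a b : S) (i N : ℕ) : List S :=
  List.replicate N a ++ b :: (List.replicate (i+1) a ++ [b])

lemma mark_length (a b : S) (i N : ℕ) : (mark a b i N).length = N + i + 3 := by
  simp [mark]; omega

lemma mark_get_lt {a b : S} {i N q : ℕ} (hq : q < N) : (mark a b i N)[q]? = some a := by
  rw [mark, List.getElem?_append]
  simp [hq, List.getElem?_replicate]

lemma mark_get_N {a b : S} {i N : ℕ} : (mark a b i N)[N]? = some b := by
  rw [mark, List.getElem?_append]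
  simp

lemma mark_get_mid {a b : S} {i N q : ℕ} (h1 : N < q) (h2 : q ≤ N + i + 1) :
    (mark a b i N)[q]? = some a := by
  obtain ⟨r, rfl⟩ : ∃ r, q = N + (r + 1) := ⟨q - N - 1, by omega⟩
  rw [mark, List.getElem?_append]
  have h3 : ¬ (N + (r+1) < (List.replicate N a).length) := by
    simp only [List.length_replicate]; omega
  rw [if_neg h3]
  simp only [List.length_replicate]
  have h4 : N + (r + 1) - N = r + 1 := by omega
  rw [h4, List.getElem?_cons_succ]
  have hr : r < i + 1 := by omega
  simp [List.getElem?_append, List.getElem?_replicate, hr]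

lemma mark_get_last {a b : S} {i N : ℕ} : (mark a b i N)[N+i+2]? = some b := by
  rw [mark, List.getElem?_append]
  have h3 : ¬ (N + i + 2 < (List.replicate N a).length) := by simp; omega
  rw [if_neg h3]
  simp only [List.length_replicate]
  have : N + i + 2 - N = (i + 1) + 1 := by omega
  rw [this, List.getElem?_cons_succ, List.getElem?_append]
  have hr : ¬ ((i+1) < (List.replicate (i+1) a).length) := by simp
  rw [if_neg hr]
  simp

lemma mark_mem {a b : S} {i N : ℕ} {e : S} (h : e ∈ mark a b i N) : e = a ∨ e = b := by
  simp only [mark, List.mem_append, List.mem_cons, List.mem_replicate, List.mem_singleton] at h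
  tauto

lemma mark_get_zero {a b : S} {i N : ℕ} (hN : 0 < N) : (mark a b i N)[0]? = some a :=
  mark_get_lt hN

/-- Two marker occurrences in the same word are identical or disjoint. -/
lemma mark_overlap {a b : S} (hab : a ≠ b) {i j N : ℕ} (hi : i + 1 < N) (hj : j + 1 < N)
    {s₁ m s₂ : List S} (E : mark a b i N ++ s₁ = m ++ (mark a b j N ++ s₂)) :
    (m = [] ∧ i = j ∧ s₁ = s₂) ∨
      ∃ m', m = mark a b i N ++ m' ∧ s₁ = m' ++ (mark a b j N ++ s₂) := by
  rcases List.append_eq_append_iff.1 E with ⟨e, hm, hs⟩ | ⟨e, hmk, hR⟩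
  · exact Or.inr ⟨e, hm, hs⟩
  · -- mark i = m ++ e,  mark j ++ s₂ = e ++ s₁
    rcases eq_or_ne m [] with rfl | hm0
    · -- e = mark i, equation mark j ++ s₂ = mark i ++ s₁
      simp only [List.nil_append] at hmk E ⊢
      subst hmk
      rcases eq_or_ne i j with rfl | hij
      · refine Or.inl ⟨by trivial, rfl, ?_⟩
        have := E; simp at this; exact this
      · exfalso
        rcases Nat.lt_or_ge i j with hlt | hge
        · have h1 := congrArg (fun l => l[N+i+2]?) hR
          rw [List.getElem?_append, if_pos (by rw [mark_length]; omega),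
            List.getElem?_append, if_pos (by rw [mark_length]; omega)] at h1
          rw [mark_get_mid (by omega) (by omega), mark_get_last] at h1
          injection h1 with h1
          first | exact hab h1 | exact hab h1.symm
        · have hlt : j < i := by omega
          have h1 := congrArg (fun l => l[N+j+2]?) hR
          rw [List.getElem?_append, if_pos (by rw [mark_length]; omega),
            List.getElem?_append, if_pos (by rw [mark_length]; omega)] at h1
          rw [mark_get_last, mark_get_mid (by omega) (by omega)] at h1
          injection h1 with h1
          first | exact hab h1 | exact hab h1.symm
    · rcases eq_or_ne e [] with rfl | he0
      · refine Or.inr ⟨[], by simpa using hmk.symm, ?_⟩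
        simpa using hR.symm
      · exfalso
        -- 1 ≤ d ≤ N+i+2 where d = m.length
        have hd1 : 1 ≤ m.length := by
          cases m with
          | nil => exact absurd rfl hm0
          | cons _ _ => simp
        have hlen : m.length + e.length = N + i + 3 := by
          have := congrArg List.length hmk
          simp [mark_length] at this; omega
        have he1 : 1 ≤ e.length := by
          cases e with
          | nil => exact absurd rfl he0
          | cons _ _ => simp
        have hdle : m.length ≤ N + i + 2 := by omega
        set d := m.length with hd
        have hce : e = (mark a b i N).drop d := by
          rw [hmk]; simp [hd]
        set q : ℕ := if d ≤ N then N else N + i + 2 with hq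
        have hqd : d ≤ q := by dsimp [q]; split <;> omega
        have hqlt : q - d < N := by dsimp [q]; split <;> omega
        have hqb : (mark a b i N)[q]? = some b := by
          dsimp [q]; split
          · exact mark_get_N
          · exact mark_get_last
        have h1 := congrArg (fun l => l[q - d]?) hR
        rw [List.getElem?_append, if_pos (by rw [mark_length]; omega)] at h1
        rw [mark_get_lt hqlt] at h1
        rw [List.getElem?_append] at h1
        have hqdrop : q - d < e.length := by
          rw [hce, List.length_drop, mark_length]
          dsimp [q]; split <;> omega
        rw [if_pos hqdrop, hce, List.getElem?_drop] at h1
        have : d + (q - d) = q := by omega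
        rw [this, hqb] at h1
        injection h1 with h1
        first | exact hab h1 | exact hab h1.symm

open Relation

/-- One rewriting step: replace an occurrence of the marker `mark a b i N`
by the word `x i`. -/
def Stp (a b : S) {k : ℕ} (x : Fin k → List S) (N : ℕ) (z z' : List S) : Prop :=
  ∃ (p s : List S) (i : Fin k), z = p ++ (mark a b i N ++ s) ∧ z' = p ++ (x i ++ s)

variable {a b : S} {k : ℕ} {x : Fin k → List S} {N : ℕ}

lemma stp_left {z z' : List S} (u : List S) (h : Stp a b x N z z') :
    Stp a b x N (u ++ z) (u ++ z') := by
  obtain ⟨p, s, i, h1, h2⟩ := h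
  exact ⟨u ++ p, s, i, by simp [h1, List.append_assoc], by simp [h2, List.append_assoc]⟩

lemma stp_right {z z' : List S} (u : List S) (h : Stp a b x N z z') :
    Stp a b x N (z ++ u) (z' ++ u) := by
  obtain ⟨p, s, i, h1, h2⟩ := h
  exact ⟨p, s ++ u, i, by simp [h1, List.append_assoc], by simp [h2, List.append_assoc]⟩

lemma eqv_left {z z' : List S} (u : List S) (h : EqvGen (Stp a b x N) z z') :
    EqvGen (Stp a b x N) (u ++ z) (u ++ z') := by
  induction h with
  | rel _ _ h => exact .rel _ _ (stp_left u h)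
  | refl _ => exact .refl _
  | symm _ _ _ ih => exact .symm _ _ ih
  | trans _ _ _ _ _ ih1 ih2 => exact .trans _ _ _ ih1 ih2

lemma eqv_right {z z' : List S} (u : List S) (h : EqvGen (Stp a b x N) z z') :
    EqvGen (Stp a b x N) (z ++ u) (z' ++ u) := by
  induction h with
  | rel _ _ h => exact .rel _ _ (stp_right u h)
  | refl _ => exact .refl _
  | symm _ _ _ ih => exact .symm _ _ ih
  | trans _ _ _ _ _ ih1 ih2 => exact .trans _ _ _ ih1 ih2

lemma stp_cong : IsCong (EqvGen (Stp a b x N)) := by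
  refine ⟨EqvGen.is_equivalence _, fun z y u v hz hu => ?_⟩
  exact .trans _ _ _ (eqv_right u hz) (eqv_left y hu)

lemma stp_semiconf (hab : a ≠ b) (hN : k < N) :
    ∀ z z₁ z₂, Stp a b x N z z₁ → Stp a b x N z z₂ →
      ∃ w, ReflGen (Stp a b x N) z₁ w ∧ ReflTransGen (Stp a b x N) z₂ w := by
  rintro z z₁ z₂ ⟨p₁, s₁, i, h1, rfl⟩ ⟨p₂, s₂, j, h2, rfl⟩
  have hi : (i : ℕ) + 1 < N := by have := i.isLt; omega
  have hj : (j : ℕ) + 1 < N := by have := j.isLt; omega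
  have E : p₁ ++ (mark a b i N ++ s₁) = p₂ ++ (mark a b j N ++ s₂) := h1 ▸ h2
  rcases List.append_eq_append_iff.1 E with ⟨e, hp2, hrest⟩ | ⟨e, hp1, hrest⟩
  · rcases mark_overlap hab hi hj hrest with ⟨he, hij, hs⟩ | ⟨m', hm', hs1⟩
    · have hfin : i = j := Fin.ext hij
      subst hfin
      refine ⟨p₁ ++ (x i ++ s₁), .refl, ?_⟩
      have heq : p₂ ++ (x i ++ s₂) = p₁ ++ (x i ++ s₁) := by simp [hp2, he, hs]
      rw [heq]
    · refine ⟨p₁ ++ (x i ++ (m' ++ (x j ++ s₂))), ?_, ?_⟩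
      · refine ReflGen.single ⟨p₁ ++ x i ++ m', s₂, j, ?_, ?_⟩ <;>
          simp [hs1, List.append_assoc]
      · refine ReflTransGen.single ⟨p₁, m' ++ (x j ++ s₂), i, ?_, ?_⟩ <;>
          simp [hp2, hm', List.append_assoc]
  · rcases mark_overlap hab hj hi hrest with ⟨he, hij, hs⟩ | ⟨m', hm', hs1⟩
    · have hfin : j = i := Fin.ext hij
      subst hfin
      refine ⟨p₁ ++ (x j ++ s₁), .refl, ?_⟩
      have heq : p₂ ++ (x j ++ s₂) = p₁ ++ (x j ++ s₁) := by simp [hp1, he, hs]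
      rw [heq]
    · refine ⟨p₂ ++ (x j ++ (m' ++ (x i ++ s₁))), ?_, ?_⟩
      · refine ReflGen.single ⟨p₂, m' ++ (x i ++ s₁), j, ?_, ?_⟩ <;>
          simp [hp1, hs1, hm', List.append_assoc]
      · refine ReflTransGen.single ⟨p₂ ++ x j ++ m', s₁, i, ?_, ?_⟩ <;>
          simp [hm', hs1, List.append_assoc]

/-- Normal form: no rewriting step applies. -/
def Nrm (a b : S) {k : ℕ} (x : Fin k → List S) (N : ℕ) (z : List S) : Prop :=
  ∀ z', ¬ Stp a b x N z z'

lemma short_nrm {z : List S} (h : z.length < N) : Nrm a b x N z := by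
  rintro z' ⟨p, s, i, h1, _⟩
  have := congrArg List.length h1
  simp [mark_length] at this
  omega

lemma rtg_eq_of_nrm {z y : List S} (hn : Nrm a b x N z)
    (h : ReflTransGen (Stp a b x N) z y) : y = z := by
  rcases h.cases_head with rfl | ⟨c, hc, -⟩
  · rfl
  · exact absurd hc (hn c)

lemma eqv_join (hab : a ≠ b) (hN : k < N) {z v : List S}
    (h : EqvGen (Stp a b x N) z v) : Join (ReflTransGen (Stp a b x N)) z v := by
  have hequiv : Equivalence (Join (ReflTransGen (Stp a b x N))) :=
    equivalence_join_reflTransGen (stp_semiconf hab hN)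
  induction h with
  | rel _ _ h => exact ⟨_, ReflTransGen.single h, ReflTransGen.refl⟩
  | refl _ => exact hequiv.refl _
  | symm _ _ _ ih => exact hequiv.symm ih
  | trans _ _ _ _ _ ih1 ih2 => exact hequiv.trans ih1 ih2

lemma rtg_of_eqv_nrm (hab : a ≠ b) (hN : k < N) {z v : List S}
    (h : EqvGen (Stp a b x N) z v) (hv : Nrm a b x N v) :
    ReflTransGen (Stp a b x N) z v := by
  obtain ⟨y, hzy, hvy⟩ := eqv_join hab hN h
  rwa [rtg_eq_of_nrm hv hvy] at hzy

lemma eqv_nrm_eq (hab : a ≠ b) (hN : k < N) {z v : List S}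
    (h : EqvGen (Stp a b x N) z v) (hz : Nrm a b x N z) (hv : Nrm a b x N v) :
    z = v :=
  rtg_eq_of_nrm hv (rtg_of_eqv_nrm hab hN (EqvGen.symm _ _ h) hz)

section Track

variable {c : S}

/-- Flagged piece: background word, marker index, and whether the marker has been
replaced by the block `[c]` already. -/
def pcw (a b c : S) {k : ℕ} (N : ℕ) (e : List S × Fin k × Bool) : List S :=
  e.1 ++ (if e.2.2 then [c] else mark a b (e.2.1) N)

def cf (a b c : S) {k : ℕ} (N : ℕ) (sk : List (List S × Fin k × Bool)) (t : List S) :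
    List S :=
  (sk.map (pcw a b c N)).flatten ++ t

def mf (a b : S) {k : ℕ} (N : ℕ) (sk : List (List S × Fin k × Bool)) (t : List S) :
    List S :=
  (sk.map (fun e => e.1 ++ mark a b (e.2.1) N)).flatten ++ t

lemma cf_nil (t : List S) : cf a b c N ([] : List (List S × Fin k × Bool)) t = t := by
  simp [cf]

lemma mf_nil (t : List S) : mf a b N ([] : List (List S × Fin k × Bool)) t = t := by
  simp [mf]

lemma cf_cons (u : List S) (j : Fin k) (fl : Bool) (sk) (t : List S) :
    cf a b c N ((u, j, fl) :: sk) t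
      = u ++ ((if fl then [c] else mark a b j N) ++ cf a b c N sk t) := by
  simp [cf, pcw, List.append_assoc]

lemma mf_cons (u : List S) (j : Fin k) (fl : Bool) (sk) (t : List S) :
    mf a b N ((u, j, fl) :: sk) t = u ++ (mark a b j N ++ mf a b N sk t) := by
  simp [mf, List.append_assoc]

lemma stepE (hab : a ≠ b) (hac : a ≠ c) (hbc : b ≠ c) (hN : k < N) :
    ∀ (sk : List (List S × Fin k × Bool)) (t z' : List S),
      Stp a b (fun _ : Fin k => [c]) N (cf a b c N sk t) z' →
      ∃ (sk' : List (List S × Fin k × Bool)) (t' : List S),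
        z' = cf a b c N sk' t' ∧ mf a b N sk' t' = mf a b N sk t := by
  intro sk
  induction sk with
  | nil =>
    rintro t z' ⟨p, s, i, hz, rfl⟩
    rw [cf_nil] at hz
    refine ⟨[(p, i, true)], s, ?_, ?_⟩
    · rw [cf_cons, cf_nil, if_pos rfl]
    · simp only [mf_cons, mf_nil]
      exact hz.symm
  | cons e sk IH =>
    obtain ⟨u, jj, fl⟩ := e
    rintro t z' ⟨p, s, i, hz, rfl⟩
    have hi : (i : ℕ) + 1 < N := by have := i.isLt; omega
    have hjj : (jj : ℕ) + 1 < N := by have := jj.isLt; omega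
    have hN0 : 0 < N := by omega
    rw [cf_cons] at hz
    rcases List.append_eq_append_iff.1 hz with ⟨e, hp, hrest⟩ | ⟨e, hu, hrest⟩
    · -- the redex starts at or after the current piece's marker/block
      cases fl with
      | true =>
        rw [if_pos rfl] at hrest
        cases e with
        | nil =>
          exfalso
          simp only [List.nil_append] at hrest
          have h0 := congrArg (fun l => l[0]?) hrest
          rw [List.getElem?_append, if_pos (by simp)] at h0
          rw [List.getElem?_append, if_pos (by rw [mark_length]; omega),
            mark_get_zero hN0] at h0
          simp at h0
          exact hac h0.symm
        | cons y ys =>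
          simp only [List.cons_append, List.singleton_append, List.cons.injEq] at hrest
          obtain ⟨hy, hR⟩ := hrest
          subst hy
          obtain ⟨sk₂, t₂, h1, h2⟩ := IH t (ys ++ ([c] ++ s)) ⟨ys, s, i, hR, rfl⟩
          refine ⟨(u, jj, true) :: sk₂, t₂, ?_, ?_⟩
          · rw [cf_cons, if_pos rfl, ← h1, hp]
            simp [List.append_assoc]
          · rw [mf_cons, mf_cons, h2]
      | false =>
        rw [if_neg Bool.false_ne_true] at hrest
        rcases mark_overlap hab hjj hi hrest with ⟨he, hij, hs⟩ | ⟨m', hm', hs1⟩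
        · refine ⟨(u, jj, true) :: sk, t, ?_, ?_⟩
          · rw [cf_cons, if_pos rfl, hp, he, hs]
            try simp [List.append_assoc]
          · rw [mf_cons, mf_cons]
        · obtain ⟨sk₂, t₂, h1, h2⟩ := IH t (m' ++ ([c] ++ s)) ⟨m', s, i, hs1, rfl⟩
          refine ⟨(u, jj, false) :: sk₂, t₂, ?_, ?_⟩
          · rw [cf_cons, if_neg Bool.false_ne_true, ← h1, hp, hm']
            try simp [List.append_assoc]
          · rw [mf_cons, mf_cons, h2]
    · -- the redex starts inside the background u
      rcases List.append_eq_append_iff.1 hrest with ⟨g, hg1, hg2⟩ | ⟨g, hg1, hg2⟩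
      · -- e = mark i ++ g : redex entirely inside u
        refine ⟨(p, i, true) :: (g, jj, fl) :: sk, t, ?_, ?_⟩
        · rw [cf_cons, if_pos rfl, cf_cons, hg2]
          try simp [List.append_assoc]
        · rw [mf_cons, mf_cons, mf_cons, hu, hg1]
          simp [List.append_assoc]
      · -- mark i = e ++ g
        cases g with
        | nil =>
          simp only [List.append_nil] at hg1
          simp only [List.nil_append] at hg2
          refine ⟨(p, i, true) :: ([], jj, fl) :: sk, t, ?_, ?_⟩
          · rw [cf_cons, if_pos rfl, cf_cons, hg2]
            simp [List.append_assoc]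
          · rw [mf_cons, mf_cons, mf_cons, hu, ← hg1]
            simp [List.append_assoc]
        | cons y ys =>
          cases fl with
          | true =>
            exfalso
            rw [if_pos rfl] at hg2
            have hy : y = c := by
              have h0 := congrArg (fun l => l[0]?) hg2
              rw [List.getElem?_append, if_pos (by simp)] at h0
              simp at h0
              exact h0.symm
            have hymem : y ∈ mark a b (i : ℕ) N := by
              rw [hg1]
              exact List.mem_append_right _ List.mem_cons_self
            rcases mark_mem hymem with rfl | rfl
            · exact hac hy
            · exact hbc hy
          | false =>
            rw [if_neg Bool.false_ne_true] at hrest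
            rcases mark_overlap hab hi hjj hrest with ⟨he, hij, hs⟩ | ⟨m', hm', hs1⟩
            · refine ⟨(u, jj, true) :: sk, t, ?_, ?_⟩
              · rw [cf_cons, if_pos rfl, hu, he, hs]
                try simp [List.append_assoc]
              · rw [mf_cons, mf_cons]
            · exfalso
              have l1 := congrArg List.length hg1
              have l2 := congrArg List.length hm'
              simp [mark_length] at l1 l2
              omega

lemma rtgE (hab : a ≠ b) (hac : a ≠ c) (hbc : b ≠ c) (hN : k < N) :
    ∀ z v : List S, ReflTransGen (Stp a b (fun _ : Fin k => [c]) N) z v →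
      ∀ (sk : List (List S × Fin k × Bool)) (t : List S), z = cf a b c N sk t →
      ∃ (sk' : List (List S × Fin k × Bool)) (t' : List S),
        v = cf a b c N sk' t' ∧ mf a b N sk' t' = mf a b N sk t := by
  intro z v h
  induction h using Relation.ReflTransGen.head_induction_on with
  | refl => exact fun sk t ht => ⟨sk, t, ht, rfl⟩
  | head hstep _ ih =>
    intro sk t ht
    rw [ht] at hstep
    obtain ⟨sk₁, t₁, h1, h2⟩ := stepE hab hac hbc hN sk t _ hstep
    obtain ⟨sk', t', h3, h4⟩ := ih sk₁ t₁ h1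
    exact ⟨sk', t', h3, h4.trans h2⟩

lemma unresolved_step (hN : k < N) :
    ∀ (sk : List (List S × Fin k × Bool)) (t : List S),
      (∃ e ∈ sk, e.2.2 = false) → ∃ z', Stp a b (fun _ : Fin k => [c]) N (cf a b c N sk t) z' := by
  intro sk
  induction sk with
  | nil => rintro t ⟨e, he, -⟩; simp at he
  | cons e sk IH =>
    obtain ⟨u, jj, fl⟩ := e
    rintro t ⟨e', he', hfl⟩
    cases fl with
    | false =>
      refine ⟨u ++ ([c] ++ cf a b c N sk t), u, cf a b c N sk t, jj, ?_, rfl⟩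
      rw [cf_cons, if_neg Bool.false_ne_true]
      try simp
    | true =>
      rcases List.mem_cons.1 he' with rfl | hmem
      · simp at hfl
      · obtain ⟨z'', hz''⟩ := IH t ⟨e', hmem, hfl⟩
        refine ⟨(u ++ [c]) ++ z'', ?_⟩
        have : cf a b c N ((u, jj, true) :: sk) t = (u ++ [c]) ++ cf a b c N sk t := by
          rw [cf_cons, if_pos rfl]
          simp [List.append_assoc]
        rw [this]
        exact stp_left _ hz''

/-- Unflagged skeleton filling. -/
def fill {k : ℕ} (g : Fin k → List S) (sk : List (List S × Fin k)) (t : List S) : List S :=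
  (sk.map fun e => e.1 ++ g e.2).flatten ++ t

lemma fill_nil (g : Fin k → List S) (t : List S) : fill g [] t = t := by simp [fill]

lemma fill_cons (g : Fin k → List S) (u : List S) (j : Fin k) (sk) (t : List S) :
    fill g ((u, j) :: sk) t = u ++ (g j ++ fill g sk t) := by
  simp [fill, List.append_assoc]

lemma cf_resolved : ∀ (sk : List (List S × Fin k × Bool)), (∀ e ∈ sk, e.2.2 = true) →
    ∀ t, cf a b c N sk t = fill (fun _ => [c]) (sk.map fun e => (e.1, e.2.1)) t := by
  intro sk
  induction sk with
  | nil => intro _ t; rw [cf_nil]; simp [fill]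
  | cons e sk IH =>
    obtain ⟨u, jj, fl⟩ := e
    intro h t
    have hfl : fl = true := h _ List.mem_cons_self
    subst hfl
    rw [cf_cons, if_pos rfl]
    simp only [List.map_cons, fill_cons]
    rw [IH (fun e he => h e (List.mem_cons_of_mem _ he)) t]

lemma mf_fill : ∀ (sk : List (List S × Fin k × Bool)) (t : List S),
    mf a b N sk t = fill (fun i : Fin k => mark a b i N) (sk.map fun e => (e.1, e.2.1)) t := by
  intro sk
  induction sk with
  | nil => intro t; rw [mf_nil]; simp [fill]
  | cons e sk IH =>
    obtain ⟨u, jj, fl⟩ := e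
    intro t
    rw [mf_cons]
    simp only [List.map_cons, fill_cons]
    rw [IH]

end Track

section Code

variable {c : S}

lemma fill_code_eq : ∀ (sk sk' : List (List S × Fin k)) (t t' : List S),
    fill (fun _ => [c]) sk t = fill (fun _ => [c]) sk' t' →
    sk.map (fun e => (e.1.length, e.2)) = sk'.map (fun e => (e.1.length, e.2)) →
    sk = sk' ∧ t = t' := by
  intro sk
  induction sk with
  | nil =>
    intro sk' t t' hfill hcode
    cases sk' with
    | nil => exact ⟨rfl, by simpa [fill_nil] using hfill⟩
    | cons e sk' => simp at hcode
  | cons e sk IH =>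
    intro sk' t t' hfill hcode
    cases sk' with
    | nil => simp at hcode
    | cons e' sk' =>
      obtain ⟨u, j⟩ := e
      obtain ⟨u', j'⟩ := e'
      simp only [List.map_cons, List.cons.injEq, Prod.mk.injEq] at hcode
      obtain ⟨⟨hlen, hj⟩, hcode⟩ := hcode
      rw [fill_cons, fill_cons] at hfill
      obtain ⟨hu, hrest⟩ := List.append_inj hfill hlen
      simp only [List.cons_append, List.nil_append, List.cons.injEq] at hrest
      obtain ⟨-, hrest⟩ := hrest
      obtain ⟨hsk, ht⟩ := IH sk' t t' hrest hcode
      exact ⟨by rw [hu, hj, hsk], ht⟩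

lemma fill_c_length : ∀ (sk : List (List S × Fin k)) (t : List S),
    (fill (fun _ => [c]) sk t).length = (sk.map fun e => e.1.length + 1).sum + t.length := by
  intro sk
  induction sk with
  | nil => intro t; rw [fill_nil]; simp
  | cons e sk IH =>
    intro t
    obtain ⟨u, j⟩ := e
    rw [fill_cons]
    simp [IH t]
    omega

lemma fill_sk_bounds (sk : List (List S × Fin k)) (t : List S) :
    sk.length ≤ (fill (fun _ => [c]) sk t).length ∧
      ∀ e ∈ sk, e.1.length ≤ (fill (fun _ => [c]) sk t).length := by
  rw [fill_c_length]
  constructor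
  · calc sk.length = (sk.map fun e => e.1.length + 1).length := by simp
    _ ≤ (sk.map fun e => e.1.length + 1).sum := List.length_le_sum_of_one_le _
        (by rintro x hx; simp only [List.mem_map] at hx; obtain ⟨e, -, rfl⟩ := hx; omega)
    _ ≤ _ := by omega
  · intro e he
    have : e.1.length + 1 ∈ sk.map fun e => e.1.length + 1 := List.mem_map_of_mem he
    have := List.le_sum_of_mem this
    omega

/-- Encode a skeleton into a finite type. -/
def codeFn (B : ℕ) (sk : List (List S × Fin k)) : Fin (B+1) → Option (Fin (B+1) × Fin k) :=
  fun r => (sk[(r : ℕ)]?).map fun e => (⟨min e.1.length B, Nat.lt_succ_of_le (Nat.min_le_right _ _)⟩, e.2)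

lemma codeFn_inj {B : ℕ} {sk sk' : List (List S × Fin k)}
    (h1 : sk.length ≤ B) (h2 : sk'.length ≤ B)
    (h3 : ∀ e ∈ sk, e.1.length ≤ B) (h4 : ∀ e ∈ sk', e.1.length ≤ B)
    (hc : codeFn B sk = codeFn B sk') :
    sk.map (fun e => (e.1.length, e.2)) = sk'.map (fun e => (e.1.length, e.2)) := by
  apply List.ext_getElem?
  intro n
  rcases Nat.lt_or_ge n (B+1) with hn | hn
  · have hcn := congrFun hc ⟨n, hn⟩
    simp only [codeFn] at hcn
    rw [List.getElem?_map, List.getElem?_map]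
    cases hsk : sk[n]? with
    | none =>
      rw [hsk] at hcn
      cases hsk' : sk'[n]? with
      | none => simp
      | some e' => rw [hsk'] at hcn; simp at hcn
    | some e =>
      rw [hsk] at hcn
      cases hsk' : sk'[n]? with
      | none => rw [hsk'] at hcn; simp at hcn
      | some e' =>
        rw [hsk'] at hcn
        simp only [Option.map_some, Option.some.injEq, Prod.mk.injEq, Fin.mk.injEq] at hcn
        obtain ⟨hmin, hj⟩ := hcn
        have he : e ∈ sk := List.mem_of_getElem? hsk
        have he' : e' ∈ sk' := List.mem_of_getElem? hsk'
        rw [Nat.min_eq_left (h3 e he), Nat.min_eq_left (h4 e' he')] at hmin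
        simp [hmin, hj]
  · rw [List.getElem?_eq_none, List.getElem?_eq_none]
    · simp; omega
    · simp; omega

lemma exists_const_fiber {β : Type*} [Finite β] (g : ℕ → β) :
    ∃ v, ∀ M : ℕ, ∃ n, M ≤ n ∧ g n = v := by
  obtain ⟨v, hv⟩ := Finite.exists_infinite_fiber g
  refine ⟨v, fun M => ?_⟩
  by_contra hcon
  push_neg at hcon
  have hsub : g ⁻¹' {v} ⊆ Set.Iio M := by
    intro n hn
    simp only [Set.mem_preimage, Set.mem_singleton_iff] at hn
    by_contra hM
    exact hcon n (Nat.le_of_not_lt hM) hn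
  exact (Set.infinite_coe_iff.mp hv) ((Set.finite_Iio M).subset hsub)

end Code

section Main

lemma rtg_left {a b : S} {k : ℕ} {x : Fin k → List S} {N : ℕ} {z z' : List S} (u : List S)
    (h : ReflTransGen (Stp a b x N) z z') :
    ReflTransGen (Stp a b x N) (u ++ z) (u ++ z') :=
  ReflTransGen.lift (fun z => u ++ z) (fun _ _ h => stp_left u h) _ _ h

lemma rtg_to_eqv {r : List S → List S → Prop} {z v : List S}
    (h : ReflTransGen r z v) : EqvGen r z v := by
  induction h with
  | refl => exact .refl _
  | tail _ h2 ih => exact .trans _ _ _ ih (.rel _ _ h2)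

lemma fill_red (a b : S) {k : ℕ} (x : Fin k → List S) (N : ℕ) :
    ∀ (sk : List (List S × Fin k)) (t : List S),
      ReflTransGen (Stp a b x N) (fill (fun i : Fin k => mark a b i N) sk t) (fill x sk t) := by
  intro sk
  induction sk with
  | nil => intro t; rw [fill_nil, fill_nil]
  | cons e sk IH =>
    intro t
    obtain ⟨u, j⟩ := e
    rw [fill_cons, fill_cons]
    refine ReflTransGen.head ⟨u, fill (fun i : Fin k => mark a b i N) sk t, j, rfl, rfl⟩ ?_
    exact ReflTransGen.lift (fun z => u ++ (x j ++ z))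
      (fun _ _ h => stp_left u (stp_left (x j) h)) _ _ (IH t)

lemma fill_len_bound {c : S} {k : ℕ} (x : Fin k → List S) (X : ℕ) (hX : ∀ i, (x i).length ≤ X) :
    ∀ (sk : List (List S × Fin k)) (t : List S),
      (fill x sk t).length ≤ (fill (fun _ => [c]) sk t).length + sk.length * X := by
  intro sk
  induction sk with
  | nil => intro t; rw [fill_nil, fill_nil]; omega
  | cons e sk IH =>
    intro t
    obtain ⟨u, j⟩ := e
    rw [fill_cons, fill_cons]
    have h1 := IH t
    have h2 := hX j
    simp only [List.length_append, List.length_cons, List.length_nil]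
    have h3 : (sk.length + 1) * X = sk.length * X + X := by ring
    omega

/-- Auxiliary function giving the background words of a skeleton. -/
def waux {k : ℕ} (d : List S × Fin k) (t : List S) (sk : List (List S × Fin k)) (r : ℕ) :
    List S :=
  if r = sk.length then t else (sk.getD r d).1

lemma waux_zero_cons {k : ℕ} (d : List S × Fin k) (t : List S) (e) (sk) :
    waux d t (e :: sk) 0 = e.1 := by
  simp [waux]

lemma waux_succ {k : ℕ} (d : List S × Fin k) (t : List S) (e) (sk) (r : ℕ) :
    waux d t (e :: sk) (r + 1) = waux d t sk r := by
  by_cases h : r = sk.length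
  · simp [waux, h]
  · simp [waux, h]

lemma fill_eq_poly {k : ℕ} (d : List S × Fin k) (x : Fin k → List S) :
    ∀ (sk : List (List S × Fin k)) (t : List S),
      fill x sk t = waux d t sk 0 ++ List.flatten ((List.range sk.length).map fun j =>
        List.flatten (List.replicate 1 (x ((sk.getD j d).2))) ++ waux d t sk (j + 1)) := by
  intro sk
  induction sk with
  | nil => intro t; simp [fill_nil, waux]
  | cons e sk IH =>
    intro t
    obtain ⟨u, j⟩ := e
    rw [fill_cons, IH t, waux_zero_cons, List.length_cons, List.range_succ_eq_map,
      List.map_cons, List.flatten_cons, List.map_map]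
    simp only [Function.comp_def, Nat.succ_eq_add_one]
    simp only [List.getD_cons_succ, List.getD_cons_zero, waux_succ]
    simp [List.append_assoc]

theorem forward {c₁ c₂ c₃ : S} (h12 : c₁ ≠ c₂) (h13 : c₁ ≠ c₃) (h23 : c₂ ≠ c₃)
    {k : ℕ} (hk : 1 ≤ k) (f : (Fin k → List S) → List S) (hf : IsCPK k f) :
    PolyFormK k f := by
  classical
  set xc : Fin k → List S := fun _ => [c₃] with hxc
  set H : List S := f xc with hH
  set G : ℕ → List S := fun N => f (fun i => mark c₁ c₂ (i : ℕ) N) with hG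
  have hcong : ∀ (x : Fin k → List S) (N : ℕ), EqvGen (Stp c₁ c₂ x N) (G N) (f x) := by
    intro x N
    exact hf _ stp_cong _ _ (fun i => EqvGen.rel _ _ ⟨[], [], i, by simp, by simp⟩)
  set K : ℕ := H.length + k + 1 with hK
  have hskel : ∀ n : ℕ, ∃ σ : List (List S × Fin k) × List S,
      fill (fun _ => [c₃]) σ.1 σ.2 = H ∧
        G (n + K) = fill (fun i : Fin k => mark c₁ c₂ i (n + K)) σ.1 σ.2 := by
    intro n
    have hN : k < n + K := by omega
    have hHn : Nrm c₁ c₂ xc (n + K) H := short_nrm (by omega)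
    have h2 := rtg_of_eqv_nrm h12 hN (hcong xc (n + K)) hHn
    obtain ⟨sk', t', h3, h4⟩ := rtgE h12 h13 h23 hN _ _ h2 [] (G (n + K)) (cf_nil _).symm
    have hres : ∀ e ∈ sk', e.2.2 = true := by
      intro e he
      by_contra hne
      have hfe : e.2.2 = false := by revert hne; cases e.2.2 <;> simp
      obtain ⟨z', hz'⟩ := unresolved_step hN sk' t' ⟨e, he, hfe⟩
      rw [← h3] at hz'
      exact hHn z' hz'
    refine ⟨(sk'.map fun e => (e.1, e.2.1), t'), ?_, ?_⟩
    · rw [← cf_resolved sk' hres t', ← h3]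
    · rw [← mf_fill, h4, mf_nil]
  choose σf hσ1 hσ2 using hskel
  set B : ℕ := H.length with hB
  have hb1 : ∀ n, (σf n).1.length ≤ B := by
    intro n
    have := (fill_sk_bounds (c := c₃) (σf n).1 (σf n).2).1
    rwa [hσ1 n] at this
  have hb2 : ∀ n, ∀ e ∈ (σf n).1, e.1.length ≤ B := by
    intro n e he
    have := (fill_sk_bounds (c := c₃) (σf n).1 (σf n).2).2 e he
    rwa [hσ1 n] at this
  obtain ⟨v, hv⟩ := exists_const_fiber (fun n => codeFn B (σf n).1)
  obtain ⟨n₀, -, hn₀⟩ := hv 0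
  have hsame : ∀ n, codeFn B (σf n).1 = v → σf n = σf n₀ := by
    intro n hn
    have hcode := codeFn_inj (hb1 n) (hb1 n₀) (hb2 n) (hb2 n₀) (hn.trans hn₀.symm)
    have hfc := fill_code_eq (σf n).1 (σf n₀).1 (σf n).2 (σf n₀).2
      ((hσ1 n).trans (hσ1 n₀).symm) hcode
    exact Prod.ext hfc.1 hfc.2
  set d : List S × Fin k := ([], ⟨0, by omega⟩) with hd
  have main : ∀ x : Fin k → List S, f x = fill x (σf n₀).1 (σf n₀).2 := by
    intro x
    set X : ℕ := ∑ i : Fin k, (x i).length with hXdef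
    have hX : ∀ i, (x i).length ≤ X := by
      intro i
      rw [hXdef]
      exact Finset.single_le_sum (f := fun i => (x i).length)
        (fun _ _ => Nat.zero_le _) (Finset.mem_univ i)
    set M : ℕ := B + B * X + (f x).length + 1 with hM
    obtain ⟨n, hnM, hnv⟩ := hv M
    have hσn : σf n = σf n₀ := hsame n hnv
    set N : ℕ := n + K with hN'
    have hN : k < N := by omega
    have hGN : G N = fill (fun i : Fin k => mark c₁ c₂ i N) (σf n₀).1 (σf n₀).2 := by
      rw [← hσn]; exact hσ2 n
    have heqv : EqvGen (Stp c₁ c₂ x N) (f x) (fill x (σf n₀).1 (σf n₀).2) := by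
      refine .trans _ _ _ (.symm _ _ (hcong x N)) ?_
      rw [hGN]
      exact rtg_to_eqv (fill_red c₁ c₂ x N _ _)
    have hlen1 : (f x).length < N := by omega
    have hlen2 : (fill x (σf n₀).1 (σf n₀).2).length < N := by
      have h1 := fill_len_bound (c := c₃) x X hX (σf n₀).1 (σf n₀).2
      rw [hσ1 n₀] at h1
      have h2 : (σf n₀).1.length * X ≤ B * X := Nat.mul_le_mul_right _ (hb1 n₀)
      omega
    exact eqv_nrm_eq h12 hN heqv (short_nrm hlen1) (short_nrm hlen2)
  refine ⟨(σf n₀).1.length, waux d (σf n₀).2 (σf n₀).1,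
    fun r => ((σf n₀).1.getD (r - 1) d).2, fun _ => 1, fun x => ?_⟩
  rw [main x, fill_eq_poly d x]
  simp

end Main

theorem backward {k : ℕ} (f : (Fin k → List S) → List S) (hpoly : PolyFormK k f) :
    IsCPK k f := by
  obtain ⟨n, w, idx, p, hform⟩ := hpoly
  intro r hr x y hxy
  rw [hform x, hform y]
  have hrefl : ∀ z, r z z := hr.1.refl
  have compat := hr.2
  have hpow : ∀ (m : ℕ) (i : Fin k),
      r (List.flatten (List.replicate m (x i))) (List.flatten (List.replicate m (y i))) := by
    intro m i
    induction m with
    | zero => exact hrefl []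
    | succ m ih =>
      simp only [List.replicate_succ, List.flatten_cons]
      exact compat _ _ _ _ (hxy i) ih
  have hmain : ∀ m : ℕ,
      r (List.flatten ((List.range m).map fun j =>
          List.flatten (List.replicate (p (j+1)) (x (idx (j+1)))) ++ w (j+1)))
        (List.flatten ((List.range m).map fun j =>
          List.flatten (List.replicate (p (j+1)) (y (idx (j+1)))) ++ w (j+1))) := by
    intro m
    induction m with
    | zero => exact hrefl []
    | succ m ih =>
      rw [List.range_succ, List.map_append, List.map_append,
        List.flatten_append, List.flatten_append]
      refine compat _ _ _ _ ih ?_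
      simp only [List.map_cons, List.map_nil, List.flatten_cons, List.flatten_nil,
        List.append_nil]
      exact compat _ _ _ _ (hpow _ _) (hrefl (w (m+1)))
  exact compat _ _ _ _ (hrefl (w 0)) (hmain n)

end Stmt16Aux

/-- If `S` has at least 3 elements and `k ≥ 1`, a function `f : (S*)ᵏ → S*` is congruence
preserving iff it is of the form
`f (x₁, …, x_k) = w₀ x_{i₁}^{p₁} w₁ x_{i₂}^{p₂} w₂ ⋯ x_{iₙ}^{pₙ} wₙ`. -/
theorem stmt_16 {S : Type*} (c₁ c₂ c₃ : S) (h12 : c₁ ≠ c₂) (h13 : c₁ ≠ c₃) (h23 : c₂ ≠ c₃)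
    (k : ℕ) (hk : 1 ≤ k) (f : (Fin k → List S) → List S) :
    IsCPK k f ↔ PolyFormK k f :=
  ⟨Stmt16Aux.forward h12 h13 h23 hk f, Stmt16Aux.backward f⟩
end

section
/- Assume Σ contains at least two letters, k ≥ 1, and f : (Σ*)ᵏ → Σ* is RCP. If there exist words u₁ ≠ ε, …, u_k ≠ ε such that f(u₁, …, u_k) = ε, then f is constant with value ε. -/
section Aux

variable {S : Type*} [DecidableEq S]

/-- Erase the letter `a` from a word. -/
def eraseHom (a : S) (w : List S) : List S :=
  w.flatMap (fun c => if c = a then [] else [c])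

/-- Project every letter to `a`. -/
def projHom (a : S) (w : List S) : List S :=
  w.flatMap (fun _ => [a])

lemma projHom_eq (a : S) (w : List S) : projHom a w = List.replicate w.length a := by
  induction w with
  | nil => rfl
  | cons c t ih => simp [projHom, List.replicate_succ] at *; exact ih

lemma eraseHom_replicate_self (a : S) (n : ℕ) :
    eraseHom a (List.replicate n a) = [] := by
  induction n with
  | zero => rfl
  | succ n ih => simpa [eraseHom, List.replicate_succ] using ih

lemma eraseHom_replicate_other {a b : S} (h : b ≠ a) (n : ℕ) :
    eraseHom a (List.replicate n b) = List.replicate n b := by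
  induction n with
  | zero => rfl
  | succ n ih => simp [eraseHom, List.replicate_succ, h] at *; exact ih

lemma length_eraseHom_add_count (a : S) (w : List S) :
    (eraseHom a w).length + w.count a = w.length := by
  induction w with
  | nil => rfl
  | cons c t ih =>
    by_cases hc : c = a
    · subst hc; simp [eraseHom, List.count_cons] at *; omega
    · simp [eraseHom, List.count_cons, hc] at *; omega

lemma count_eraseHom {a b : S} (h : a ≠ b) (w : List S) :
    (eraseHom b w).count a = w.count a := by
  induction w with
  | nil => rfl
  | cons c t ih =>
    by_cases hc : c = b
    · subst hc; simp [eraseHom, List.count_cons, Ne.symm h] at *; exact ih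
    · simp [eraseHom, List.count_cons, hc] at *; omega

lemma eraseHom_eq_nil {a : S} {w : List S} (h : eraseHom a w = []) :
    w = List.replicate w.length a := by
  rw [List.eq_replicate_iff]
  refine ⟨rfl, fun c hc => ?_⟩
  have := (List.flatMap_eq_nil_iff.mp h) c hc
  by_contra hne
  simp [hne] at this

lemma isHom_eraseHom (a : S) : IsHom (eraseHom a) :=
  ⟨rfl, fun x y => List.flatMap_append⟩

lemma isHom_projHom (a : S) : IsHom (projHom a) :=
  ⟨rfl, fun x y => List.flatMap_append⟩

end Aux

/-- If `S` has at least two letters, `k ≥ 1`, `f : (S*)ᵏ → S*` is RCP and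
`f (u₁, …, u_k) = ε` for some nonempty words `u₁, …, u_k`, then `f` is constantly `ε`. -/
theorem stmt_17 {S : Type*} (hS : ∃ a b : S, a ≠ b) (k : ℕ) (hk : 1 ≤ k)
    (f : (Fin k → List S) → List S) (hf : IsRCPK k f)
    (u : Fin k → List S) (hu : ∀ i, u i ≠ []) (hfu : f u = []) :
    ∀ x : Fin k → List S, f x = [] := by
  classical
  obtain ⟨a, b, hab⟩ := hS
  -- Step A: the length of `f x` depends only on the lengths of the inputs
  have hlen : ∀ x y : Fin k → List S, (∀ i, (x i).length = (y i).length) →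
      (f x).length = (f y).length := by
    intro x y h
    have h1 := hf (projHom a) (isHom_projHom a) x y
      (fun i => by rw [projHom_eq, projHom_eq, h i])
    rw [projHom_eq, projHom_eq] at h1
    simpa using congrArg List.length h1
  set A : (Fin k → ℕ) → (Fin k → List S) := fun n i => List.replicate (n i) a with hA
  set B : (Fin k → ℕ) → (Fin k → List S) := fun n i => List.replicate (n i) b with hB
  set g : (Fin k → ℕ) → ℕ := fun n => (f (A n)).length with hg
  have hg_len : ∀ x : Fin k → List S, (f x).length = g (fun i => (x i).length) :=
    fun x => hlen x (A fun i => (x i).length) (fun i => by simp [hA])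
  set m : Fin k → ℕ := fun i => (u i).length with hm
  have hgm : g m = 0 := by
    have h1 := hg_len u
    rw [hfu] at h1
    simpa [hm] using h1.symm
  have hfAm : f (A m) = [] := List.length_eq_zero_iff.mp hgm
  have hlenB : ∀ n, (f (B n)).length = g n := by
    intro n
    have he : (fun i => (B n i).length) = n := by funext i; simp [hB]
    rw [hg_len (B n), he]
  have hfBm : f (B m) = [] := by
    apply List.length_eq_zero_iff.mp
    rw [hlenB m]; exact hgm
  -- f on a-power tuples is a power of a, similarly for b
  have hfA : ∀ n, f (A n) = List.replicate (g n) a := by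
    intro n
    have h1 := hf (eraseHom a) (isHom_eraseHom a) (A n) (A m)
      (fun i => by simp [hA, eraseHom_replicate_self])
    rw [hfAm] at h1
    exact eraseHom_eq_nil h1
  have hfB : ∀ n, f (B n) = List.replicate (g n) b := by
    intro n
    have h1 := hf (eraseHom b) (isHom_eraseHom b) (B n) (B m)
      (fun i => by simp [hB, eraseHom_replicate_self])
    rw [hfBm] at h1
    have h2 := eraseHom_eq_nil h1
    rw [hlenB n] at h2
    exact h2
  -- additivity of g
  have hadd : ∀ d n : Fin k → ℕ, g (fun i => d i + n i) = g d + g n := by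
    intro d n
    set M : Fin k → List S := fun i =>
      List.replicate (d i) a ++ List.replicate (n i) b with hM
    have hea : eraseHom a (f M) = List.replicate (g n) b := by
      have h1 := hf (eraseHom a) (isHom_eraseHom a) M (B n) (fun i => by
        show eraseHom a (List.replicate (d i) a ++ List.replicate (n i) b)
            = eraseHom a (List.replicate (n i) b)
        rw [(isHom_eraseHom a).2, eraseHom_replicate_self, List.nil_append])
      rw [h1, hfB n, eraseHom_replicate_other (Ne.symm hab)]
    have heb : eraseHom b (f M) = List.replicate (g d) a := by
      have h1 := hf (eraseHom b) (isHom_eraseHom b) M (A d) (fun i => by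
        show eraseHom b (List.replicate (d i) a ++ List.replicate (n i) b)
            = eraseHom b (List.replicate (d i) a)
        rw [(isHom_eraseHom b).2, eraseHom_replicate_self, List.append_nil])
      rw [h1, hfA d, eraseHom_replicate_other hab]
    have hca : (f M).count a = g d := by
      rw [← count_eraseHom hab (f M), heb, List.count_replicate_self]
    have hlenea : (eraseHom a (f M)).length = g n := by
      rw [hea, List.length_replicate]
    have htot := length_eraseHom_add_count a (f M)
    have hM_len : (f M).length = g (fun i => d i + n i) := by
      have he : (fun i => (M i).length) = fun i => d i + n i := by
        funext i; simp [hM]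
      rw [hg_len M, he]
    omega
  have hg0 : g (fun _ => 0) = 0 := by
    have h1 := hadd (fun _ => 0) (fun _ => 0)
    simp only [Nat.add_zero] at h1
    omega
  have hcm : ∀ c : ℕ, g (fun i => c * m i) = 0 := by
    intro c
    induction c with
    | zero =>
      have he : (fun i => 0 * m i) = (fun _ : Fin k => (0 : ℕ)) := by
        funext i; ring
      rw [he]; exact hg0
    | succ c ih =>
      have h1 := hadd (fun i => c * m i) m
      have he : (fun i => (c + 1) * m i) = fun i => c * m i + m i := by
        funext i; ring
      rw [he, h1, ih, hgm]
  have hall : ∀ n : Fin k → ℕ, g n = 0 := by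
    intro n
    set c := Finset.univ.sup n with hc
    have hnc : ∀ i, n i ≤ c * m i := by
      intro i
      have h1 : n i ≤ c := Finset.le_sup (Finset.mem_univ i)
      have h2 : 1 ≤ m i := List.length_pos_iff.mpr (hu i)
      calc n i ≤ c := h1
        _ = c * 1 := (Nat.mul_one c).symm
        _ ≤ c * m i := Nat.mul_le_mul_left c h2
    have h1 := hadd n (fun i => c * m i - n i)
    have he : (fun i => n i + (c * m i - n i)) = fun i => c * m i := by
      funext i; have := hnc i; omega
    rw [he, hcm c] at h1
    omega
  intro x
  rw [← List.length_eq_zero_iff, hg_len x, hall]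
end

section
/- Assume Σ is infinite and k ≥ 1. Every RCP function f : (Σ*)ᵏ → Σ* has the form f(x₁, …, x_k) = w₀ x_{i₁}^{p₁} w₁ x_{i₂}^{p₂} w₂ ⋯ x_{iₙ}^{pₙ} wₙ for some n ∈ ℕ, words w₀, …, wₙ ∈ Σ*, indices i₁, …, iₙ ∈ {1, …, k}, and exponents p₁, …, pₙ ∈ ℕ. -/
open scoped Classical

namespace Stmt19Aux

variable {S : Type*} {k : ℕ}

/-- Substitution: replace the letter `c j` by the word `x j`, fix other letters. -/
noncomputable def gsub (c : Fin k → S) (x : Fin k → List S) : S → List S :=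
  fun s => if h : ∃ j, c j = s then x h.choose else [s]

/-- Letter renaming: `c j ↦ d j`, fix other letters. -/
noncomputable def ren (c d : Fin k → S) : S → S :=
  fun s => if h : ∃ j, c j = s then d h.choose else s

/-- Erasure of the letters `c j`. -/
noncomputable def er (c : Fin k → S) : List S → List S :=
  fun w => w.flatMap (fun s => if ∃ j, c j = s then [] else [s])

lemma gsub_apply (c : Fin k → S) (hc : Function.Injective c) (x : Fin k → List S) (i : Fin k) :
    gsub c x (c i) = x i := by
  have h : ∃ j, c j = c i := ⟨i, rfl⟩
  simp only [gsub, dif_pos h]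
  exact congrArg x (hc h.choose_spec)

lemma gsub_apply_not (c : Fin k → S) (x : Fin k → List S) (s : S) (h : ∀ j, c j ≠ s) :
    gsub c x s = [s] := by
  simp only [gsub]
  rw [dif_neg]
  rintro ⟨j, hj⟩
  exact h j hj

lemma ren_apply (c : Fin k → S) (hc : Function.Injective c) (d : Fin k → S) (i : Fin k) :
    ren c d (c i) = d i := by
  have h : ∃ j, c j = c i := ⟨i, rfl⟩
  simp only [ren, dif_pos h]
  exact congrArg d (hc h.choose_spec)

lemma ren_apply_not (c d : Fin k → S) (s : S) (h : ∀ j, c j ≠ s) : ren c d s = s := by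
  simp only [ren]
  rw [dif_neg]
  rintro ⟨j, hj⟩
  exact h j hj

lemma er_nil (c : Fin k → S) : er c [] = [] := rfl

lemma er_cons (c : Fin k → S) (a : S) (w : List S) :
    er c (a :: w) = (if ∃ j, c j = a then [] else [a]) ++ er c w := by
  simp only [er, List.flatMap_cons]

lemma er_isHom (c : Fin k → S) : IsHom (er c) :=
  ⟨rfl, fun x y => List.flatMap_append⟩

lemma map_isHom (ρ : S → S) : IsHom (List.map ρ) :=
  ⟨rfl, fun x y => List.map_append⟩

lemma flatMap_isHom (g : S → List S) : IsHom (fun w : List S => w.flatMap g) :=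
  ⟨rfl, fun x y => List.flatMap_append⟩

lemma map_fixed (ρ : S → S) (w : List S) (h : ∀ a ∈ w, ρ a = a) : w.map ρ = w :=
  (List.map_congr_left h).trans (List.map_id w)

lemma flatMap_fixed (g : S → List S) (w : List S) (h : ∀ a ∈ w, g a = [a]) :
    w.flatMap g = w := by
  induction w with
  | nil => rfl
  | cons a w ih =>
    rw [List.flatMap_cons, h a (by simp), ih (fun b hb => h b (by simp [hb]))]
    rfl

lemma flatMap_congr (g₁ g₂ : S → List S) (w : List S) (h : ∀ a ∈ w, g₁ a = g₂ a) :
    w.flatMap g₁ = w.flatMap g₂ := by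
  induction w with
  | nil => rfl
  | cons a w ih =>
    rw [List.flatMap_cons, List.flatMap_cons, h a (by simp),
      ih (fun b hb => h b (by simp [hb]))]

lemma flatMap_map (τ : S → S) (g : S → List S) (w : List S) :
    (w.map τ).flatMap g = w.flatMap (fun a => g (τ a)) := by
  induction w with
  | nil => rfl
  | cons a w ih => rw [List.map_cons, List.flatMap_cons, List.flatMap_cons, ih]

lemma er_fixed (c : Fin k → S) (w : List S) (h : ∀ a ∈ w, ∀ j, c j ≠ a) : er c w = w := by
  apply flatMap_fixed
  intro a ha
  rw [if_neg]
  rintro ⟨j, hj⟩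
  exact h a ha j hj

/-- Counting lemma: erasing the `c`-letters from the `d→c` renaming of `W` gives a word
no longer than erasing the `d`-letters from `W`. -/
lemma er_len_le (c d : Fin k → S) (W : List S) :
    (er c (W.map (ren d c))).length ≤ (er d W).length := by
  induction W with
  | nil => simp [er]
  | cons w W ih =>
    rw [List.map_cons, er_cons, er_cons, List.length_append, List.length_append]
    by_cases h : ∃ j, c j = ren d c w
    · rw [if_pos h]
      simp only [List.length_nil]
      omega
    · rw [if_neg h]
      have hw : ¬ ∃ j, d j = w := by
        rintro ⟨j, hj⟩
        exact h ⟨(⟨j, hj⟩ : ∃ j, d j = w).choose, by rw [ren, dif_pos (⟨j, hj⟩ : ∃ j, d j = w)]⟩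
      rw [if_neg hw]
      simpa using ih

/-- Key identification: if `W` renames (d→c0) to `U`, erasures agree, and `U` avoids
the letters `d`, then `W` is the (c0→d) renaming of `U`. -/
lemma key_ind (c0 d : Fin k → S) (hc0 : Function.Injective c0) (hd : Function.Injective d)
    (hdisj : ∀ i j, d i ≠ c0 j) :
    ∀ (U W : List S), W.map (ren d c0) = U → er d W = er c0 U →
      (∀ u ∈ U, ∀ j, d j ≠ u) → W = U.map (ren c0 d) := by
  intro U
  induction U with
  | nil =>
    intro W h1 _ _
    simpa using h1
  | cons u U ih =>
    intro W h1 h2 h3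
    cases W with
    | nil => simp at h1
    | cons w W =>
      rw [List.map_cons] at h1
      injection h1 with hw hW
      rw [List.map_cons]
      by_cases hu : ∃ j, c0 j = u
      · obtain ⟨j, hj⟩ := hu
        by_cases hwd : ∃ j', d j' = w
        · obtain ⟨j', hj'⟩ := hwd
          -- w = d j', ren d c0 w = c0 j' = u = c0 j, so j' = j
          have hww : ren d c0 w = c0 j' := by rw [← hj', ren_apply d hd c0 j']
          have hj'j : j' = j := hc0 (by rw [← hww, hw, ← hj])
          have hwu : w = ren c0 d u := by
            rw [← hj, ren_apply c0 hc0 d j, ← hj', hj'j]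
          -- tails
          have h2' : er d W = er c0 U := by
            rw [er_cons, er_cons, if_pos ⟨j', hj'⟩, if_pos ⟨j, hj⟩, List.nil_append,
              List.nil_append] at h2
            exact h2
          have := ih W hW h2' (fun v hv => h3 v (by simp [hv]))
          rw [hwu, this]
        · -- contradiction via length counting
          exfalso
          have hwe : ren d c0 w = w := ren_apply_not d c0 w (fun j'' hj'' => hwd ⟨j'', hj''⟩)
          have h2' : w :: er d W = er c0 U := by
            rw [er_cons, er_cons, if_neg hwd, if_pos ⟨j, hj⟩, List.nil_append] at h2
            simpa using h2
          have hlen : (er c0 U).length = (er d W).length + 1 := by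
            rw [← h2']; simp
          have hle : (er c0 U).length ≤ (er d W).length := by
            have := er_len_le c0 d W
            rwa [hW] at this
          omega
      · -- u is not a c0-letter
        have hud : ∀ j, d j ≠ u := h3 u (by simp)
        have hwd : ¬ ∃ j', d j' = w := by
          rintro ⟨j', hj'⟩
          apply hu
          refine ⟨j', ?_⟩
          rw [← hw, ← hj', ren_apply d hd c0 j']
        have hwe : w = u := by
          rw [← hw, ren_apply_not d c0 w (fun j'' hj'' => hwd ⟨j'', hj''⟩)]
        have h2' : er d W = er c0 U := by
          rw [er_cons, er_cons, if_neg hwd, if_neg hu, hwe] at h2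
          exact List.append_cancel_left h2
        have := ih W hW h2' (fun v hv => h3 v (by simp [hv]))
        rw [ren_apply_not c0 d u (fun j hj => hu ⟨j, hj⟩), hwe, this]

/-- Fresh distinct letters avoiding a finite list, from infiniteness. -/
lemma exists_fresh [Infinite S] (k : ℕ) (L : List S) :
    ∃ d : Fin k → S, Function.Injective d ∧ ∀ i, d i ∉ L := by
  set A : Set S := {s : S | s ∈ L} with hA
  have h2 : Aᶜ.Infinite := L.finite_toSet.infinite_compl
  haveI := h2.to_subtype
  let e := Infinite.natEmbedding ↥(Aᶜ)
  refine ⟨fun i => (e i.val).1, ?_, fun i => (e i.val).2⟩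
  intro i j hij
  exact Fin.val_injective (e.injective (Subtype.val_injective hij))

lemma flatMap_eq_range (U : List S) (F : S → List S) (s0 : S) :
    U.flatMap F = List.flatten ((List.range U.length).map fun j => F (U.getD j s0)) := by
  induction U using List.reverseRecOn with
  | nil => simp
  | append_singleton U u ih =>
    rw [List.flatMap_append, ih, List.length_append]
    have : (U.length + [u].length) = U.length + 1 := by simp
    rw [this, List.range_succ, List.map_append, List.flatten_append]
    congr 1
    · congr 1
      apply List.map_congr_left
      intro j hj
      rw [List.getD_append U [u] s0 j (List.mem_range.mp hj)]
    · rw [List.map_singleton, List.getD_append_right U [u] s0 U.length le_rfl]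
      simp

end Stmt19Aux

/-- If `S` is infinite and `k ≥ 1`, every RCP function `f : (S*)ᵏ → S*` is of the form
`f (x₁, …, x_k) = w₀ x_{i₁}^{p₁} w₁ x_{i₂}^{p₂} w₂ ⋯ x_{iₙ}^{pₙ} wₙ`. -/
theorem stmt_19 {S : Type*} [Infinite S] (k : ℕ) (hk : 1 ≤ k)
    (f : (Fin k → List S) → List S) (hf : IsRCPK k f) : PolyFormK k f := by
  classical
  open Stmt19Aux in
  -- the constant word
  set E : List S := f (fun _ => []) with hEdef
  obtain ⟨c0, hc0inj, hc0E⟩ := Stmt19Aux.exists_fresh k E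
  -- the pattern word
  set U : List S := f (fun i => [c0 i]) with hUdef
  have hkey : ∀ x : Fin k → List S, f x = U.flatMap (Stmt19Aux.gsub c0 x) := by
    intro x
    obtain ⟨d, hdinj, hdfr⟩ := Stmt19Aux.exists_fresh k
      (U ++ List.ofFn c0 ++ E ++ (List.ofFn x).flatten ++ f x)
    have hdfr' : ∀ i, d i ∉ U ∧ d i ∉ List.ofFn c0 ∧ d i ∉ E ∧
        d i ∉ (List.ofFn x).flatten ∧ d i ∉ f x := by
      intro i
      have := hdfr i
      simp only [List.mem_append, not_or] at this
      tauto
    have hdU : ∀ i, d i ∉ U := fun i => (hdfr' i).1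
    have hdc0 : ∀ i j, d i ≠ c0 j := fun i j hij =>
      (hdfr' i).2.1 (by rw [List.mem_ofFn]; exact ⟨j, hij.symm⟩)
    have hdE : ∀ i, d i ∉ E := fun i => (hdfr' i).2.2.1
    have hdx : ∀ i j, d i ∉ x j := fun i j hij =>
      (hdfr' i).2.2.2.1 (List.mem_flatten.mpr
        ⟨x j, by rw [List.mem_ofFn]; exact ⟨j, rfl⟩, hij⟩)
    have hdfx : ∀ i, d i ∉ f x := fun i => (hdfr' i).2.2.2.2
    -- h1 : renaming d→c0 of f(unit d) is U
    have h1 : (f (fun i => [d i])).map (Stmt19Aux.ren d c0) = U := by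
      have := hf _ (Stmt19Aux.map_isHom (Stmt19Aux.ren d c0)) (fun i => [d i])
        (fun i => [c0 i]) (fun i => by
          simp only [List.map_cons, List.map_nil]
          rw [Stmt19Aux.ren_apply d hdinj c0 i,
            Stmt19Aux.ren_apply_not d c0 (c0 i) (fun j => hdc0 j i)])
      rw [← hUdef] at this
      rw [this]
      apply Stmt19Aux.map_fixed
      intro a ha
      exact Stmt19Aux.ren_apply_not d c0 a (fun j hj => hdU j (hj ▸ ha))
    -- h2 : er d (f (unit d)) = E
    have h2 : Stmt19Aux.er d (f (fun i => [d i])) = E := by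
      have := hf _ (Stmt19Aux.er_isHom d) (fun i => [d i]) (fun _ => []) (fun i => by
        rw [Stmt19Aux.er_cons, if_pos ⟨i, rfl⟩, Stmt19Aux.er_nil]; rfl)
      rw [← hEdef] at this
      rw [this]
      exact Stmt19Aux.er_fixed d E (fun a ha j hj => hdE j (hj ▸ ha))
    -- h3 : er c0 U = E
    have h3 : Stmt19Aux.er c0 U = E := by
      have := hf _ (Stmt19Aux.er_isHom c0) (fun i => [c0 i]) (fun _ => []) (fun i => by
        rw [Stmt19Aux.er_cons, if_pos ⟨i, rfl⟩, Stmt19Aux.er_nil]; rfl)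
      rw [← hEdef, ← hUdef] at this
      rw [this]
      exact Stmt19Aux.er_fixed c0 E (fun a ha j hj => hc0E j (hj ▸ ha))
    -- h4 : f (unit d) = U.map (ren c0 d)
    have h4 : f (fun i => [d i]) = U.map (Stmt19Aux.ren c0 d) :=
      Stmt19Aux.key_ind c0 d hc0inj hdinj hdc0 U (f (fun i => [d i])) h1
        (h2.trans h3.symm) (fun u hu j hj => hdU j (hj ▸ hu))
    -- h5 : substituting x for d in f (unit d) gives f x
    have h5 : (f (fun i => [d i])).flatMap (Stmt19Aux.gsub d x) = f x := by
      have := hf _ (Stmt19Aux.flatMap_isHom (Stmt19Aux.gsub d x)) (fun i => [d i]) x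
        (fun i => by
          have hl : ([d i] : List S).flatMap (Stmt19Aux.gsub d x) = x i := by
            simp only [List.flatMap_cons, List.flatMap_nil, List.append_nil]
            exact Stmt19Aux.gsub_apply d hdinj x i
          rw [hl]
          exact (Stmt19Aux.flatMap_fixed _ (x i) (fun a ha =>
            Stmt19Aux.gsub_apply_not d x a (fun j hj => hdx j i (hj ▸ ha)))).symm)
      rw [this]
      exact Stmt19Aux.flatMap_fixed _ (f x) (fun a ha =>
        Stmt19Aux.gsub_apply_not d x a (fun j hj => hdfx j (hj ▸ ha)))
    rw [← h5, h4, Stmt19Aux.flatMap_map]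
    apply Stmt19Aux.flatMap_congr
    intro u hu
    by_cases h : ∃ j, c0 j = u
    · simp only [Stmt19Aux.ren, Stmt19Aux.gsub, dif_pos h]
      exact Stmt19Aux.gsub_apply d hdinj x h.choose
    · rw [Stmt19Aux.ren_apply_not c0 d u (fun j hj => h ⟨j, hj⟩),
        Stmt19Aux.gsub_apply_not d x u (fun j hj => hdU j (hj ▸ hu)),
        Stmt19Aux.gsub_apply_not c0 x u (fun j hj => h ⟨j, hj⟩)]
  -- Step 4 : convert the pattern to PolyFormK
  have hNon : Nonempty S := inferInstance
  let s0 : S := hNon.some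
  refine ⟨U.length,
    (fun t => if t = 0 then [] else
      if ∃ j, c0 j = U.getD (t-1) s0 then [] else [U.getD (t-1) s0]),
    (fun t => if h : ∃ j, c0 j = U.getD (t-1) s0 then h.choose else ⟨0, hk⟩),
    (fun t => if ∃ j, c0 j = U.getD (t-1) s0 then 1 else 0),
    ?_⟩
  intro x
  rw [hkey x]
  beta_reduce
  rw [if_pos rfl, List.nil_append, Stmt19Aux.flatMap_eq_range U _ s0]
  congr 1
  apply List.map_congr_left
  intro j hj
  simp only [Nat.add_sub_cancel, Nat.add_eq_zero, Nat.succ_ne_zero, and_false, if_false]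
  by_cases h : ∃ jj, c0 jj = U.getD j s0
  · rw [if_pos h, dif_pos h, if_pos h]
    simp only [Stmt19Aux.gsub, dif_pos h]
    simp
  · rw [if_neg h, dif_neg h, if_neg h]
    rw [Stmt19Aux.gsub_apply_not c0 x _ (fun jj hjj => h ⟨jj, hjj⟩)]
    simp
end
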